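/- arXiv:0802.1198 — 3 statements merged into one kernel-verified Lean document; each statement's English description precedes it below -/
import Mathlib

section
/- Let E be an arbitrary (countable) graph satisfying Condition (L) and K a field. Then every nonzero two-sided ideal of L_K(E) contains a vertex, i.e. contains the idempotent v for some v ∈ E^0. -/
set_option synthInstance.maxHeartbeats 1000000
set_option maxHeartbeats 1000000

noncomputable section

/-! ## Generators and relations for the Leavitt path algebra of a graph

A (directed) graph is given by types `V` (vertices, `E^0`) and `Ed` (edges, `E^1`),
both countable, together with source and range maps `s r : Ed → V`. -/

/-- Generators for the Leavitt path algebra: vertices, real edges and ghost edges. -/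
inductive LPAGen (V Ed : Type) : Type where
  | vert : V → LPAGen V Ed
  | edge : Ed → LPAGen V Ed
  | ghost : Ed → LPAGen V Ed

open Classical in
/-- The defining relations of the Leavitt path algebra: the vertices are pairwise
orthogonal idempotents, (1) `s(e)e = e = e r(e)`, (2) `r(e)e* = e* = e* s(e)`,
(3) `e* e' = δ_{e,e'} r(e)`, and (4) `v = ∑_{s(e) = v} e e*` for every regular vertex `v`. -/
inductive LPARel (K : Type) [Field K] {V Ed : Type} (s r : Ed → V) :
    FreeAlgebra K (LPAGen V Ed) → FreeAlgebra K (LPAGen V Ed) → Prop where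
  | vert_mul (u v : V) : LPARel K s r
      (FreeAlgebra.ι K (LPAGen.vert u) * FreeAlgebra.ι K (LPAGen.vert v))
      (if u = v then FreeAlgebra.ι K (LPAGen.vert u) else 0)
  | src_mul_edge (e : Ed) : LPARel K s r
      (FreeAlgebra.ι K (LPAGen.vert (s e)) * FreeAlgebra.ι K (LPAGen.edge e))
      (FreeAlgebra.ι K (LPAGen.edge e))
  | edge_mul_rng (e : Ed) : LPARel K s r
      (FreeAlgebra.ι K (LPAGen.edge e) * FreeAlgebra.ι K (LPAGen.vert (r e)))
      (FreeAlgebra.ι K (LPAGen.edge e))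
  | rng_mul_ghost (e : Ed) : LPARel K s r
      (FreeAlgebra.ι K (LPAGen.vert (r e)) * FreeAlgebra.ι K (LPAGen.ghost e))
      (FreeAlgebra.ι K (LPAGen.ghost e))
  | ghost_mul_src (e : Ed) : LPARel K s r
      (FreeAlgebra.ι K (LPAGen.ghost e) * FreeAlgebra.ι K (LPAGen.vert (s e)))
      (FreeAlgebra.ι K (LPAGen.ghost e))
  | ghost_mul_edge (e f : Ed) : LPARel K s r
      (FreeAlgebra.ι K (LPAGen.ghost e) * FreeAlgebra.ι K (LPAGen.edge f))
      (if e = f then FreeAlgebra.ι K (LPAGen.vert (r e)) else 0)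
  | ck2 (v : V) (h : {e : Ed | s e = v}.Finite) (hne : {e : Ed | s e = v}.Nonempty) :
      LPARel K s r
        (∑ e ∈ h.toFinset,
          FreeAlgebra.ι K (LPAGen.edge e) * FreeAlgebra.ι K (LPAGen.ghost e))
        (FreeAlgebra.ι K (LPAGen.vert v))

variable (K : Type) [Field K] {V Ed : Type} (s r : Ed → V)

/-- The ambient unital algebra: quotient of the free associative algebra on the
generators by the ideal induced by the Leavitt path algebra relations. -/
abbrev LPAamb : Type := RingQuot (LPARel K s r)

/-- The canonical image of a generator in the ambient algebra. -/
def lpaGen (g : LPAGen V Ed) : LPAamb K s r :=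
  RingQuot.mkAlgHom K (LPARel K s r) (FreeAlgebra.ι K g)

/-- The Leavitt path algebra `L_K(E)` of the graph `E = (V, Ed, s, r)`: the (in general
non-unital) subalgebra of the ambient quotient algebra generated by the vertices,
edges and ghost edges. -/
def LeavittPathAlgebra : NonUnitalSubalgebra K (LPAamb K s r) :=
  NonUnitalAlgebra.adjoin K (Set.range (lpaGen K s r))

namespace LPA

/-- A vertex, as an element of the Leavitt path algebra. -/
def vertex (v : V) : LeavittPathAlgebra K s r :=
  ⟨lpaGen K s r (LPAGen.vert v), NonUnitalAlgebra.subset_adjoin K ⟨_, rfl⟩⟩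

/-- A (real) edge, as an element of the Leavitt path algebra. -/
def edge (e : Ed) : LeavittPathAlgebra K s r :=
  ⟨lpaGen K s r (LPAGen.edge e), NonUnitalAlgebra.subset_adjoin K ⟨_, rfl⟩⟩

/-- A ghost edge `e*`, as an element of the Leavitt path algebra. -/
def ghost (e : Ed) : LeavittPathAlgebra K s r :=
  ⟨lpaGen K s r (LPAGen.ghost e), NonUnitalAlgebra.subset_adjoin K ⟨_, rfl⟩⟩

/-- The set of elements of the Leavitt path algebra of the form `v`, `e` or `e*`
(i.e. the set `E^0 ∪ E^1 ∪ (E^1)^*`). -/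
def genSet : Set (LeavittPathAlgebra K s r) :=
  {x | ∃ g : LPAGen V Ed, (x : LPAamb K s r) = lpaGen K s r g}

end LPA

/-! ## Graph-theoretic notions -/

section GraphNotions

/-- `Reaches s r u w` : there is a (possibly trivial) path from `u` to `w`,
that is, `w ∈ T(u)`, the tree of `u`. -/
def Reaches (u w : V) : Prop :=
  Relation.ReflTransGen (fun a b => ∃ e : Ed, s e = a ∧ r e = b) u w

/-- A vertex `v` is a bifurcation if it emits at least two distinct edges. -/
def IsBifurcation (v : V) : Prop := ∃ e f : Ed, e ≠ f ∧ s e = v ∧ s f = v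

/-- `v` is a regular vertex: neither a sink nor an infinite emitter. -/
def IsRegularVertex (v : V) : Prop :=
  {e : Ed | s e = v}.Finite ∧ {e : Ed | s e = v}.Nonempty

/-- A nonempty list of edges is a closed path based at `v` if consecutive edges are
composable, its source is `v` and its range is `v`. -/
structure IsClosedPath (es : List Ed) (v : V) : Prop where
  ne : es ≠ []
  chain : es.Chain' fun e f => r e = s f
  src : s (es.head ne) = v
  rng : r (es.getLast ne) = v

/-- A cycle based at `v` : a closed path based at `v` whose edges have pairwise
distinct sources. -/
structure IsCycle (es : List Ed) (v : V) extends IsClosedPath s r es v : Prop where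
  nodup : (es.map s).Nodup

/-- A path (list of edges) has an exit if some edge `g` shares its source with some
edge of the path but is distinct from it. -/
def HasExit (es : List Ed) : Prop := ∃ g : Ed, ∃ e ∈ es, s g = s e ∧ g ≠ e

/-- Condition (L): every cycle has an exit. -/
def ConditionL : Prop := ∀ (es : List Ed) (v : V), IsCycle s r es v → HasExit s es

/-- A line point: no vertex of the tree `T(u)` is a bifurcation or the base of a cycle. -/
def IsLinePoint (u : V) : Prop :=
  ∀ w : V, Reaches s r u w →
    ¬ IsBifurcation s w ∧ ∀ es : List Ed, ¬ IsCycle s r es w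

/-- A set `H` of vertices is hereditary if it is closed under ranges of paths. -/
def IsHereditary (H : Set V) : Prop := ∀ v ∈ H, ∀ w : V, Reaches s r v w → w ∈ H

/-- A set `H` of vertices is saturated if every regular vertex all of whose emitted
edges have range in `H` belongs to `H`. -/
def IsSaturated (H : Set V) : Prop :=
  ∀ v : V, IsRegularVertex s v → (∀ e : Ed, s e = v → r e ∈ H) → v ∈ H

end GraphNotions

/-! ## Ring-theoretic notions for (possibly non-unital) rings -/

section RingNotions

variable {R : Type} [NonUnitalNonAssocRing R]

/-- A left ideal of a (possibly non-unital) ring: an additive subgroup closed under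
left multiplication by arbitrary ring elements. -/
def IsLeftIdeal (I : AddSubgroup R) : Prop := ∀ a : R, ∀ x ∈ I, a * x ∈ I

/-- A two-sided ideal of a (possibly non-unital) ring. -/
def IsTwoSidedIdealSG (I : AddSubgroup R) : Prop :=
  ∀ a : R, ∀ x ∈ I, a * x ∈ I ∧ x * a ∈ I

/-- A minimal left ideal: a nonzero left ideal properly containing no nonzero
left ideal. -/
def IsMinimalLeftIdeal (I : AddSubgroup R) : Prop :=
  IsLeftIdeal I ∧ I ≠ ⊥ ∧ ∀ J : AddSubgroup R, IsLeftIdeal J → J < I → J = ⊥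

/-- The socle of a ring: the sum of all its minimal left ideals (the zero ideal if
there are none). -/
def rsocle (R : Type) [NonUnitalNonAssocRing R] : AddSubgroup R :=
  sSup {I : AddSubgroup R | IsMinimalLeftIdeal I}

/-- The two-sided ideal generated by a subset of a ring. -/
def idealGenBy (S : Set R) : AddSubgroup R :=
  sInf {I : AddSubgroup R | S ⊆ ↑I ∧ IsTwoSidedIdealSG I}

/-- A ring is semiprime if it has no nonzero two-sided ideal with zero square. -/
def IsSemiprimeRing (R : Type) [NonUnitalNonAssocRing R] : Prop :=
  ∀ I : AddSubgroup R, IsTwoSidedIdealSG I → (∀ x ∈ I, ∀ y ∈ I, x * y = 0) → I = ⊥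

/-- An idempotent ring: `R² = R`, i.e. every element is a sum of products. -/
def IsIdempotentRing (R : Type) [NonUnitalNonAssocRing R] : Prop :=
  ∀ x : R, x ∈ AddSubgroup.closure {y : R | ∃ a b : R, y = a * b}

/-- The principal left ideal `R·a = {x * a : x ∈ R}`. -/
def principalLeft (a : R) : AddSubgroup R where
  carrier := Set.range fun x : R => x * a
  add_mem' := by rintro _ _ ⟨x, rfl⟩ ⟨y, rfl⟩; exact ⟨x + y, add_mul x y a⟩
  zero_mem' := ⟨0, zero_mul a⟩
  neg_mem' := by rintro _ ⟨x, rfl⟩; exact ⟨-x, neg_mul x a⟩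

theorem principalLeft.mul_mem {R : Type} [NonUnitalRing R] (a b : R) {x : R}
    (hx : x ∈ principalLeft a) : b * x ∈ principalLeft a := by
  obtain ⟨y, rfl⟩ := hx
  exact ⟨b * y, by simp only []; rw [mul_assoc]⟩

end RingNotions



/-! ## Development -/

namespace LPX
open Classical

section Basic
variable (K : Type) [Field K] {V Ed : Type} (s r : Ed → V)

/-- vertex element -/
def pv (v : V) : LPAamb K s r := lpaGen K s r (LPAGen.vert v)
/-- edge element -/
def pe (e : Ed) : LPAamb K s r := lpaGen K s r (LPAGen.edge e)
/-- ghost element -/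
def pg (e : Ed) : LPAamb K s r := lpaGen K s r (LPAGen.ghost e)

variable {s r}

theorem pv_mul_pv (u v : V) :
    pv K s r u * pv K s r v = if u = v then pv K s r u else 0 := by
  have h := RingQuot.mkAlgHom_rel K (LPARel.vert_mul (K := K) (s := s) (r := r) u v)
  rw [map_mul] at h
  simp only [pv, lpaGen]
  rw [h, apply_ite (RingQuot.mkAlgHom K (LPARel K s r)), map_zero]

theorem pv_mul_pe (e : Ed) : pv K s r (s e) * pe K s r e = pe K s r e := by
  have h := RingQuot.mkAlgHom_rel K (LPARel.src_mul_edge (K := K) (s := s) (r := r) e)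
  rw [map_mul] at h
  simp only [pv, pe, lpaGen]
  rw [h]

theorem pe_mul_pv (e : Ed) : pe K s r e * pv K s r (r e) = pe K s r e := by
  have h := RingQuot.mkAlgHom_rel K (LPARel.edge_mul_rng (K := K) (s := s) (r := r) e)
  rw [map_mul] at h
  simp only [pv, pe, lpaGen]
  rw [h]

theorem pv_mul_pg (e : Ed) : pv K s r (r e) * pg K s r e = pg K s r e := by
  have h := RingQuot.mkAlgHom_rel K (LPARel.rng_mul_ghost (K := K) (s := s) (r := r) e)
  rw [map_mul] at h
  simp only [pv, pg, lpaGen]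
  rw [h]

theorem pg_mul_pv (e : Ed) : pg K s r e * pv K s r (s e) = pg K s r e := by
  have h := RingQuot.mkAlgHom_rel K (LPARel.ghost_mul_src (K := K) (s := s) (r := r) e)
  rw [map_mul] at h
  simp only [pv, pg, lpaGen]
  rw [h]

theorem pg_mul_pe (e f : Ed) :
    pg K s r e * pe K s r f = if e = f then pv K s r (r e) else 0 := by
  have h := RingQuot.mkAlgHom_rel K (LPARel.ghost_mul_edge (K := K) (s := s) (r := r) e f)
  rw [map_mul] at h
  simp only [pg, pe, pv, lpaGen]
  rw [h, apply_ite (RingQuot.mkAlgHom K (LPARel K s r)), map_zero]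

theorem ck2 (v : V) (h : {e : Ed | s e = v}.Finite) (hne : {e : Ed | s e = v}.Nonempty) :
    ∑ e ∈ h.toFinset, pe K s r e * pg K s r e = pv K s r v := by
  have h2 := RingQuot.mkAlgHom_rel K (LPARel.ck2 (K := K) (s := s) (r := r) v h hne)
  rw [map_sum] at h2
  simp only [map_mul] at h2
  simpa [pe, pg, pv, lpaGen] using h2

theorem pv_mul_pe' {u : V} {e : Ed} (h : u ≠ s e) : pv K s r u * pe K s r e = 0 := by
  rw [← pv_mul_pe K e, ← mul_assoc, pv_mul_pv, if_neg h, zero_mul]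

theorem pe_mul_pv' {u : V} {e : Ed} (h : r e ≠ u) : pe K s r e * pv K s r u = 0 := by
  rw [← pe_mul_pv K e, mul_assoc, pv_mul_pv, if_neg h, mul_zero]

theorem pv_mul_pg' {u : V} {e : Ed} (h : u ≠ r e) : pv K s r u * pg K s r e = 0 := by
  rw [← pv_mul_pg K e, ← mul_assoc, pv_mul_pv, if_neg h, zero_mul]

theorem pg_mul_pv' {u : V} {e : Ed} (h : s e ≠ u) : pg K s r e * pv K s r u = 0 := by
  rw [← pg_mul_pv K e, mul_assoc, pv_mul_pv, if_neg h, mul_zero]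

theorem pg_mul_pe_self (e : Ed) : pg K s r e * pe K s r e = pv K s r (r e) := by
  rw [pg_mul_pe, if_pos rfl]

theorem pg_mul_pe_ne {e f : Ed} (h : e ≠ f) : pg K s r e * pe K s r f = 0 := by
  rw [pg_mul_pe, if_neg h]

end Basic

end LPX

namespace LPX
open Classical

section Paths
variable {V Ed : Type}

/-- `IsPath s r u l w` : `l` is a valid path from `u` to `w`. -/
inductive IsPath (s r : Ed → V) : V → List Ed → V → Prop
  | nil (v : V) : IsPath s r v [] v
  | cons {l : List Ed} {u : V} (e : Ed) (h : IsPath s r (r e) l u) : IsPath s r (s e) (e :: l) u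

variable {s r : Ed → V}

theorem IsPath.src_eq {u w : V} {e : Ed} {l : List Ed} (h : IsPath s r u (e :: l) w) :
    u = s e := by cases h; rfl

theorem IsPath.tail {u w : V} {e : Ed} {l : List Ed} (h : IsPath s r u (e :: l) w) :
    IsPath s r (r e) l w := by cases h; assumption

theorem IsPath.nil_eq {u w : V} (h : IsPath s r u [] w) : u = w := by cases h; rfl

theorem isPath_append {u w : V} {l₁ l₂ : List Ed} :
    IsPath s r u (l₁ ++ l₂) w ↔ ∃ m, IsPath s r u l₁ m ∧ IsPath s r m l₂ w := by
  induction l₁ generalizing u with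
  | nil =>
    simp only [List.nil_append]
    constructor
    · exact fun h => ⟨u, IsPath.nil u, h⟩
    · rintro ⟨m, hm, h⟩; rwa [hm.nil_eq]
  | cons e t ih =>
    constructor
    · intro h
      have hu := h.src_eq; subst hu
      obtain ⟨m, h1, h2⟩ := ih.mp h.tail
      exact ⟨m, IsPath.cons e h1, h2⟩
    · rintro ⟨m, hm, h⟩
      have hu := hm.src_eq; subst hu
      exact IsPath.cons e (ih.mpr ⟨m, hm.tail, h⟩)

theorem IsPath.append {u m w : V} {l₁ l₂ : List Ed} (h1 : IsPath s r u l₁ m)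
    (h2 : IsPath s r m l₂ w) : IsPath s r u (l₁ ++ l₂) w :=
  isPath_append.mpr ⟨m, h1, h2⟩

theorem IsPath.rng_unique {u u' w w' : V} {l : List Ed} (hne : l ≠ [])
    (h : IsPath s r u l w) (h' : IsPath s r u' l w') : w = w' := by
  induction l generalizing u u' with
  | nil => exact absurd rfl hne
  | cons e t ih =>
    rcases t with _ | ⟨f, t'⟩
    · exact (h.tail.nil_eq).symm.trans h'.tail.nil_eq
    · exact ih (by simp) h.tail h'.tail

end Paths

section PathElts
variable (K : Type) [Field K] {V Ed : Type} (s r : Ed → V)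

/-- product of edge elements -/
def plE (l : List Ed) : LPAamb K s r := (l.map (pe K s r)).prod
/-- path element, anchored by its range vertex -/
def pl (l : List Ed) (w : V) : LPAamb K s r := plE K s r l * pv K s r w
/-- product of ghost edges in reverse order -/
def gh (l : List Ed) : LPAamb K s r := (l.reverse.map (pg K s r)).prod
/-- ghost path element `l*`, anchored on the left by the range vertex `z` of `l` -/
def gstar (z : V) (l : List Ed) : LPAamb K s r := pv K s r z * gh K s r l

variable {s r}

theorem plE_nil : plE K s r [] = 1 := by simp [plE]
theorem plE_cons (e : Ed) (l : List Ed) :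
    plE K s r (e :: l) = pe K s r e * plE K s r l := by simp [plE]
theorem plE_append (l₁ l₂ : List Ed) :
    plE K s r (l₁ ++ l₂) = plE K s r l₁ * plE K s r l₂ := by simp [plE]
theorem pl_nil (w : V) : pl K s r [] w = pv K s r w := by simp [pl, plE]
theorem pl_cons (e : Ed) (l : List Ed) (w : V) :
    pl K s r (e :: l) w = pe K s r e * pl K s r l w := by simp [pl, plE_cons, mul_assoc]
theorem gh_nil : gh K s r [] = 1 := by simp [gh]
theorem gh_cons (e : Ed) (l : List Ed) :
    gh K s r (e :: l) = gh K s r l * pg K s r e := by simp [gh]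
theorem gh_append (l₁ l₂ : List Ed) :
    gh K s r (l₁ ++ l₂) = gh K s r l₂ * gh K s r l₁ := by simp [gh]
theorem gstar_nil (z : V) : gstar K s r z [] = pv K s r z := by simp [gstar, gh]
theorem gstar_cons (z : V) (e : Ed) (l : List Ed) :
    gstar K s r z (e :: l) = gstar K s r z l * pg K s r e := by
  simp [gstar, gh_cons, mul_assoc]

theorem pv_mul_pl {u w : V} {l : List Ed} (h : IsPath s r u l w) :
    pv K s r u * pl K s r l w = pl K s r l w := by
  cases h with
  | nil => rw [pl_nil, pv_mul_pv, if_pos rfl]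
  | cons e h' => rw [pl_cons, ← mul_assoc, pv_mul_pe]

theorem pv_mul_pl' {u w z : V} {l : List Ed} (h : IsPath s r u l w) (hz : z ≠ u) :
    pv K s r z * pl K s r l w = 0 := by
  cases h with
  | nil => rw [pl_nil, pv_mul_pv, if_neg hz, ]
  | cons e h' => rw [pl_cons, ← mul_assoc, pv_mul_pe' K hz, zero_mul]

theorem gstar_mul_pv {u z : V} {l : List Ed} (h : IsPath s r u l z) :
    gstar K s r z l * pv K s r u = gstar K s r z l := by
  cases h with
  | nil => rw [gstar_nil, pv_mul_pv, if_pos rfl]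
  | cons e h' => rw [gstar_cons, mul_assoc, pg_mul_pv]

theorem gstar_mul_pv' {u z z' : V} {l : List Ed} (h : IsPath s r u l z) (hz : z' ≠ u) :
    gstar K s r z l * pv K s r z' = 0 := by
  cases h with
  | nil => rw [gstar_nil, pv_mul_pv, if_neg (Ne.symm hz)]
  | cons e h' => rw [gstar_cons, mul_assoc, pg_mul_pv' K (fun hh => hz hh.symm), mul_zero]

theorem pl_mul_pl {u w w' : V} {l₁ l₂ : List Ed} (h1 : IsPath s r u l₁ w)
    (h2 : IsPath s r w l₂ w') :
    pl K s r l₁ w * pl K s r l₂ w' = pl K s r (l₁ ++ l₂) w' := by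
  induction l₁ generalizing u with
  | nil =>
    have := h1.nil_eq; subst this
    rw [pl_nil, List.nil_append, pv_mul_pl K h2]
  | cons e t ih =>
    have := h1.src_eq; subst this
    rw [pl_cons, List.cons_append, pl_cons, mul_assoc, ih h1.tail]

/-- `ν* (νδ) = δ` -/
theorem gstar_mul_pl_append {u z w : V} {ν δ : List Ed} (hν : IsPath s r u ν z)
    (hδ : IsPath s r z δ w) :
    gstar K s r z ν * pl K s r (ν ++ δ) w = pl K s r δ w := by
  induction ν generalizing u with
  | nil =>
    have := hν.nil_eq; subst this
    rw [gstar_nil, List.nil_append, pv_mul_pl K hδ]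
  | cons e t ih =>
    have := hν.src_eq; subst this
    rw [gstar_cons, List.cons_append, pl_cons, mul_assoc, ← mul_assoc (pg K s r e),
      pg_mul_pe_self, pv_mul_pl K ((hν.tail).append hδ), ih hν.tail]

/-- `(ρδ)* ρ = δ*` -/
theorem gstar_append_mul_pl {u w z : V} {ρ δ : List Ed} (hρ : IsPath s r u ρ w)
    (hδ : IsPath s r w δ z) :
    gstar K s r z (ρ ++ δ) * pl K s r ρ w = gstar K s r z δ := by
  induction ρ generalizing u with
  | nil =>
    have := hρ.nil_eq; subst this
    rw [List.nil_append, pl_nil, gstar_mul_pv K hδ]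
  | cons f t ih =>
    have := hρ.src_eq; subst this
    rw [List.cons_append, gstar_cons, pl_cons, mul_assoc, ← mul_assoc (pg K s r f),
      pg_mul_pe_self, pv_mul_pl K hρ.tail, ih hρ.tail]

/-- divergent case : `ν* ρ = 0` -/
theorem gstar_mul_pl_zero {u u' w z : V} {ν ρ : List Ed} (hν : IsPath s r u' ν z)
    (hρ : IsPath s r u ρ w) (h1 : ¬ ν <+: ρ) (h2 : ¬ ρ <+: ν) :
    gstar K s r z ν * pl K s r ρ w = 0 := by
  induction ν generalizing ρ u u' with
  | nil => exact absurd (List.nil_prefix) h1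
  | cons e t ih =>
    rcases ρ with _ | ⟨f, ρ'⟩
    · exact absurd (List.nil_prefix) h2
    · have := hν.src_eq; subst this
      have := hρ.src_eq; subst this
      rw [gstar_cons, pl_cons, mul_assoc, ← mul_assoc (pg K s r e)]
      by_cases hef : e = f
      · subst hef
        rw [pg_mul_pe_self, pv_mul_pl K hρ.tail, ih hν.tail hρ.tail
          (fun hh => h1 ((List.cons_prefix_cons).mpr ⟨rfl, hh⟩))
          (fun hh => h2 ((List.cons_prefix_cons).mpr ⟨rfl, hh⟩))]
      · rw [pg_mul_pe_ne K hef, zero_mul, mul_zero]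

end PathElts

end LPX

namespace LPX
open Classical

section Monos
variable (K : Type) [Field K] {V Ed : Type} (s r : Ed → V)

/-- monomial `μ ν*` with common range `z` -/
def mono (μ : List Ed) (z : V) (ν : List Ed) : LPAamb K s r :=
  plE K s r μ * gstar K s r z ν

/-- monomials with ghost part of length at most `d` and right (source-of-ghost) vertex `w` -/
def monoSet (d : ℕ) (w : V) : Set (LPAamb K s r) :=
  {x | ∃ u μ z ν, IsPath s r u μ z ∧ IsPath s r w ν z ∧ ν.length ≤ d ∧ x = mono K s r μ z ν}

/-- all monomials -/
def monoSetAll : Set (LPAamb K s r) :=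
  {x | ∃ u μ z ν w, IsPath s r u μ z ∧ IsPath s r w ν z ∧ x = mono K s r μ z ν}

def GspanTo (d : ℕ) (w : V) : Submodule K (LPAamb K s r) :=
  Submodule.span K (monoSet K s r d w)

def GspanAll (d : ℕ) : Submodule K (LPAamb K s r) :=
  Submodule.span K (⋃ w, monoSet K s r d w)

def Mspan : Submodule K (LPAamb K s r) := Submodule.span K (monoSetAll K s r)

variable {s r}

theorem mono_nil_eq_pl (μ : List Ed) (z : V) : mono K s r μ z [] = pl K s r μ z := by
  rw [mono, gstar_nil, pl]

theorem mono_mul_pv {w z : V} {μ ν : List Ed} (h : IsPath s r w ν z) :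
    mono K s r μ z ν * pv K s r w = mono K s r μ z ν := by
  rw [mono, mul_assoc, gstar_mul_pv K h]

theorem mono_mul_pv' {w w' z : V} {μ ν : List Ed} (h : IsPath s r w ν z) (hw : w' ≠ w) :
    mono K s r μ z ν * pv K s r w' = 0 := by
  rw [mono, mul_assoc, gstar_mul_pv' K h hw, mul_zero]

theorem mono_nil_mul_pe (μ : List Ed) (f : Ed) :
    mono K s r μ (s f) [] * pe K s r f = mono K s r (μ ++ [f]) (r f) [] := by
  rw [mono, mono, gstar_nil, gstar_nil, mul_assoc, pv_mul_pe, plE_append, mul_assoc]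
  congr 1
  rw [plE_cons, plE_nil, mul_one, pe_mul_pv]

theorem mono_cons_mul_pe {w z : V} {μ ν : List Ed} {f : Ed} (h : IsPath s r w (f :: ν) z) :
    mono K s r μ z (f :: ν) * pe K s r f = mono K s r μ z ν := by
  have h1 : IsPath s r (s f) [f] (r f) := IsPath.cons f (IsPath.nil (r f))
  have h2 : pe K s r f = pl K s r [f] (r f) := by
    rw [pl_cons, pl_nil, pe_mul_pv]
  rw [mono, mono, mul_assoc, h2]
  congr 1
  exact gstar_append_mul_pl K (u := s f) h1 h.tail

theorem mono_cons_mul_pe' {z : V} {μ ν : List Ed} {e f : Ed} (hef : e ≠ f) :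
    mono K s r μ z (e :: ν) * pe K s r f = 0 := by
  rw [mono, gstar_cons, mul_assoc, mul_assoc, pg_mul_pe_ne K hef, mul_zero, mul_zero]

theorem mono_nil_mul_pe' {z : V} {μ : List Ed} {f : Ed} (h : z ≠ s f) :
    mono K s r μ z [] * pe K s r f = 0 := by
  rw [mono, gstar_nil, mul_assoc, pv_mul_pe' K h, mul_zero]

theorem mono_mul_pg {z : V} (μ : List Ed) (ν : List Ed) (h : Ed) :
    mono K s r μ z ν * pg K s r h = mono K s r μ z (h :: ν) := by
  rw [mono, mono, gstar_cons, mul_assoc]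

theorem pv_eq_mono (v : V) : pv K s r v = mono K s r [] v [] := by
  rw [mono, plE_nil, gstar_nil, one_mul]

theorem pe_eq_mono (e : Ed) : pe K s r e = mono K s r [e] (r e) [] := by
  rw [mono, gstar_nil, plE_cons, plE_nil, mul_one, pe_mul_pv]

theorem pg_eq_mono (e : Ed) : pg K s r e = mono K s r [] (r e) [e] := by
  rw [mono, plE_nil, one_mul, gstar_cons, gstar_nil, pv_mul_pg]

/-- The product of two valid monomials is in the span of all monomials. -/
theorem mono_mul_mono_mem {u w u' w' z z' : V} {μ ν μ' ν' : List Ed}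
    (hμ : IsPath s r u μ z) (hν : IsPath s r w ν z)
    (hμ' : IsPath s r u' μ' z') (hν' : IsPath s r w' ν' z') :
    mono K s r μ z ν * mono K s r μ' z' ν' ∈ Mspan K s r := by
  have hkey : mono K s r μ z ν * mono K s r μ' z' ν'
      = plE K s r μ * (gstar K s r z ν * pl K s r μ' z') * gh K s r ν' := by
    rw [mono, mono, pl, gstar, gstar]
    simp only [mul_assoc]
  by_cases hp1 : ν <+: μ'
  · obtain ⟨δ, hδ⟩ := hp1
    subst hδ
    rcases Decidable.em (ν = []) with hν0 | hν0
    · subst hν0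
      simp only [List.nil_append] at hμ' hkey ⊢
      have hw : w = z := hν.nil_eq
      by_cases hu' : u' = z
      · subst hu'
        rw [hkey, gstar_nil, pv_mul_pl K hμ']
        refine Submodule.subset_span ⟨u, μ ++ δ, z', ν', w', hμ.append hμ', hν', ?_⟩
        rw [mono, plE_append, pl, gstar]
        simp only [mul_assoc]
      · rw [hkey, gstar_nil, pv_mul_pl' K hμ' (fun hh => hu' hh.symm),
          mul_zero, zero_mul]
        exact Submodule.zero_mem _
    · obtain ⟨m, hm1, hm2⟩ := isPath_append.mp hμ'
      have hmz : z = m := IsPath.rng_unique hν0 hν hm1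
      subst hmz
      rw [hkey, gstar_mul_pl_append K hν hm2]
      refine Submodule.subset_span ⟨u, μ ++ δ, z', ν', w', hμ.append hm2, hν', ?_⟩
      rw [mono, plE_append, pl, gstar]
      simp only [mul_assoc]
  · by_cases hp2 : μ' <+: ν
    · obtain ⟨δ, hδ⟩ := hp2
      subst hδ
      rcases Decidable.em (μ' = []) with hμ'0 | hμ'0
      · subst hμ'0
        simp only [List.nil_append] at hν hkey ⊢
        have hu' : u' = z' := hμ'.nil_eq
        rw [hkey, pl_nil]
        by_cases hz : z' = w
        · subst hz
          rw [gstar_mul_pv K hν]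
          refine Submodule.subset_span ⟨u, μ, z, ν' ++ δ, w', hμ, hν'.append hν, ?_⟩
          rw [mono, gstar, gstar, gh_append]
          simp only [mul_assoc]
        · rw [gstar_mul_pv' K hν hz, mul_zero, zero_mul]
          exact Submodule.zero_mem _
      · obtain ⟨m, hm1, hm2⟩ := isPath_append.mp hν
        have hmz : z' = m := IsPath.rng_unique hμ'0 hμ' hm1
        subst hmz
        rw [hkey, gstar_append_mul_pl K hm1 hm2]
        refine Submodule.subset_span ⟨u, μ, z, ν' ++ δ, w', hμ, hν'.append hm2, ?_⟩
        rw [mono, gstar, gstar, gh_append]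
        simp only [mul_assoc]
    · rw [hkey, gstar_mul_pl_zero K hν hμ' hp1 hp2, mul_zero, zero_mul]
      exact Submodule.zero_mem _

theorem mspan_mul_mem {x y : LPAamb K s r} (hx : x ∈ Mspan K s r) (hy : y ∈ Mspan K s r) :
    x * y ∈ Mspan K s r := by
  have : Mspan K s r * Mspan K s r ≤ Mspan K s r := by
    rw [Mspan, Submodule.span_mul_span]
    rw [Submodule.span_le]
    rintro xy ⟨a, ha, b, hb, rfl⟩
    obtain ⟨u, μ, z, ν, w, hμ, hν, rfl⟩ := ha
    obtain ⟨u', μ', z', ν', w', hμ', hν', rfl⟩ := hb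
    exact mono_mul_mono_mem K hμ hν hμ' hν'
  exact this (Submodule.mul_mem_mul hx hy)

/-- the span of all monomials as a non-unital subalgebra -/
def MsubAlg : NonUnitalSubalgebra K (LPAamb K s r) where
  carrier := (Mspan K s r : Set (LPAamb K s r))
  add_mem' := fun ha hb => Submodule.add_mem _ ha hb
  zero_mem' := Submodule.zero_mem _
  mul_mem' := fun ha hb => mspan_mul_mem K ha hb
  smul_mem' := fun c _ hx => Submodule.smul_mem _ c hx

theorem lpa_le_mspan : ∀ x : LPAamb K s r,
    x ∈ LeavittPathAlgebra K s r → x ∈ Mspan K s r := by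
  have h : LeavittPathAlgebra K s r ≤ MsubAlg K := by
    apply NonUnitalAlgebra.adjoin_le
    rintro x ⟨g, rfl⟩
    show lpaGen K s r g ∈ Mspan K s r
    cases g with
    | vert v =>
      exact Submodule.subset_span ⟨v, [], v, [], v, IsPath.nil v, IsPath.nil v,
        (pv_eq_mono K v)⟩
    | edge e =>
      exact Submodule.subset_span ⟨s e, [e], r e, [], r e,
        IsPath.cons e (IsPath.nil (r e)), IsPath.nil (r e), (pe_eq_mono K e)⟩
    | ghost e =>
      exact Submodule.subset_span ⟨r e, [], r e, [e], s e,
        IsPath.nil (r e), IsPath.cons e (IsPath.nil (r e)), (pg_eq_mono K e)⟩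
  exact fun x hx => h hx

end Monos

end LPX

namespace LPX
open Classical

section Rep
variable {V Ed : Type} (s r : Ed → V)

/-- Boundary paths of the graph: finite paths ending at a sink or infinite emitter,
or infinite paths.  Encoded as a stream of optional edges plus a terminal vertex
(only relevant in the finite case). -/
structure BP : Type where
  term : V
  es : ℕ → Option Ed
  mono' : ∀ n, es n = none → es (n + 1) = none
  chain : ∀ n e f, es n = some e → es (n + 1) = some f → r e = s f
  link : ∀ n e, es n = some e → es (n + 1) = none → term = r e
  bdry : (∃ n, es n = none) → ¬ IsRegularVertex s term

variable {s r}

theorem BP.ext' {x y : BP s r} (h1 : x.term = y.term) (h2 : x.es = y.es) : x = y := by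
  cases x; cases y
  dsimp at h1 h2
  subst h1; subst h2
  rfl

/-- source of a boundary path -/
def BP.src (x : BP s r) : V := (x.es 0).elim x.term (fun e => s e)

theorem BP.src_eq_of_es_zero {x : BP s r} {e : Ed} (h : x.es 0 = some e) : x.src = s e := by
  rw [BP.src, h]; rfl

theorem BP.src_eq_of_es_zero_none {x : BP s r} (h : x.es 0 = none) : x.src = x.term := by
  rw [BP.src, h]; rfl

/-- prepend an edge -/
def BP.cons (e : Ed) (x : BP s r) (h : x.src = r e) : BP s r where
  term := x.term
  es := fun n => match n with | 0 => some e | n + 1 => x.es n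
  mono' := by
    intro n hn
    cases n with
    | zero => simp at hn
    | succ m => exact x.mono' m hn
  chain := by
    intro n e' f he hf
    cases n with
    | zero =>
      cases Option.some.inj he
      have := BP.src_eq_of_es_zero (x := x) hf
      rw [this] at h
      exact h.symm
    | succ m => exact x.chain m e' f he hf
  link := by
    intro n e' he hf
    cases n with
    | zero =>
      cases Option.some.inj he
      have := BP.src_eq_of_es_zero_none (x := x) hf
      rw [this] at h
      exact h
    | succ m => exact x.link m e' he hf
  bdry := by
    rintro ⟨n, hn⟩
    cases n with
    | zero => simp at hn
    | succ m => exact x.bdry ⟨m, hn⟩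

@[simp] theorem BP.cons_term (e : Ed) (x : BP s r) (h : x.src = r e) :
    (BP.cons e x h).term = x.term := rfl
@[simp] theorem BP.cons_es_zero (e : Ed) (x : BP s r) (h : x.src = r e) :
    (BP.cons e x h).es 0 = some e := rfl
@[simp] theorem BP.cons_es_succ (e : Ed) (x : BP s r) (h : x.src = r e) (n : ℕ) :
    (BP.cons e x h).es (n + 1) = x.es n := rfl
@[simp] theorem BP.cons_src (e : Ed) (x : BP s r) (h : x.src = r e) :
    (BP.cons e x h).src = s e := rfl

/-- remove the first edge -/
def BP.tail (x : BP s r) (e : Ed) (h : x.es 0 = some e) : BP s r where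
  term := x.term
  es := fun n => x.es (n + 1)
  mono' := fun n hn => x.mono' (n + 1) hn
  chain := fun n e' f he hf => x.chain (n + 1) e' f he hf
  link := fun n e' he hf => x.link (n + 1) e' he hf
  bdry := fun ⟨n, hn⟩ => x.bdry ⟨n + 1, hn⟩

@[simp] theorem BP.tail_es (x : BP s r) (e : Ed) (h : x.es 0 = some e) (n : ℕ) :
    (x.tail e h).es n = x.es (n + 1) := rfl

theorem BP.src_tail (x : BP s r) (e : Ed) (h : x.es 0 = some e) :
    (x.tail e h).src = r e := by
  cases hx : x.es 1 with
  | none =>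
    have h2 : (x.tail e h).es 0 = none := hx
    rw [BP.src_eq_of_es_zero_none h2]
    exact (x.link 0 e h hx)
  | some f =>
    have h2 : (x.tail e h).es 0 = some f := hx
    rw [BP.src_eq_of_es_zero h2]
    exact (x.chain 0 e f h hx).symm

@[simp] theorem BP.tail_cons (e : Ed) (x : BP s r) (h : x.src = r e)
    (h2 : (BP.cons e x h).es 0 = some e) : (BP.cons e x h).tail e h2 = x := by
  refine BP.ext' rfl ?_
  funext n; rfl

@[simp] theorem BP.cons_tail (x : BP s r) (e : Ed) (h : x.es 0 = some e) :
    BP.cons e (x.tail e h) (BP.src_tail x e h) = x := by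
  refine BP.ext' rfl ?_
  funext n
  cases n with
  | zero => exact h.symm
  | succ m => rfl

end Rep

section RepAct
variable (K : Type) [Field K] {V Ed : Type} (s r : Ed → V)

/-- the action of each generator on the free module on boundary paths -/
def actOf : LPAGen V Ed → ((BP s r →₀ K) →ₗ[K] (BP s r →₀ K))
  | .vert v => Finsupp.lift (BP s r →₀ K) K (BP s r)
      (fun x => if x.src = v then Finsupp.single x 1 else 0)
  | .edge e => Finsupp.lift (BP s r →₀ K) K (BP s r)
      (fun x => if h : x.src = r e then Finsupp.single (BP.cons e x h) 1 else 0)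
  | .ghost e => Finsupp.lift (BP s r →₀ K) K (BP s r)
      (fun x => if h : x.es 0 = some e then Finsupp.single (x.tail e h) 1 else 0)

theorem act_single (f : BP s r → (BP s r →₀ K)) (x : BP s r) (b : K) :
    Finsupp.lift (BP s r →₀ K) K (BP s r) f (Finsupp.single x b) = b • f x := by
  simp

def Φ₀ : FreeAlgebra K (LPAGen V Ed) →ₐ[K] Module.End K (BP s r →₀ K) :=
  FreeAlgebra.lift K (actOf K s r)

theorem phi0_ι (g : LPAGen V Ed) : Φ₀ K s r (FreeAlgebra.ι K g) = actOf K s r g := by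
  rw [Φ₀, FreeAlgebra.lift_ι_apply]

theorem phi_rel : ∀ {a b : FreeAlgebra K (LPAGen V Ed)},
    LPARel K s r a b → Φ₀ K s r a = Φ₀ K s r b := by
  intro a b hab
  induction hab with
  | vert_mul u v =>
    rw [map_mul, apply_ite (Φ₀ K s r), map_zero]
    simp only [phi0_ι]
    apply Finsupp.lhom_ext
    intro x b
    rw [Module.End.mul_apply]
    by_cases huv : u = v
    · subst huv
      by_cases hv : x.src = u <;>
        simp [actOf, act_single, hv, smul_ite]
    · by_cases hv : x.src = v
      · simp [actOf, act_single, hv, huv, smul_ite,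
          (show ¬ x.src = u from fun hu => huv (hu.symm.trans hv))]
        exact fun h => absurd h.symm huv
      · simp [actOf, act_single, hv, huv, smul_ite]
  | src_mul_edge e =>
    rw [map_mul]
    simp only [phi0_ι]
    apply Finsupp.lhom_ext
    intro x b
    rw [Module.End.mul_apply]
    by_cases h : x.src = r e <;>
      simp [actOf, act_single, h, smul_ite, BP.cons_src]
  | edge_mul_rng e =>
    rw [map_mul]
    simp only [phi0_ι]
    apply Finsupp.lhom_ext
    intro x b
    rw [Module.End.mul_apply]
    by_cases h : x.src = r e <;>
      simp [actOf, act_single, h, smul_ite]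
  | rng_mul_ghost e =>
    rw [map_mul]
    simp only [phi0_ι]
    apply Finsupp.lhom_ext
    intro x b
    rw [Module.End.mul_apply]
    by_cases h : x.es 0 = some e <;>
      simp [actOf, act_single, h, smul_ite, BP.src_tail]
  | ghost_mul_src e =>
    rw [map_mul]
    simp only [phi0_ι]
    apply Finsupp.lhom_ext
    intro x b
    rw [Module.End.mul_apply]
    by_cases h : x.src = s e
    · by_cases h0 : x.es 0 = some e <;>
        simp [actOf, act_single, h, h0, smul_ite]
    · have h0 : ¬ x.es 0 = some e := fun hh => h (BP.src_eq_of_es_zero hh)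
      simp [actOf, act_single, h, h0, smul_ite]
  | ghost_mul_edge e f =>
    rw [map_mul, apply_ite (Φ₀ K s r), map_zero]
    simp only [phi0_ι]
    apply Finsupp.lhom_ext
    intro x b
    rw [Module.End.mul_apply]
    by_cases h : x.src = r f
    · by_cases hef : e = f
      · subst hef
        simp [actOf, act_single, h, smul_ite]
      · simp [actOf, act_single, h, hef, smul_ite,
          (show ¬ (BP.cons f x h).es 0 = some e from fun hh =>
            hef (Option.some.inj hh).symm)]
        exact dif_neg (fun hh => hef (Option.some.inj hh).symm)
    · by_cases hef : e = f
      · subst hef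
        simp [actOf, act_single, h, smul_ite]
      · simp [actOf, act_single, h, hef, smul_ite]
  | ck2 v hfin hne =>
    rw [map_sum]
    simp only [map_mul, phi0_ι]
    apply Finsupp.lhom_ext
    intro x b
    rw [LinearMap.sum_apply]
    simp only [Module.End.mul_apply]
    cases hx0 : x.es 0 with
    | none =>
      have hterm : ¬ x.src = v := by
        rw [BP.src_eq_of_es_zero_none hx0]
        intro hsrc
        exact (x.bdry ⟨0, hx0⟩) (hsrc ▸ ⟨hfin, hne⟩)
      rw [Finset.sum_eq_zero (fun e _ => by
        simp [actOf, act_single, (show ¬ x.es 0 = some e by rw [hx0]; simp)])]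
      simp [actOf, act_single, hterm]
    | some f =>
      by_cases hfv : s f = v
      · have hfmem : f ∈ hfin.toFinset := by
          rw [Set.Finite.mem_toFinset]; exact hfv
        rw [Finset.sum_eq_single_of_mem f hfmem (fun e _ hef => by
          have hne' : ¬ x.es 0 = some e := by
            rw [hx0]
            intro hh
            exact hef (Option.some.inj hh).symm
          simp [actOf, act_single, hne'])]
        simp [actOf, act_single, hx0, BP.src_tail, smul_ite,
          (BP.src_eq_of_es_zero hx0).trans hfv]
      · rw [Finset.sum_eq_zero (fun e he => by
          have hev : s e = v := hfin.mem_toFinset.mp he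
          have hne' : ¬ x.es 0 = some e := by
            rw [hx0]
            intro hh
            exact hfv ((Option.some.inj hh) ▸ hev)
          simp [actOf, act_single, hne'])]
        have hsrc : ¬ x.src = v := by
          rw [BP.src_eq_of_es_zero hx0]; exact hfv
        simp [actOf, act_single, hsrc]

end RepAct

end LPX

namespace LPX
open Classical

section RepUse
variable (K : Type) [Field K] {V Ed : Type} (s r : Ed → V)

def ΦA : LPAamb K s r →ₐ[K] Module.End K (BP s r →₀ K) :=
  RingQuot.liftAlgHom K ⟨Φ₀ K s r, fun _ _ h => phi_rel K s r h⟩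

theorem phiA_gen (g : LPAGen V Ed) :
    ΦA K s r (lpaGen K s r g) = actOf K s r g := by
  simp only [ΦA, lpaGen]
  rw [RingQuot.liftAlgHom_mkAlgHom_apply, phi0_ι]

theorem phiA_pv (v : V) : ΦA K s r (pv K s r v) = actOf K s r (LPAGen.vert v) :=
  phiA_gen K s r _

theorem phiA_pe (e : Ed) : ΦA K s r (pe K s r e) = actOf K s r (LPAGen.edge e) :=
  phiA_gen K s r _

theorem phiA_pl_single {u w : V} {l : List Ed} (hl : IsPath s r u l w) :
    ∀ x : BP s r, x.src = w →
    ∃ y : BP s r, y.src = u ∧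
      (∀ n, y.es n = if h : n < l.length then some (l.get ⟨n, h⟩)
        else x.es (n - l.length)) ∧
      ΦA K s r (pl K s r l w) (Finsupp.single x (1 : K)) = Finsupp.single y 1 := by
  induction hl with
  | nil v =>
    intro x hx
    refine ⟨x, hx, fun n => by simp, ?_⟩
    rw [pl_nil, phiA_pv]
    simp [actOf, act_single, hx]
  | @cons l u e hl' ih =>
    intro x hx
    obtain ⟨y', hs', hes', heq'⟩ := ih x hx
    refine ⟨BP.cons e y' (by rw [hs']), by simp, ?_, ?_⟩
    · intro n
      cases n with
      | zero => simp
      | succ m =>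
        rw [BP.cons_es_succ, hes' m]
        by_cases hm : m < l.length
        · rw [dif_pos hm, dif_pos (by simpa using Nat.succ_lt_succ hm)]
          simp
        · rw [dif_neg hm, dif_neg (by simpa using fun hh => hm (Nat.lt_of_succ_lt_succ hh))]
          simp [Nat.succ_sub_succ]
    · rw [pl_cons, map_mul, Module.End.mul_apply, heq', phiA_pe]
      simp [actOf, act_single, hs']

/-- a choice of next edge out of a vertex -/
noncomputable def nxt (u : V) : Option Ed :=
  if h : ∃ e : Ed, s e = u then some h.choose else none

theorem nxt_some {u : V} {e : Ed} (h : nxt s u = some e) : s e = u := by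
  unfold nxt at h
  split at h
  · cases Option.some.inj h
    exact (by assumption : ∃ e : Ed, s e = u).choose_spec
  · exact absurd h (by simp)

theorem nxt_none {u : V} (h : nxt s u = none) : ¬ ∃ e : Ed, s e = u := by
  unfold nxt at h
  split at h
  · exact absurd h (by simp)
  · assumption

/-- greedy edge sequence out of `u` -/
noncomputable def seqF (u : V) : ℕ → Option Ed
  | 0 => nxt s u
  | n + 1 => (seqF u n).bind (fun e => nxt s (r e))

theorem seqF_none_succ {u : V} {n : ℕ} (h : seqF s r u n = none) :
    seqF s r u (n + 1) = none := by
  rw [seqF, h]; rfl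

theorem seqF_none_add {u : V} {n : ℕ} (h : seqF s r u n = none) :
    ∀ k, seqF s r u (n + k) = none := by
  intro k
  induction k with
  | zero => exact h
  | succ m ihm => exact seqF_none_succ s r ihm

/-- terminal vertex for the greedy boundary path -/
noncomputable def bpT (u : V) : V :=
  if h : ∃ n, seqF s r u n = none then
    (seqF s r u (Nat.find h - 1)).elim u (fun e => r e)
  else u

/-- the greedy boundary path out of `u` -/
noncomputable def bpFrom (u : V) : BP s r where
  term := bpT s r u
  es := seqF s r u
  mono' := fun n hn => seqF_none_succ s r hn
  chain := by
    intro n e f he hf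
    have h2 : seqF s r u (n + 1) = nxt s (r e) := by rw [seqF, he]; rfl
    rw [h2] at hf
    exact (nxt_some s hf).symm
  link := by
    intro n e he hf
    have hex : ∃ m, seqF s r u m = none := ⟨n + 1, hf⟩
    have hlt : n < Nat.find hex := by
      by_contra hge
      push_neg at hge
      have := seqF_none_add s r (Nat.find_spec hex) (n - Nat.find hex)
      rw [Nat.add_sub_cancel' hge] at this
      rw [this] at he
      exact absurd he (by simp)
    have hfind : Nat.find hex = n + 1 := le_antisymm (Nat.find_le hf) hlt
    show bpT s r u = r e
    rw [bpT, dif_pos hex, hfind, Nat.add_sub_cancel, he]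
    rfl
  bdry := by
    intro hex
    have h0 := Nat.find_spec hex
    cases hN : Nat.find hex with
    | zero =>
      rw [hN] at h0
      have hnone := nxt_none s h0
      have hterm : bpT s r u = u := by
        rw [bpT, dif_pos hex, hN]
        simp only [Nat.zero_sub, h0]
        rfl
      rw [hterm]
      rintro ⟨hfin, e, he⟩
      exact hnone ⟨e, he⟩
    | succ m =>
      have hm : seqF s r u m ≠ none := Nat.find_min hex (by omega)
      obtain ⟨e, he⟩ := Option.ne_none_iff_exists'.mp hm
      have hterm : bpT s r u = r e := by
        rw [bpT, dif_pos hex, hN, Nat.add_sub_cancel, he]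
        rfl
      have h1 : seqF s r u (m + 1) = nxt s (r e) := by rw [seqF, he]; rfl
      have hnone : ¬ ∃ f, s f = r e := by
        apply nxt_none s
        rw [← h1, ← hN]
        exact h0
      rw [hterm]
      rintro ⟨hfin, f, hf⟩
      exact hnone ⟨f, hf⟩

theorem bpFrom_src (u : V) : (bpFrom s r u).src = u := by
  cases h0 : seqF s r u 0 with
  | some e =>
    have : (bpFrom s r u).es 0 = some e := h0
    rw [BP.src_eq_of_es_zero this]
    exact nxt_some s h0
  | none =>
    have : (bpFrom s r u).es 0 = none := h0
    rw [BP.src_eq_of_es_zero_none this]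
    show bpT s r u = u
    have hex : ∃ n, seqF s r u n = none := ⟨0, h0⟩
    have hfind : Nat.find hex = 0 := (Nat.find_eq_zero hex).mpr h0
    rw [bpT, dif_pos hex, hfind]
    simp only [Nat.zero_sub, h0]
    rfl

/-- Key independence lemma: a nontrivial combination of distinct real paths, all ending
with a common fresh edge `f'`, is nonzero. -/
theorem indep {ι : Type} (f' : Ed) (P : Finset ι) (hPne : P.Nonempty)
    (co : ι → K) (hco : ∀ m ∈ P, co m ≠ 0)
    (pa : ι → List Ed)
    (hpa : ∀ m ∈ P, ∃ u₀, IsPath s r u₀ (pa m) (s f'))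
    (hinjpa : ∀ m ∈ P, ∀ m' ∈ P, pa m = pa m' → m = m')
    (hfresh : ∀ m ∈ P, f' ∉ pa m) :
    (∑ m ∈ P, co m • pl K s r (pa m ++ [f']) (r f')) ≠ 0 := by
  intro h0
  obtain ⟨m₀, hm₀⟩ := hPne
  have hVne : Nonempty (BP s r) := ⟨bpFrom s r (r f')⟩
  have hx₀ : (bpFrom s r (r f')).src = r f' := bpFrom_src s r (r f')
  have hy : ∀ m ∈ P, ∃ y : BP s r,
      (∀ n, y.es n = if h : n < (pa m ++ [f']).length then some ((pa m ++ [f']).get ⟨n, h⟩)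
        else (bpFrom s r (r f')).es (n - (pa m ++ [f']).length)) ∧
      ΦA K s r (pl K s r (pa m ++ [f']) (r f')) (Finsupp.single (bpFrom s r (r f')) (1 : K))
        = Finsupp.single y 1 := by
    intro m hm
    obtain ⟨u₀, hp⟩ := hpa m hm
    have hp' : IsPath s r u₀ (pa m ++ [f']) (r f') :=
      hp.append (IsPath.cons f' (IsPath.nil (r f')))
    obtain ⟨y, _, hes, heq⟩ := phiA_pl_single K s r hp' (bpFrom s r (r f')) hx₀
    exact ⟨y, hes, heq⟩
  choose! yof hyes hyeq using hy
  have hkey : ∀ m ∈ P, ∀ m' ∈ P, (pa m).length < (pa m').length → yof m ≠ yof m' := by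
    intro m hm m' hm' hlen hyy
    have h1 := hyes m hm (pa m).length
    have h2 := hyes m' hm' (pa m).length
    rw [hyy] at h1
    rw [h1] at h2
    rw [dif_pos (by simp), dif_pos (by simp; omega)] at h2
    have h3 : (pa m ++ [f'])[(pa m).length] = f' :=
      List.getElem_concat_length rfl (by simp)
    have h4 : (pa m' ++ [f'])[(pa m).length]'(by simp; omega) = (pa m')[(pa m).length]'hlen :=
      List.getElem_append_left hlen
    have h5 : f' = (pa m')[(pa m).length]'hlen := by
      have := Option.some.inj h2
      simp only [List.get_eq_getElem] at this
      rw [h3, h4] at this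
      exact this
    exact hfresh m' hm' (h5 ▸ List.getElem_mem hlen)
  have hyinj : ∀ m ∈ P, ∀ m' ∈ P, yof m = yof m' → m = m' := by
    intro m hm m' hm' hyy
    rcases lt_trichotomy (pa m).length (pa m').length with hl | hl | hl
    · exact absurd hyy (hkey m hm m' hm' hl)
    · apply hinjpa m hm m' hm'
      have hlist : pa m ++ [f'] = pa m' ++ [f'] := by
        apply List.ext_getElem (by simp [hl])
        intro n hn1 hn2
        have e1 := hyes m hm n
        have e2 := hyes m' hm' n
        rw [hyy] at e1
        rw [e1, dif_pos (by simpa using hn1), dif_pos (by simpa using hn2)] at e2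
        simpa using (Option.some.inj e2.symm).symm
      exact List.append_cancel_right hlist
    · exact absurd hyy.symm (hkey m' hm' m hm hl)
  have happ := congrArg (fun t => ΦA K s r t (Finsupp.single (bpFrom s r (r f')) (1 : K))) h0
  simp only [map_sum, map_zero, map_smul, LinearMap.sum_apply, LinearMap.smul_apply,
    LinearMap.zero_apply] at happ
  rw [Finset.sum_congr rfl (fun m hm => by rw [hyeq m hm])] at happ
  have heval := congrArg (fun g : BP s r →₀ K => g (yof m₀)) happ
  simp only [Finsupp.finset_sum_apply, Finsupp.coe_zero, Pi.zero_apply, Finsupp.coe_smul,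
    Pi.smul_apply, Finsupp.single_apply, smul_eq_mul] at heval
  rw [Finset.sum_eq_single_of_mem m₀ hm₀ (fun m hm hmm => by
    rw [if_neg (fun hh => hmm (hyinj m hm m₀ hm₀ hh)), mul_zero])] at heval
  rw [if_pos rfl, mul_one] at heval
  exact hco m₀ hm₀ heval

end RepUse

end LPX

namespace LPX
open Classical

section Reduce
variable (K : Type) [Field K] {V Ed : Type} {s r : Ed → V}

theorem gspanTo_absorb {d : ℕ} {u : V} {y : LPAamb K s r} (hy : y ∈ GspanTo K s r d u) :
    y * pv K s r u = y := by
  refine Submodule.span_induction (p := fun x _ => x * pv K s r u = x) ?_ ?_ ?_ ?_ hy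
  · rintro x ⟨u₀, μ, z, ν, hμ, hν, hlen, rfl⟩
    exact mono_mul_pv K hν
  · exact zero_mul _
  · intro a b _ _ ha hb; rw [add_mul, ha, hb]
  · intro a x _ hx; rw [smul_mul_assoc, hx]

theorem mulPv_mem {d : ℕ} {w : V} {y : LPAamb K s r} (hy : y ∈ GspanAll K s r d) :
    y * pv K s r w ∈ GspanTo K s r d w := by
  refine Submodule.span_induction (p := fun x _ => x * pv K s r w ∈ GspanTo K s r d w)
    ?_ ?_ ?_ ?_ hy
  · rintro x hx
    obtain ⟨S, ⟨w₀, rfl⟩, hxS⟩ := hx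
    obtain ⟨u₀, μ, z, ν, hμ, hν, hlen, rfl⟩ := hxS
    by_cases hw : w = w₀
    · subst hw
      rw [mono_mul_pv K hν]
      exact Submodule.subset_span ⟨u₀, μ, z, ν, hμ, hν, hlen, rfl⟩
    · rw [mono_mul_pv' K hν hw]
      exact Submodule.zero_mem _
  · rw [zero_mul]; exact Submodule.zero_mem _
  · intro a b _ _ ha hb; rw [add_mul]; exact Submodule.add_mem _ ha hb
  · intro a x _ hx; rw [smul_mul_assoc]; exact Submodule.smul_mem _ a hx

theorem mulPe_mem {d : ℕ} {u : V} {f : Ed} (hf : s f = u) {y : LPAamb K s r}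
    (hy : y ∈ GspanTo K s r (d + 1) u) :
    y * pe K s r f ∈ GspanTo K s r d (r f) := by
  refine Submodule.span_induction (p := fun x _ => x * pe K s r f ∈ GspanTo K s r d (r f))
    ?_ ?_ ?_ ?_ hy
  · rintro x ⟨u₀, μ, z, ν, hμ, hν, hlen, rfl⟩
    rcases ν with _ | ⟨e, ν'⟩
    · have hz : u = z := hν.nil_eq
      subst hz
      subst hf
      rw [mono_nil_mul_pe]
      exact Submodule.subset_span ⟨u₀, μ ++ [f], r f, [],
        hμ.append (IsPath.cons f (IsPath.nil (r f))), IsPath.nil (r f), by simp, rfl⟩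
    · by_cases hef : e = f
      · subst hef
        rw [mono_cons_mul_pe K hν]
        exact Submodule.subset_span ⟨u₀, μ, z, ν', hμ, hν.tail, by
          simpa using Nat.lt_succ_iff.mp (Nat.lt_of_lt_of_le (Nat.lt_succ_self _)
            (by simpa using hlen)), rfl⟩
      · rw [mono_cons_mul_pe' K hef]
        exact Submodule.zero_mem _
  · rw [zero_mul]; exact Submodule.zero_mem _
  · intro a b _ _ ha hb; rw [add_mul]; exact Submodule.add_mem _ ha hb
  · intro a x _ hx; rw [smul_mul_assoc]; exact Submodule.smul_mem _ a hx

theorem sink_le {d : ℕ} {u : V} (hsink : ¬ ∃ e : Ed, s e = u) {y : LPAamb K s r}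
    (hy : y ∈ GspanTo K s r d u) : y ∈ GspanTo K s r 0 u := by
  refine Submodule.span_le.mpr ?_ hy
  rintro x ⟨u₀, μ, z, ν, hμ, hν, hlen, rfl⟩
  rcases ν with _ | ⟨e, ν'⟩
  · exact Submodule.subset_span ⟨u₀, μ, z, [], hμ, hν, le_refl _, rfl⟩
  · exact absurd ⟨e, hν.src_eq.symm⟩ hsink

theorem mspan_bounded {y : LPAamb K s r} (hy : y ∈ Mspan K s r) :
    ∃ d, y ∈ GspanAll K s r d := by
  obtain ⟨c, hsupp, hsum⟩ := Submodule.mem_span_set.mp hy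
  have hdata : ∀ m ∈ c.support, ∃ u μ z ν w, IsPath s r u μ z ∧ IsPath s r w ν z ∧
      m = mono K s r μ z ν := fun m hm => hsupp hm
  choose uof μof zof νof wof hμ hν hmeq using hdata
  refine ⟨c.support.attach.sup (fun x => (νof x.1 x.2).length), ?_⟩
  rw [← hsum, Finsupp.sum]
  apply Submodule.sum_mem
  intro m hm
  apply Submodule.smul_mem
  apply Submodule.subset_span
  refine Set.mem_iUnion.mpr ⟨wof m hm, uof m hm, μof m hm, zof m hm, νof m hm,
    hμ m hm, hν m hm, ?_, hmeq m hm⟩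
  exact Finset.le_sup (f := fun x : {x // x ∈ c.support} => (νof x.1 x.2).length)
    (Finset.mem_attach _ ⟨m, hm⟩)

theorem exists_pv_ne_zero {d : ℕ} {y : LPAamb K s r} (hy : y ∈ GspanAll K s r d)
    (hy0 : y ≠ 0) : ∃ w, y * pv K s r w ≠ 0 := by
  by_contra hall
  push_neg at hall
  apply hy0
  obtain ⟨c, hsupp, hsum⟩ := Submodule.mem_span_set.mp hy
  have hdata : ∀ m ∈ c.support, ∃ w u μ z ν, IsPath s r u μ z ∧ IsPath s r w ν z ∧
      ν.length ≤ d ∧ m = mono K s r μ z ν := by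
    intro m hm
    obtain ⟨S, ⟨w₀, rfl⟩, hxS⟩ := hsupp hm
    obtain ⟨u, μ, z, ν, h1, h2, h3, h4⟩ := hxS
    exact ⟨w₀, u, μ, z, ν, h1, h2, h3, h4⟩
  choose wof uof μof zof νof hμ hν hlen hmeq using hdata
  set RV : Finset V := c.support.attach.image (fun x => wof x.1 x.2) with hRV
  have habs : ∀ x : {m // m ∈ c.support}, (x.1 : LPAamb K s r) * (∑ w ∈ RV, pv K s r w) = x.1 := by
    intro x
    calc (x.1 : LPAamb K s r) * (∑ w ∈ RV, pv K s r w)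
        = ∑ w ∈ RV, (x.1 : LPAamb K s r) * pv K s r w := Finset.mul_sum _ _ _
      _ = ∑ w ∈ RV, (if w = wof x.1 x.2 then (x.1 : LPAamb K s r) else 0) := by
          refine Finset.sum_congr rfl (fun w _ => ?_)
          split
          · next hw =>
              subst hw
              have h2 := mono_mul_pv K (μ := μof x.1 x.2) (hν x.1 x.2)
              rw [← hmeq x.1 x.2] at h2
              exact h2
          · next hw =>
              have h2 := mono_mul_pv' K (μ := μof x.1 x.2) (hν x.1 x.2) hw
              rw [← hmeq x.1 x.2] at h2
              exact h2
      _ = if wof x.1 x.2 ∈ RV then (x.1 : LPAamb K s r) else 0 :=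
          Finset.sum_ite_eq' RV (wof x.1 x.2) (fun _ => (x.1 : LPAamb K s r))
      _ = x.1 := if_pos (Finset.mem_image_of_mem _ (Finset.mem_attach _ x))
  have : y = y * (∑ w ∈ RV, pv K s r w) := by
    conv_lhs => rw [← hsum]
    rw [← hsum, Finsupp.sum, ← Finset.sum_attach c.support (fun m => c m • m), Finset.sum_mul]
    exact (Finset.sum_congr rfl (fun x _ => by rw [smul_mul_assoc, habs x])).symm
  rw [this, Finset.mul_sum]
  exact Finset.sum_eq_zero (fun w _ => hall w)

/-- Phase (ii) : ghost elimination.  Any nonzero element spanned by monomials with ghost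
degree at most `d` and right vertex `u` can be right-multiplied by a path to become a
nonzero element spanned by real paths. -/
theorem reduceGhost : ∀ (d : ℕ) (u : V) (y : LPAamb K s r), y ∈ GspanTo K s r d u →
    y ≠ 0 → ∃ (l : List Ed) (w : V), IsPath s r u l w ∧ y * pl K s r l w ≠ 0 ∧
      y * pl K s r l w ∈ GspanTo K s r 0 w := by
  intro d
  induction d with
  | zero =>
    intro u y hy hy0
    refine ⟨[], u, IsPath.nil u, ?_, ?_⟩
    · rwa [pl_nil, gspanTo_absorb K hy]
    · rwa [pl_nil, gspanTo_absorb K hy]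
  | succ d ih =>
    intro u y hy hy0
    by_cases hEx : ∃ f, s f = u ∧ y * pe K s r f ≠ 0
    · obtain ⟨f, hf, hz⟩ := hEx
      have hz' : y * pe K s r f ∈ GspanTo K s r d (r f) := mulPe_mem K hf hy
      obtain ⟨l, w, hlw, hne, hmem⟩ := ih (r f) (y * pe K s r f) hz' hz
      refine ⟨f :: l, w, hf ▸ IsPath.cons f hlw, ?_, ?_⟩
      · rwa [pl_cons, ← mul_assoc]
      · rwa [pl_cons, ← mul_assoc]
    · push_neg at hEx
      by_cases hfin : {e : Ed | s e = u}.Finite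
      · by_cases hne : {e : Ed | s e = u}.Nonempty
        · exfalso
          apply hy0
          have h1 : y * pv K s r u = y := gspanTo_absorb K hy
          rw [← h1, ← ck2 K u hfin hne, Finset.mul_sum]
          apply Finset.sum_eq_zero
          intro e he
          rw [← mul_assoc, hEx e (hfin.mem_toFinset.mp he), zero_mul]
        · -- sink
          refine ⟨[], u, IsPath.nil u, ?_, ?_⟩
          · rwa [pl_nil, gspanTo_absorb K hy]
          · rw [pl_nil, gspanTo_absorb K hy]
            exact sink_le K (fun ⟨e, he⟩ => hne ⟨e, he⟩) hy
      · -- infinite emitter : contradiction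
        exfalso
        obtain ⟨c, hsupp, hsum⟩ := Submodule.mem_span_set.mp hy
        have hdata : ∀ m ∈ c.support, ∃ u₀ μ z ν, IsPath s r u₀ μ z ∧ IsPath s r u ν z ∧
            ν.length ≤ d + 1 ∧ m = mono K s r μ z ν := fun m hm => hsupp hm
        choose uof μof zof νof hμ hν hlen hmeq using hdata
        set S := c.support.attach with hS
        set B : Finset Ed := (S.biUnion (fun x => (νof x.1 x.2).toFinset)) ∪
          (S.biUnion (fun x => (μof x.1 x.2).toFinset)) with hB
        have hinf : {e : Ed | s e = u}.Infinite := hfin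
        obtain ⟨f', hf'mem, hf'B⟩ := (hinf.diff B.finite_toSet).nonempty
        have hf'u : s f' = u := hf'mem
        have hf'ν : ∀ x : {m // m ∈ c.support}, f' ∉ νof x.1 x.2 := by
          intro x hmem
          exact hf'B (Finset.mem_coe.mpr (Finset.mem_union_left _
            (Finset.mem_biUnion.mpr ⟨x, Finset.mem_attach _ x, List.mem_toFinset.mpr hmem⟩)))
        have hf'μ : ∀ x : {m // m ∈ c.support}, f' ∉ μof x.1 x.2 := by
          intro x hmem
          exact hf'B (Finset.mem_coe.mpr (Finset.mem_union_right _
            (Finset.mem_biUnion.mpr ⟨x, Finset.mem_attach _ x, List.mem_toFinset.mpr hmem⟩)))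
        set S0 := S.filter (fun x => νof x.1 x.2 = []) with hS0
        have hypef' : y * pe K s r f' = ∑ x ∈ S0, c x.1 • pl K s r (μof x.1 x.2 ++ [f']) (r f') := by
          conv_lhs => rw [← hsum, Finsupp.sum,
            ← Finset.sum_attach c.support (fun m => c m • m)]
          rw [Finset.sum_mul, ← Finset.sum_filter_add_sum_filter_not S
            (fun x => νof x.1 x.2 = []) (fun x => (c x.1 • (x.1 : LPAamb K s r)) * pe K s r f')]
          have hz2 : ∑ x ∈ S.filter (fun x => ¬ νof x.1 x.2 = []),
              (c x.1 • (x.1 : LPAamb K s r)) * pe K s r f' = 0 := by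
            apply Finset.sum_eq_zero
            intro x hx
            have hxne : νof x.1 x.2 ≠ [] := (Finset.mem_filter.mp hx).2
            obtain ⟨e, t, het⟩ := List.exists_cons_of_ne_nil hxne
            have hef' : e ≠ f' := by
              intro hh
              exact hf'ν x (het ▸ (hh ▸ List.mem_cons_self (a := e) (l := t)))
            have h2 : mono K s r (μof x.1 x.2) (zof x.1 x.2) (νof x.1 x.2) * pe K s r f'
                = 0 := by
              rw [het]; exact mono_cons_mul_pe' K hef'
            rw [← hmeq x.1 x.2] at h2
            rw [smul_mul_assoc, h2, smul_zero]
          rw [hz2, add_zero]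
          apply Finset.sum_congr rfl
          intro x hx
          have hxnil : νof x.1 x.2 = [] := (Finset.mem_filter.mp hx).2
          have hzu : u = zof x.1 x.2 := by
            have := hν x.1 x.2
            rw [hxnil] at this
            exact this.nil_eq
          have h2 : mono K s r (μof x.1 x.2) (zof x.1 x.2) (νof x.1 x.2) * pe K s r f'
              = pl K s r (μof x.1 x.2 ++ [f']) (r f') := by
            rw [hxnil, ← hzu, ← hf'u, mono_nil_mul_pe, mono_nil_eq_pl]
          rw [← hmeq x.1 x.2] at h2
          rw [smul_mul_assoc, h2]
        have hS0e : S0 = ∅ := by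
          by_contra hS0ne
          have hS0ne' : S0.Nonempty := Finset.nonempty_of_ne_empty hS0ne
          refine indep K s r f' S0 hS0ne' (fun x => c x.1) ?_ (fun x => μof x.1 x.2)
            ?_ ?_ ?_ ?_
          · intro x hx
            exact Finsupp.mem_support_iff.mp x.2
          · intro x hx
            have hxnil : νof x.1 x.2 = [] := (Finset.mem_filter.mp hx).2
            have hzu : u = zof x.1 x.2 := by
              have := hν x.1 x.2
              rw [hxnil] at this
              exact this.nil_eq
            refine ⟨uof x.1 x.2, ?_⟩
            show IsPath s r (uof x.1 x.2) (μof x.1 x.2) (s f')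
            rw [hf'u, hzu]
            exact hμ x.1 x.2
          · intro x hx x' hx' hpp
            have hxnil : νof x.1 x.2 = [] := (Finset.mem_filter.mp hx).2
            have hx'nil : νof x'.1 x'.2 = [] := (Finset.mem_filter.mp hx').2
            have h1 := hmeq x.1 x.2
            have h2 := hmeq x'.1 x'.2
            have hzu : u = zof x.1 x.2 := by
              have := hν x.1 x.2; rw [hxnil] at this; exact this.nil_eq
            have hzu' : u = zof x'.1 x'.2 := by
              have := hν x'.1 x'.2; rw [hx'nil] at this; exact this.nil_eq
            apply Subtype.ext
            have hpp' : μof x.1 x.2 = μof x'.1 x'.2 := hpp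
            rw [hxnil, ← hzu] at h1
            rw [hx'nil, ← hzu'] at h2
            rw [h1, h2, hpp']
          · intro x hx
            exact hf'μ x
          · rw [← hypef']
            exact hEx f' hf'u
        have hally : ∀ x : {m // m ∈ c.support}, νof x.1 x.2 ≠ [] := by
          intro x hnil
          have : x ∈ S0 := Finset.mem_filter.mpr ⟨Finset.mem_attach _ x, hnil⟩
          rw [hS0e] at this
          exact absurd this (Finset.notMem_empty x)
        apply hy0
        set hd : {m // m ∈ c.support} → Option Ed := fun x => (νof x.1 x.2).head? with hhd
        have hsum2 : y = ∑ o ∈ S.image hd, ∑ x ∈ S.filter (fun x => hd x = o),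
            c x.1 • (x.1 : LPAamb K s r) := by
          rw [Finset.sum_fiberwise_of_maps_to (fun x hx => Finset.mem_image_of_mem hd hx)]
          rw [← hsum, Finsupp.sum, ← Finset.sum_attach c.support (fun m => c m • m)]
        rw [hsum2]
        apply Finset.sum_eq_zero
        intro o ho
        obtain ⟨x₀, hx₀S, hx₀⟩ := Finset.mem_image.mp ho
        obtain ⟨h, t₀, ht₀⟩ := List.exists_cons_of_ne_nil (hally x₀)
        have hoh : o = some h := by
          rw [← hx₀]
          show (νof x₀.1 x₀.2).head? = some h
          rw [ht₀]
          rfl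
        subst hoh
        have hhu : s h = u := by
          have := hν x₀.1 x₀.2
          rw [ht₀] at this
          exact this.src_eq.symm
        have hshape : ∀ x ∈ S.filter (fun x => hd x = some h),
            ∃ t, νof x.1 x.2 = h :: t := by
          intro x hx
          have hhx : (νof x.1 x.2).head? = some h := (Finset.mem_filter.mp hx).2
          obtain ⟨e, t, het⟩ := List.exists_cons_of_ne_nil (hally x)
          rw [het] at hhx ⊢
          simp only [List.head?_cons, Option.some.injEq] at hhx
          exact ⟨t, by rw [hhx]⟩
        set g := ∑ x ∈ S.filter (fun x => hd x = some h), c x.1 • (x.1 : LPAamb K s r) with hg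
        have hgid : g = (g * pe K s r h) * pg K s r h := by
          rw [Finset.sum_mul, Finset.sum_mul]
          apply Finset.sum_congr rfl
          intro x hx
          obtain ⟨t, ht⟩ := hshape x hx
          have hνx := hν x.1 x.2
          rw [ht] at hνx
          have h2 : mono K s r (μof x.1 x.2) (zof x.1 x.2) (νof x.1 x.2) * pe K s r h
              * pg K s r h = mono K s r (μof x.1 x.2) (zof x.1 x.2) (νof x.1 x.2) := by
            rw [ht, mono_cons_mul_pe K hνx, mono_mul_pg]
          rw [← hmeq x.1 x.2] at h2
          rw [smul_mul_assoc, smul_mul_assoc, h2]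
        have hgy : g * pe K s r h = y * pe K s r h := by
          conv_rhs => rw [← hsum, Finsupp.sum,
            ← Finset.sum_attach c.support (fun m => c m • m)]
          rw [Finset.sum_mul, Finset.sum_mul]
          apply Finset.sum_subset (Finset.filter_subset _ S)
          intro x hxS hxn
          have hne2 : hd x ≠ some h := by
            intro hh
            exact hxn (Finset.mem_filter.mpr ⟨hxS, hh⟩)
          obtain ⟨e, t, het⟩ := List.exists_cons_of_ne_nil (hally x)
          have heh : e ≠ h := by
            intro hh
            apply hne2
            show (νof x.1 x.2).head? = some h
            rw [het, hh]
            rfl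
          have h2 : mono K s r (μof x.1 x.2) (zof x.1 x.2) (νof x.1 x.2) * pe K s r h
              = 0 := by
            rw [het]; exact mono_cons_mul_pe' K heh
          rw [← hmeq x.1 x.2] at h2
          rw [smul_mul_assoc, h2, smul_zero]
        rw [hgid, hgy, hEx h hhu, zero_mul]

end Reduce

end LPX

namespace LPX
open Classical

section Graph
variable {V Ed : Type} {s r : Ed → V}

theorem IsPath.head_src {u w : V} {e : Ed} {l : List Ed} (h : IsPath s r u (e :: l) w) :
    s e = u := h.src_eq.symm

theorem chain'_of_isPath {u w : V} {l : List Ed} (h : IsPath s r u l w) :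
    l.Chain' (fun a b => r a = s b) := by
  induction l generalizing u with
  | nil => exact List.isChain_nil
  | cons e t ih =>
    rcases t with _ | ⟨f, t'⟩
    · exact List.isChain_singleton _
    · exact List.isChain_cons_cons.mpr ⟨h.tail.src_eq.symm ▸ rfl, ih h.tail⟩

theorem getLast_of_isPath {u w : V} {l : List Ed} (h : IsPath s r u l w) (hne : l ≠ []) :
    r (l.getLast hne) = w := by
  induction l generalizing u with
  | nil => exact absurd rfl hne
  | cons e t ih =>
    rcases t with _ | ⟨f, t'⟩
    · rw [List.getLast_singleton]
      exact h.tail.nil_eq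
    · rw [List.getLast_cons (by simp)]
      exact ih h.tail (by simp)

theorem head_of_isPath {u w : V} {l : List Ed} (h : IsPath s r u l w) (hne : l ≠ []) :
    s (l.head hne) = u := by
  rcases l with _ | ⟨e, t⟩
  · exact absurd rfl hne
  · exact h.src_eq.symm

theorem isPath_take {w w' : V} {δ : List Ed} (hδ : IsPath s r w δ w') {i : ℕ}
    (hi : i < δ.length) : IsPath s r w (δ.take i) (s δ[i]) := by
  have hsplit : δ.take i ++ δ.drop i = δ := List.take_append_drop i δ
  rw [← hsplit] at hδ
  obtain ⟨m, h1, h2⟩ := isPath_append.mp hδ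
  rw [List.drop_eq_getElem_cons hi] at h2
  rwa [← h2.src_eq]

theorem isPath_drop {w w' : V} {δ : List Ed} (hδ : IsPath s r w δ w') {i : ℕ}
    (hi : i < δ.length) : IsPath s r (s δ[i]) (δ.drop i) w' := by
  have hsplit : δ.take i ++ δ.drop i = δ := List.take_append_drop i δ
  rw [← hsplit] at hδ
  obtain ⟨m, h1, h2⟩ := isPath_append.mp hδ
  have hm : m = s δ[i] := by
    have h3 := h2
    rw [List.drop_eq_getElem_cons hi] at h3
    exact h3.src_eq
  rwa [hm] at h2

/-- cycle extraction : every nonempty closed path contains a cycle (as a set of edges) -/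
theorem cycle_extract : ∀ (n : ℕ) (δ : List Ed) (w : V), δ.length ≤ n → δ ≠ [] →
    IsPath s r w δ w → ∃ (σ : List Ed) (w₀ : V), IsCycle s r σ w₀ ∧ ∀ e ∈ σ, e ∈ δ := by
  intro n
  induction n with
  | zero =>
    intro δ w hlen hne _
    exact absurd (List.eq_nil_of_length_eq_zero (Nat.le_zero.mp hlen)) hne
  | succ n ihn =>
    intro δ w hlen hne hδ
    by_cases hnd : (δ.map s).Nodup
    · exact ⟨δ, w, ⟨⟨hne, chain'_of_isPath hδ, head_of_isPath hδ hne,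
        getLast_of_isPath hδ hne⟩, hnd⟩, fun e he => he⟩
    · rw [List.nodup_iff_getElem?_ne_getElem?] at hnd
      push_neg at hnd
      obtain ⟨i, j, hij, hj, hdup⟩ := hnd
      rw [List.length_map] at hj
      have hi : i < δ.length := lt_trans hij hj
      have hsij : s δ[i] = s δ[j] := by
        rw [List.getElem?_map, List.getElem?_map] at hdup
        rw [List.getElem?_eq_getElem hi, List.getElem?_eq_getElem hj] at hdup
        simpa using hdup
      set σ' := (δ.drop i).take (j - i) with hσ'
      have hlen' : σ'.length = j - i := by
        rw [hσ', List.length_take, List.length_drop]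
        omega
      have hne' : σ' ≠ [] := by
        intro hh
        rw [hh] at hlen'
        simp at hlen'
        omega
      have hpath' : IsPath s r (s δ[i]) σ' (s δ[i]) := by
        have h1 : IsPath s r (s δ[i]) (δ.drop i) w := isPath_drop hδ hi
        have hsplit : σ' ++ (δ.drop i).drop (j - i) = δ.drop i :=
          List.take_append_drop _ _
        have hdd : (δ.drop i).drop (j - i) = δ.drop j := by
          rw [List.drop_drop]
          congr 1
          omega
        rw [← hsplit] at h1
        obtain ⟨m, h2, h3⟩ := isPath_append.mp h1
        have hm : m = s δ[j] := by
          rw [hdd, List.drop_eq_getElem_cons hj] at h3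
          exact h3.src_eq
        rw [hm, ← hsij] at h2
        exact h2
      obtain ⟨σ, w₀, hc, hmem⟩ := ihn σ' (s δ[i]) (by omega) hne' hpath'
      refine ⟨σ, w₀, hc, fun e he => ?_⟩
      exact List.drop_subset i δ (List.take_subset _ _ (hmem e he))

/-- under Condition (L), from the base of any closed path there is a finite path
deviating from the infinite repetition of the closed path -/
theorem exists_deviation (hL : ConditionL s r) {w : V} {δ : List Ed} (hne : δ ≠ [])
    (hδ : IsPath s r w δ w) :
    ∃ (τ : List Ed) (w' : V), IsPath s r w τ w' ∧ τ ≠ [] ∧ ¬ τ <+: (δ ++ τ) := by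
  obtain ⟨σ, w₀, hc, hmem⟩ := cycle_extract δ.length δ w (le_refl _) hne hδ
  obtain ⟨g, e, heσ, hse, hge⟩ := hL σ w₀ hc
  have heδ : e ∈ δ := hmem e heσ
  obtain ⟨m, hm, hgete⟩ := List.mem_iff_getElem.mp heδ
  refine ⟨δ.take m ++ [g], r g, ?_, by simp, ?_⟩
  · have h1 : IsPath s r w (δ.take m) (s δ[m]) := isPath_take hδ hm
    have h2 : IsPath s r (s δ[m]) [g] (r g) := by
      rw [hgete, ← hse]
      exact IsPath.cons g (IsPath.nil (r g))
    exact h1.append h2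
  · intro hpre
    have hlen2 : (δ.take m ++ [g]).length = m + 1 := by
      simp [List.length_take, Nat.min_eq_left (le_of_lt hm)]
    have heq := List.prefix_iff_eq_take.mp hpre
    rw [hlen2, List.take_append_of_le_length (by omega : m + 1 ≤ δ.length)] at heq
    have htake : δ.take (m+1) = δ.take m ++ [δ[m]] := by
      rw [List.take_succ, List.getElem?_eq_getElem hm]
      rfl
    rw [htake] at heq
    have : g = δ[m] := by
      have := List.append_cancel_left heq
      simpa using this
    rw [hgete] at this
    exact hge this

end Graph

section Members
variable (K : Type) [Field K] {V Ed : Type} {s r : Ed → V}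

theorem pv_mem (v : V) : pv K s r v ∈ LeavittPathAlgebra K s r :=
  NonUnitalAlgebra.subset_adjoin K ⟨LPAGen.vert v, rfl⟩

theorem pe_mem (e : Ed) : pe K s r e ∈ LeavittPathAlgebra K s r :=
  NonUnitalAlgebra.subset_adjoin K ⟨LPAGen.edge e, rfl⟩

theorem pg_mem (e : Ed) : pg K s r e ∈ LeavittPathAlgebra K s r :=
  NonUnitalAlgebra.subset_adjoin K ⟨LPAGen.ghost e, rfl⟩

theorem pl_mem (l : List Ed) (w : V) : pl K s r l w ∈ LeavittPathAlgebra K s r := by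
  induction l with
  | nil => rw [pl_nil]; exact pv_mem K w
  | cons e t ih => rw [pl_cons]; exact mul_mem (pe_mem K e) ih

theorem gstar_mem (z : V) (l : List Ed) : gstar K s r z l ∈ LeavittPathAlgebra K s r := by
  induction l with
  | nil => rw [gstar_nil]; exact pv_mem K z
  | cons e t ih => rw [gstar_cons]; exact mul_mem ih (pg_mem K e)

end Members

section Phase3
variable (K : Type) [Field K] {V Ed : Type} {s r : Ed → V}

/-- Phase (iii b) : conjugation induction killing the closed-path terms. -/
theorem conjStep : ∀ (n : ℕ) {ι : Type} (F : Finset ι), F.card ≤ n → ∀ (w : V)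
    (c₁ : K), c₁ ≠ 0 → ∀ (δof : ι → List Ed) (co : ι → K),
    (∀ x ∈ F, δof x ≠ [] ∧ IsPath s r w (δof x) w) →
    ∀ (J : Set (LPAamb K s r)),
    (∀ g x, g ∈ LeavittPathAlgebra K s r → x ∈ J → g * x ∈ J) →
    (∀ g x, g ∈ LeavittPathAlgebra K s r → x ∈ J → x * g ∈ J) →
    ∀ b : LPAamb K s r, b ∈ J →
    b = c₁ • pv K s r w + ∑ x ∈ F, co x • pl K s r (δof x) w →
    ConditionL s r →
    ∃ w', pv K s r w' ∈ J := by
  intro n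
  induction n with
  | zero =>
    intro ι F hcard w c₁ hc₁ δof co hval J habsL habsR b hbJ hbform hL
    have hF : F = ∅ := Finset.card_eq_zero.mp (Nat.le_zero.mp hcard)
    subst hF
    rw [Finset.sum_empty, add_zero] at hbform
    have hkey : (c₁⁻¹ • pv K s r w) * b = pv K s r w := by
      rw [hbform, smul_mul_smul, inv_mul_cancel₀ hc₁, one_smul, pv_mul_pv, if_pos rfl]
    refine ⟨w, ?_⟩
    rw [← hkey]
    exact habsL _ b (SMulMemClass.smul_mem _ (pv_mem K w)) hbJ
  | succ n ihn =>
    intro ι F hcard w c₁ hc₁ δof co hval J habsL habsR b hbJ hbform hL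
    rcases Finset.eq_empty_or_nonempty F with hF | ⟨x₀, hx₀⟩
    · exact ihn F (by rw [hF]; simp) w c₁ hc₁ δof co hval J habsL habsR b hbJ hbform hL
    · obtain ⟨hδ0ne, hδ0path⟩ := hval x₀ hx₀
      obtain ⟨τ, w', hτpath, hτne, hτnp⟩ := exists_deviation hL hδ0ne hδ0path
      set F' := F.filter (fun x => τ <+: (δof x ++ τ)) with hF'
      set δof' := fun x => (δof x ++ τ).drop τ.length with hδof'
      have hsub : F' ⊆ F.erase x₀ := by
        intro x hx
        obtain ⟨hxF, hxp⟩ := Finset.mem_filter.mp hx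
        refine Finset.mem_erase.mpr ⟨?_, hxF⟩
        intro hh
        subst hh
        exact hτnp hxp
      have hcard' : F'.card ≤ n := by
        have h1 := Finset.card_le_card hsub
        rw [Finset.card_erase_of_mem hx₀] at h1
        omega
      have hdropval : ∀ x ∈ F', (δof x ++ τ).drop τ.length ≠ [] ∧
          IsPath s r w' ((δof x ++ τ).drop τ.length) w' := by
        intro x hx
        obtain ⟨hxF, hxp⟩ := Finset.mem_filter.mp hx
        obtain ⟨δ', hδ'⟩ := hxp
        have hδ'eq : (δof x ++ τ).drop τ.length = δ' := by
          rw [← hδ', List.drop_left]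
        obtain ⟨hxne, hxpath⟩ := hval x hxF
        have hfull : IsPath s r w (τ ++ δ') w' := by
          rw [hδ']
          exact hxpath.append hτpath
        obtain ⟨m, h1, h2⟩ := isPath_append.mp hfull
        have hm : m = w' := IsPath.rng_unique hτne h1 hτpath
        subst hm
        refine ⟨?_, hδ'eq ▸ h2⟩
        rw [hδ'eq]
        intro hh
        apply hxne
        rw [hh, List.append_nil] at hδ'
        have h3 : (δof x).length = 0 := by
          have h4 := congrArg List.length hδ'
          rw [List.length_append] at h4
          omega
        exact List.eq_nil_of_length_eq_zero h3
      have hval' : ∀ x ∈ F', δof' x ≠ [] ∧ IsPath s r w' (δof' x) w' := hdropval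
      have hbJ' : gstar K s r w' τ * b * pl K s r τ w' ∈ J :=
        habsR _ _ (pl_mem K τ w') (habsL _ _ (gstar_mem K w' τ) hbJ)
      have hgg : gstar K s r w' τ * pl K s r τ w' = pv K s r w' := by
        have h1 := gstar_mul_pl_append K hτpath (IsPath.nil w')
        rwa [List.append_nil, pl_nil] at h1
      have hform' : gstar K s r w' τ * b * pl K s r τ w'
          = c₁ • pv K s r w' + ∑ x ∈ F', co x • pl K s r (δof' x) w' := by
        rw [hbform, mul_add, add_mul]
        congr 1
        · rw [mul_smul_comm, smul_mul_assoc]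
          congr 1
          rw [gstar_mul_pv K hτpath, hgg]
        · rw [Finset.mul_sum, Finset.sum_mul]
          rw [Finset.sum_congr rfl (fun x hx => show
              gstar K s r w' τ * (co x • pl K s r (δof x) w) * pl K s r τ w'
              = co x • (gstar K s r w' τ * pl K s r (δof x ++ τ) w') from by
            rw [mul_smul_comm, smul_mul_assoc, mul_assoc,
              pl_mul_pl K (hval x hx).2 hτpath])]
          rw [← Finset.sum_filter_add_sum_filter_not F (fun x => τ <+: (δof x ++ τ))
            (fun x => co x • (gstar K s r w' τ * pl K s r (δof x ++ τ) w'))]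
          have hz : ∑ x ∈ F.filter (fun x => ¬ τ <+: (δof x ++ τ)),
              co x • (gstar K s r w' τ * pl K s r (δof x ++ τ) w') = 0 := by
            apply Finset.sum_eq_zero
            intro x hx
            obtain ⟨hxF, hxnp⟩ := Finset.mem_filter.mp hx
            obtain ⟨hxne, hxpath⟩ := hval x hxF
            have hnp2 : ¬ (δof x ++ τ) <+: τ := by
              intro hpre
              have h2 := hpre.length_le
              have h3 := List.length_pos_iff.mpr hxne
              rw [List.length_append] at h2
              omega
            rw [gstar_mul_pl_zero K hτpath (hxpath.append hτpath) hxnp hnp2, smul_zero]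
          rw [hz, add_zero]
          apply Finset.sum_congr rfl
          intro x hx
          congr 1
          obtain ⟨hxF, hxp⟩ := Finset.mem_filter.mp hx
          obtain ⟨δ', hδ'⟩ := hxp
          have hδ'eq : δof' x = δ' := by
            rw [hδof']
            dsimp only
            rw [← hδ', List.drop_left]
          obtain ⟨hxne, hxpath⟩ := hval x hxF
          have hfull : IsPath s r w (τ ++ δ') w' := by
            rw [hδ']
            exact hxpath.append hτpath
          obtain ⟨m, h1, h2⟩ := isPath_append.mp hfull
          have hm : m = w' := IsPath.rng_unique hτne h1 hτpath
          subst hm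
          rw [← hδ', gstar_mul_pl_append K hτpath h2, hδ'eq]
      exact ihn F' hcard' w' c₁ hc₁ δof' co hval' J habsL habsR _ hbJ' hform' hL

/-- Phase (iii) : from a nonzero real element of the ideal, produce a vertex in the ideal. -/
theorem phase3 (hL : ConditionL s r) (J : Set (LPAamb K s r))
    (habsL : ∀ g x, g ∈ LeavittPathAlgebra K s r → x ∈ J → g * x ∈ J)
    (habsR : ∀ g x, g ∈ LeavittPathAlgebra K s r → x ∈ J → x * g ∈ J)
    {w : V} {b : LPAamb K s r} (hb : b ∈ GspanTo K s r 0 w) (hb0 : b ≠ 0) (hbJ : b ∈ J) :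
    ∃ w', pv K s r w' ∈ J := by
  obtain ⟨c, hsupp, hsum⟩ := Submodule.mem_span_set.mp hb
  have hdata : ∀ m ∈ c.support, ∃ u₀ ρ, IsPath s r u₀ ρ w ∧ m = pl K s r ρ w := by
    intro m hm
    obtain ⟨u₀, μ, z, ν, hμ, hν, hlen, heq⟩ := hsupp hm
    have hν0 : ν = [] := List.eq_nil_of_length_eq_zero (Nat.le_zero.mp hlen)
    subst hν0
    have hz : w = z := hν.nil_eq
    subst hz
    exact ⟨u₀, μ, hμ, by rw [heq, mono_nil_eq_pl]⟩
  choose uof ρof hρ hmeq using hdata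
  have hsne : c.support.Nonempty := by
    rw [Finset.nonempty_iff_ne_empty]
    intro hh
    apply hb0
    rw [← hsum, Finsupp.sum, hh, Finset.sum_empty]
  obtain ⟨x₁, hx₁S, hx₁min⟩ := Finset.exists_min_image c.support.attach
    (fun x => (ρof x.1 x.2).length) (hsne.attach)
  have hgpv : gstar K s r w (ρof x₁.1 x₁.2) * pl K s r (ρof x₁.1 x₁.2) w = pv K s r w := by
    have h1 := gstar_mul_pl_append K (hρ x₁.1 x₁.2) (IsPath.nil w)
    rwa [List.append_nil, pl_nil] at h1
  have hdistinct : ∀ x : {m // m ∈ c.support}, ρof x.1 x.2 = ρof x₁.1 x₁.2 → x = x₁ := by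
    intro x hx
    apply Subtype.ext
    rw [hmeq x.1 x.2, hmeq x₁.1 x₁.2, hx]
  set F := c.support.attach.filter (fun x => x ≠ x₁ ∧
    ρof x₁.1 x₁.2 <+: ρof x.1 x.2 ∧
    IsPath s r w ((ρof x.1 x.2).drop (ρof x₁.1 x₁.2).length) w) with hFdef
  have hform : gstar K s r w (ρof x₁.1 x₁.2) * b = c x₁.1 • pv K s r w +
      ∑ x ∈ F, c x.1 • pl K s r ((ρof x.1 x.2).drop (ρof x₁.1 x₁.2).length) w := by
    conv_lhs => rw [← hsum, Finsupp.sum, ← Finset.sum_attach c.support (fun m => c m • m)]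
    rw [Finset.mul_sum]
    rw [← Finset.add_sum_erase _ _ hx₁S]
    congr 1
    · rw [mul_smul_comm]
      rw [← hmeq x₁.1 x₁.2] at hgpv
      rw [hgpv]
    · have hFsub : F ⊆ c.support.attach.erase x₁ := by
        intro x hx
        obtain ⟨hxS, hxne, _, _⟩ := Finset.mem_filter.mp hx
        exact Finset.mem_erase.mpr ⟨hxne, hxS⟩
      have hvan : ∀ x ∈ c.support.attach.erase x₁, x ∉ F →
          gstar K s r w (ρof x₁.1 x₁.2) * (c x.1 • (x.1 : LPAamb K s r)) = 0 := by
        intro x hxer hxnF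
        have hxS : x ∈ c.support.attach := Finset.mem_of_mem_erase hxer
        have hxne : x ≠ x₁ := (Finset.mem_erase.mp hxer).1
        rw [hFdef, Finset.mem_filter] at hxnF
        push_neg at hxnF
        have hcases := hxnF hxS hxne
        rw [mul_smul_comm]
        by_cases hpre : ρof x₁.1 x₁.2 <+: ρof x.1 x.2
        · have hnpath := hcases hpre
          by_cases hpnil : ρof x₁.1 x₁.2 = []
          · have hwne : w ≠ uof x.1 x.2 := by
              intro hh
              apply hnpath
              rw [hpnil]
              simp only [List.length_nil, List.drop_zero]
              have h5 := hρ x.1 x.2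
              rwa [← hh] at h5
            have h2 : gstar K s r w (ρof x₁.1 x₁.2) * pl K s r (ρof x.1 x.2) w = 0 := by
              rw [hpnil, gstar_nil]
              exact pv_mul_pl' K (hρ x.1 x.2) hwne
            rw [← hmeq x.1 x.2] at h2
            rw [h2, smul_zero]
          · exfalso
            obtain ⟨δ', hδ'⟩ := hpre
            have hδ'eq : (ρof x.1 x.2).drop (ρof x₁.1 x₁.2).length = δ' := by
              rw [← hδ', List.drop_left]
            have hfull := hρ x.1 x.2
            rw [← hδ'] at hfull
            obtain ⟨m, h1, h2⟩ := isPath_append.mp hfull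
            have hm : m = w := IsPath.rng_unique hpnil h1 (hρ x₁.1 x₁.2)
            subst hm
            apply hnpath
            rw [hδ'eq]
            exact h2
        · have hnpre2 : ¬ ρof x.1 x.2 <+: ρof x₁.1 x₁.2 := by
            intro hh
            have h1 := hh.length_le
            have h2 := hx₁min x hxS
            have h3 := hh.eq_of_length (le_antisymm h1 h2)
            exact hxne (hdistinct x h3)
          have h2 : gstar K s r w (ρof x₁.1 x₁.2) * pl K s r (ρof x.1 x.2) w = 0 :=
            gstar_mul_pl_zero K (hρ x₁.1 x₁.2) (hρ x.1 x.2) hpre hnpre2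
          rw [← hmeq x.1 x.2] at h2
          rw [h2, smul_zero]
      rw [← Finset.sum_subset hFsub hvan]
      apply Finset.sum_congr rfl
      intro x hx
      obtain ⟨hxS, hxne, hxpre, hxpath⟩ := Finset.mem_filter.mp hx
      obtain ⟨δ', hδ'⟩ := hxpre
      have hδ'eq : (ρof x.1 x.2).drop (ρof x₁.1 x₁.2).length = δ' := by
        rw [← hδ', List.drop_left]
      rw [mul_smul_comm]
      have h2 : gstar K s r w (ρof x₁.1 x₁.2) * pl K s r (ρof x.1 x.2) w
          = pl K s r δ' w := by
        rw [← hδ']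
        exact gstar_mul_pl_append K (hρ x₁.1 x₁.2) (hδ'eq ▸ hxpath)
      rw [← hmeq x.1 x.2] at h2
      rw [h2, hδ'eq]
  have hc₁ : c x₁.1 ≠ 0 := Finsupp.mem_support_iff.mp x₁.2
  have hbJ' : gstar K s r w (ρof x₁.1 x₁.2) * b ∈ J :=
    habsL _ _ (gstar_mem K w _) hbJ
  have hval : ∀ x ∈ F, (ρof x.1 x.2).drop (ρof x₁.1 x₁.2).length ≠ [] ∧
      IsPath s r w ((ρof x.1 x.2).drop (ρof x₁.1 x₁.2).length) w := by
    intro x hx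
    obtain ⟨hxS, hxne, hxpre, hxpath⟩ := Finset.mem_filter.mp hx
    refine ⟨?_, hxpath⟩
    intro hh
    have h1 : (ρof x.1 x.2).length ≤ (ρof x₁.1 x₁.2).length := by
      have h2 := congrArg List.length hh
      rw [List.length_drop] at h2
      simp at h2
      omega
    have h3 : (ρof x₁.1 x₁.2).length = (ρof x.1 x.2).length :=
      le_antisymm (hx₁min x hxS) h1
    have h4 := hxpre.eq_of_length h3
    exact hxne (hdistinct x h4.symm)
  exact conjStep K F.card F (le_refl _) w (c x₁.1) hc₁ _ _ hval J habsL habsR _ hbJ' hform hL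

end Phase3

end LPX

/-- If `E` satisfies Condition (L), then every nonzero two-sided ideal of `L_K(E)`
contains a vertex. -/
theorem nonzero_ideal_contains_vertex
    {V Ed : Type} [Countable V] [Countable Ed] (s r : Ed → V) (K : Type) [Field K]
    (hL : ConditionL s r)
    (I : AddSubgroup ↥(LeavittPathAlgebra K s r)) (hI : IsTwoSidedIdealSG I)
    (hne : I ≠ ⊥) :
    ∃ v : V, LPA.vertex K s r v ∈ I := by
  classical
  obtain ⟨a, ha0⟩ := AddSubgroup.ne_bot_iff_exists_ne_zero.mp hne
  have hxI : (a : ↥(LeavittPathAlgebra K s r)) ∈ I := a.2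
  have hx0 : (a : ↥(LeavittPathAlgebra K s r)) ≠ 0 := by
    intro hh
    exact ha0 (Subtype.ext hh)
  set J : Set (LPAamb K s r) :=
    (fun y : ↥(LeavittPathAlgebra K s r) => (y : LPAamb K s r)) '' (I : Set _) with hJ
  have habsL : ∀ g y, g ∈ LeavittPathAlgebra K s r → y ∈ J → g * y ∈ J := by
    rintro g y hg ⟨y₀, hy₀I, rfl⟩
    exact ⟨⟨g, hg⟩ * y₀, (hI ⟨g, hg⟩ y₀ hy₀I).1, rfl⟩
  have habsR : ∀ g y, g ∈ LeavittPathAlgebra K s r → y ∈ J → y * g ∈ J := by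
    rintro g y hg ⟨y₀, hy₀I, rfl⟩
    exact ⟨y₀ * ⟨g, hg⟩, (hI ⟨g, hg⟩ y₀ hy₀I).2, rfl⟩
  have hy0 : ((a : ↥(LeavittPathAlgebra K s r)) : LPAamb K s r) ≠ 0 :=
    fun hh => hx0 (Subtype.ext hh)
  have hyM : ((a : ↥(LeavittPathAlgebra K s r)) : LPAamb K s r) ∈ LPX.Mspan K s r :=
    LPX.lpa_le_mspan K _ (a : ↥(LeavittPathAlgebra K s r)).2
  obtain ⟨d, hd⟩ := LPX.mspan_bounded K hyM
  obtain ⟨w, hw⟩ := LPX.exists_pv_ne_zero K hd hy0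
  have hy1mem : ((a : ↥(LeavittPathAlgebra K s r)) : LPAamb K s r) * LPX.pv K s r w
      ∈ LPX.GspanTo K s r d w := LPX.mulPv_mem K hd
  have hy1J : ((a : ↥(LeavittPathAlgebra K s r)) : LPAamb K s r) * LPX.pv K s r w ∈ J :=
    habsR _ _ (LPX.pv_mem K w) ⟨(a : ↥(LeavittPathAlgebra K s r)), hxI, rfl⟩
  obtain ⟨l, w₂, hlw, hne2, hmem2⟩ := LPX.reduceGhost K d w _ hy1mem hw
  have hy2J : ((a : ↥(LeavittPathAlgebra K s r)) : LPAamb K s r) * LPX.pv K s r w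
      * LPX.pl K s r l w₂ ∈ J := habsR _ _ (LPX.pl_mem K l w₂) hy1J
  obtain ⟨w', hw'⟩ := LPX.phase3 K hL J habsL habsR hmem2 hne2 hy2J
  obtain ⟨yI, hyI, hyeq⟩ := hw'
  refine ⟨w', ?_⟩
  have hvert : LPA.vertex K s r w' = yI := Subtype.ext hyeq.symm
  rw [hvert]
  exact hyI

end
end

section
/- Let E be an arbitrary (countable) graph and K a field. Then L_K(E) is semiprime: it has no nonzero two-sided ideal I with I² = 0. -/
set_option synthInstance.maxHeartbeats 1000000
set_option maxHeartbeats 1000000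

noncomputable section

variable (K : Type) [Field K] {V Ed : Type} (s r : Ed → V)

/-! ## Auxiliary development for the semiprimeness proof -/
open scoped Classical

namespace LPASemiprime

variable {K : Type} [Field K] {V Ed : Type} {s r : Ed → V}

section Relations

variable (K s r)

/-- Short notation for the generators in the ambient algebra. -/
def vA (v : V) : LPAamb K s r := lpaGen K s r (LPAGen.vert v)
def eA (e : Ed) : LPAamb K s r := lpaGen K s r (LPAGen.edge e)
def gA (e : Ed) : LPAamb K s r := lpaGen K s r (LPAGen.ghost e)

variable {K s r}

lemma vA_mem (v : V) : vA K s r v ∈ LeavittPathAlgebra K s r :=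
  NonUnitalAlgebra.subset_adjoin K ⟨_, rfl⟩
lemma eA_mem (e : Ed) : eA K s r e ∈ LeavittPathAlgebra K s r :=
  NonUnitalAlgebra.subset_adjoin K ⟨_, rfl⟩
lemma gA_mem (e : Ed) : gA K s r e ∈ LeavittPathAlgebra K s r :=
  NonUnitalAlgebra.subset_adjoin K ⟨_, rfl⟩

open RingQuot in
lemma rel_conseq {x y : FreeAlgebra K (LPAGen V Ed)} (h : LPARel K s r x y) :
    mkAlgHom K (LPARel K s r) x = mkAlgHom K (LPARel K s r) y :=
  RingQuot.mkAlgHom_rel K h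

lemma vv (u v : V) : vA K s r u * vA K s r v = if u = v then vA K s r u else 0 := by
  have h := rel_conseq (LPARel.vert_mul (K := K) (s := s) (r := r) u v)
  rw [map_mul, apply_ite (RingQuot.mkAlgHom K (LPARel K s r)), map_zero] at h
  exact h

lemma sve (e : Ed) : vA K s r (s e) * eA K s r e = eA K s r e := by
  have h := rel_conseq (LPARel.src_mul_edge (K := K) (s := s) (r := r) e)
  rw [map_mul] at h; exact h

lemma evr (e : Ed) : eA K s r e * vA K s r (r e) = eA K s r e := by
  have h := rel_conseq (LPARel.edge_mul_rng (K := K) (s := s) (r := r) e)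
  rw [map_mul] at h; exact h

lemma rvg (e : Ed) : vA K s r (r e) * gA K s r e = gA K s r e := by
  have h := rel_conseq (LPARel.rng_mul_ghost (K := K) (s := s) (r := r) e)
  rw [map_mul] at h; exact h

lemma gvs (e : Ed) : gA K s r e * vA K s r (s e) = gA K s r e := by
  have h := rel_conseq (LPARel.ghost_mul_src (K := K) (s := s) (r := r) e)
  rw [map_mul] at h; exact h

lemma ge (e f : Ed) : gA K s r e * eA K s r f =
    if e = f then vA K s r (r e) else 0 := by
  have h := rel_conseq (LPARel.ghost_mul_edge (K := K) (s := s) (r := r) e f)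
  rw [map_mul, apply_ite (RingQuot.mkAlgHom K (LPARel K s r)), map_zero] at h
  exact h

lemma ck2 (v : V) (h : {e : Ed | s e = v}.Finite) (hne : {e : Ed | s e = v}.Nonempty) :
    ∑ e ∈ h.toFinset, eA K s r e * gA K s r e = vA K s r v := by
  have h2 := rel_conseq (LPARel.ck2 (K := K) (s := s) (r := r) v h hne)
  rw [map_sum] at h2
  simp only [map_mul] at h2; exact h2

/-- Derived relations. -/
lemma ve (u : V) (e : Ed) : vA K s r u * eA K s r e =
    if u = s e then eA K s r e else 0 := by
  by_cases h : u = s e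
  · subst h; rw [if_pos rfl, sve]
  · rw [if_neg h, ← sve e, ← mul_assoc, vv, if_neg h, zero_mul]

lemma ev (e : Ed) (u : V) : eA K s r e * vA K s r u =
    if u = r e then eA K s r e else 0 := by
  by_cases h : u = r e
  · subst h; rw [if_pos rfl, evr]
  · rw [if_neg h, ← evr e, mul_assoc, vv, if_neg (fun hh => h hh.symm), mul_zero]

lemma vg (u : V) (e : Ed) : vA K s r u * gA K s r e =
    if u = r e then gA K s r e else 0 := by
  by_cases h : u = r e
  · subst h; rw [if_pos rfl, rvg]
  · rw [if_neg h, ← rvg e, ← mul_assoc, vv, if_neg h, zero_mul]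

lemma gv (e : Ed) (u : V) : gA K s r e * vA K s r u =
    if u = s e then gA K s r e else 0 := by
  by_cases h : u = s e
  · subst h; rw [if_pos rfl, gvs]
  · rw [if_neg h, ← gvs e, mul_assoc, vv, if_neg (fun hh => h hh.symm), mul_zero]

end Relations

section Monomials

variable (K s r)

/-- Product of (real) edges in the ambient algebra. -/
def Pprod (α : List Ed) : LPAamb K s r := (α.map (eA K s r)).prod
/-- Product of ghost edges, in reverse order. -/
def Gprod (β : List Ed) : LPAamb K s r := (β.reverse.map (gA K s r)).prod
/-- A monomial `α · v · β*`. -/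
def Mon (α : List Ed) (v : V) (β : List Ed) : LPAamb K s r :=
  Pprod K s r α * vA K s r v * Gprod K s r β

variable {K s r}

lemma Pprod_nil : Pprod K s r ([] : List Ed) = 1 := rfl
lemma Pprod_cons (e : Ed) (α : List Ed) :
    Pprod K s r (e :: α) = eA K s r e * Pprod K s r α := by
  simp [Pprod]
lemma Gprod_nil : Gprod K s r ([] : List Ed) = 1 := rfl
lemma Gprod_cons (e : Ed) (β : List Ed) :
    Gprod K s r (e :: β) = Gprod K s r β * gA K s r e := by
  simp [Gprod]
lemma Gprod_concat (g : Ed) (β : List Ed) :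
    Gprod K s r (β ++ [g]) = gA K s r g * Gprod K s r β := by
  simp [Gprod]

lemma Mon_nil_left (v : V) (β : List Ed) :
    Mon K s r [] v β = vA K s r v * Gprod K s r β := by
  simp [Mon, Pprod_nil]
lemma Mon_nil_nil (v : V) : Mon K s r [] v [] = vA K s r v := by
  simp [Mon_nil_left, Gprod_nil]
lemma Mon_cons_left (e : Ed) (α : List Ed) (v : V) (β : List Ed) :
    Mon K s r (e :: α) v β = eA K s r e * Mon K s r α v β := by
  simp [Mon, Pprod_cons, mul_assoc]
lemma Mon_cons_right (e : Ed) (α : List Ed) (v : V) (β : List Ed) :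
    Mon K s r α v (e :: β) = Mon K s r α v β * gA K s r e := by
  simp [Mon, Gprod_cons, mul_assoc]
lemma Mon_nil_right (α : List Ed) (v : V) :
    Mon K s r α v [] = Pprod K s r α * vA K s r v := by
  simp [Mon, Gprod_nil]

/-- The source vertex of a monomial's left path. -/
def srcM (s : Ed → V) (α : List Ed) (v : V) : V := match α with
  | [] => v
  | e :: _ => s e

/-- `Mon α v β` is a valid monomial: `α` and `β` are paths ending at `v`. -/
structure GoodM (s r : Ed → V) (α : List Ed) (v : V) (β : List Ed) : Prop where
  pa : α.Chain' fun e f => r e = s f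
  pb : β.Chain' fun e f => r e = s f
  la : ∀ h : α ≠ [], r (α.getLast h) = v
  lb : ∀ h : β ≠ [], r (β.getLast h) = v

lemma GoodM.nil_nil (v : V) : GoodM s r [] v [] :=
  ⟨List.isChain_nil, List.isChain_nil, by simp, by simp⟩

lemma GoodM.single (e : Ed) : GoodM s r [e] (r e) [] :=
  ⟨List.isChain_singleton e, List.isChain_nil, by simp, by simp⟩

lemma GoodM.single' (e : Ed) : GoodM s r [] (r e) [e] :=
  ⟨List.isChain_nil, List.isChain_singleton e, by simp, by simp⟩

lemma GoodM.tailL {e : Ed} {α : List Ed} {v : V} {β : List Ed}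
    (h : GoodM s r (e :: α) v β) : GoodM s r α v β := by
  refine ⟨h.pa.tail, h.pb, fun hn => ?_, h.lb⟩
  have := h.la (by simp)
  rwa [List.getLast_cons hn] at this

lemma GoodM.tailR {e : Ed} {α : List Ed} {v : V} {β : List Ed}
    (h : GoodM s r α v (e :: β)) : GoodM s r α v β := by
  refine ⟨h.pa, h.pb.tail, h.la, fun hn => ?_⟩
  have := h.lb (by simp)
  rwa [List.getLast_cons hn] at this

lemma GoodM.headL {e : Ed} {α : List Ed} {v : V} {β : List Ed}
    (h : GoodM s r (e :: α) v β) : r e = srcM s α v := by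
  cases α with
  | nil => exact h.la (by simp)
  | cons f α' => exact (List.isChain_cons_cons.1 h.pa).1

lemma GoodM.headR {e : Ed} {α : List Ed} {v : V} {β : List Ed}
    (h : GoodM s r α v (e :: β)) : r e = srcM s β v := by
  cases β with
  | nil => exact h.lb (by simp)
  | cons f β' => exact (List.isChain_cons_cons.1 h.pb).1

lemma GoodM.consL {g : Ed} {α : List Ed} {v : V} {β : List Ed}
    (h : GoodM s r α v β) (hc : r g = srcM s α v) : GoodM s r (g :: α) v β := by
  refine ⟨List.isChain_cons.2 ⟨?_, h.pa⟩, h.pb, fun _ => ?_, h.lb⟩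
  · intro y hy
    cases α with
    | nil => simp at hy
    | cons f α' => simp at hy; subst hy; exact hc
  · cases α with
    | nil => simpa [srcM] using hc
    | cons f α' =>
      rw [List.getLast_cons (by simp)]
      exact h.la (by simp)

lemma GoodM.consR {g : Ed} {α : List Ed} {v : V} {β : List Ed}
    (h : GoodM s r α v β) (hc : r g = srcM s β v) : GoodM s r α v (g :: β) := by
  refine ⟨h.pa, List.isChain_cons.2 ⟨?_, h.pb⟩, h.la, fun _ => ?_⟩
  · intro y hy
    cases β with
    | nil => simp at hy
    | cons f β' => simp at hy; subst hy; exact hc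
  · cases β with
    | nil => simpa [srcM] using hc
    | cons f β' =>
      rw [List.getLast_cons (by simp)]
      exact h.lb (by simp)

lemma GoodM.concatR {g : Ed} {v : V} {β : List Ed}
    (h : GoodM s r [] v β) (hc : s g = v) : GoodM s r [] (r g) (β ++ [g]) := by
  refine ⟨List.isChain_nil, ?_, by simp, fun _ => by simp [List.getLast_append]⟩
  refine List.isChain_append.2 ?_
  refine ⟨h.pb, List.isChain_singleton g, ?_⟩
  intro x hx y hy
  simp at hy; subst hy
  cases β with
  | nil => simp at hx
  | cons f β' =>
    rw [List.getLast?_eq_getLast (by simp)] at hx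
    simp only [Option.mem_def, Option.some_inj] at hx
    subst hx
    rw [h.lb (by simp), hc]


lemma Mon_edge (e : Ed) : Mon K s r [e] (r e) [] = eA K s r e := by
  simp [Mon, Pprod, Gprod, evr]

lemma Mon_ghost (e : Ed) : Mon K s r [] (r e) [e] = gA K s r e := by
  simp [Mon, Pprod, Gprod, rvg]

/-! ### One-sided multiplication rules -/

lemma vA_mul_Mon (u : V) (α : List Ed) (v : V) (β : List Ed) :
    vA K s r u * Mon K s r α v β =
      if u = srcM s α v then Mon K s r α v β else 0 := by
  cases α with
  | nil =>
    rw [Mon_nil_left, ← mul_assoc, vv, srcM]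
    split_ifs with h
    · rw [h]
    · rw [zero_mul]
  | cons e α' =>
    rw [Mon_cons_left, ← mul_assoc, ve, srcM]
    split_ifs with h
    · rfl
    · rw [zero_mul]

lemma Mon_mul_vA (α : List Ed) (v : V) (β : List Ed) (u : V) :
    Mon K s r α v β * vA K s r u =
      if u = srcM s β v then Mon K s r α v β else 0 := by
  cases β with
  | nil =>
    by_cases h : u = v
    · subst h; simp [Mon_nil_right, mul_assoc, vv, srcM]
    · rw [Mon_nil_right, mul_assoc, vv, if_neg (fun hh => h hh.symm), mul_zero,
        if_neg (by simpa [srcM] using h)]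
  | cons e β' =>
    rw [Mon_cons_right, mul_assoc, gv, srcM]
    split_ifs with h
    · rfl
    · rw [mul_zero]

lemma eA_mul_Mon (g : Ed) (α : List Ed) (v : V) (β : List Ed) :
    eA K s r g * Mon K s r α v β =
      if r g = srcM s α v then Mon K s r (g :: α) v β else 0 := by
  rw [Mon_cons_left]
  split_ifs with h
  · rfl
  · cases α with
    | nil =>
      rw [Mon_nil_left, ← mul_assoc, ev, if_neg (by simpa [srcM, eq_comm] using h),
        zero_mul]
    | cons e α' =>
      rw [Mon_cons_left, ← mul_assoc, ← evr g, mul_assoc _ _ (eA K s r e), ve,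
        if_neg (by simpa [srcM] using h), mul_zero, zero_mul]

lemma Mon_mul_gA (α : List Ed) (v : V) (β : List Ed) (g : Ed) :
    Mon K s r α v β * gA K s r g =
      if r g = srcM s β v then Mon K s r α v (g :: β) else 0 := by
  rw [Mon_cons_right]
  split_ifs with h
  · rfl
  · cases β with
    | nil =>
      rw [Mon_nil_right, mul_assoc, vg, if_neg (by simpa [srcM, eq_comm] using h),
        mul_zero]
    | cons e β' =>
      rw [Mon_cons_right, mul_assoc, ← rvg g, ← mul_assoc (gA K s r e), gv,
        if_neg (by simpa [srcM] using h), zero_mul, mul_zero]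

lemma gA_mul_Mon_nil (g : Ed) (v : V) (β : List Ed) :
    gA K s r g * Mon K s r [] v β =
      if s g = v then Mon K s r [] (r g) (β ++ [g]) else 0 := by
  by_cases h : s g = v
  · rw [Mon_nil_left, ← mul_assoc, gv, if_pos h.symm, if_pos h, Mon_nil_left,
      Gprod_concat, ← mul_assoc, rvg]
  · rw [Mon_nil_left, ← mul_assoc, gv, if_neg (fun hh => h hh.symm), if_neg h, zero_mul]

lemma gA_mul_Mon_cons (g e : Ed) (α : List Ed) (v : V) (β : List Ed)
    (hg : GoodM s r (e :: α) v β) :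
    gA K s r g * Mon K s r (e :: α) v β =
      if g = e then Mon K s r α v β else 0 := by
  rw [Mon_cons_left, ← mul_assoc, ge]
  split_ifs with h
  · subst h; rw [vA_mul_Mon, if_pos hg.headL]
  · rw [zero_mul]

lemma Mon_mul_eA_nil (α : List Ed) (v : V) (f : Ed) :
    Mon K s r α v [] * eA K s r f =
      if v = s f then Mon K s r (α ++ [f]) (r f) [] else 0 := by
  by_cases h : v = s f
  · rw [Mon_nil_right, mul_assoc, ve, if_pos h, if_pos h, Mon_nil_right]
    simp only [Pprod, List.map_append, List.prod_append, List.map_cons, List.map_nil,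
      List.prod_cons, List.prod_nil, mul_one, mul_assoc, evr]
  · rw [Mon_nil_right, mul_assoc, ve, if_neg h, mul_zero, if_neg h]

lemma Mon_mul_eA_cons (α : List Ed) (v : V) (e : Ed) (β : List Ed) (f : Ed)
    (hg : GoodM s r α v (e :: β)) :
    Mon K s r α v (e :: β) * eA K s r f =
      if e = f then Mon K s r α v β else 0 := by
  rw [Mon_cons_right, mul_assoc, ge]
  split_ifs with h
  · rw [Mon_mul_vA, if_pos hg.headR]
  · rw [mul_zero]

/-! ### Membership in the Leavitt path algebra -/

lemma Pprod_mul_mem {x : LPAamb K s r} (α : List Ed)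
    (hx : x ∈ LeavittPathAlgebra K s r) :
    Pprod K s r α * x ∈ LeavittPathAlgebra K s r := by
  induction α with
  | nil => simpa [Pprod_nil] using hx
  | cons e α' ih =>
    rw [Pprod_cons, mul_assoc]
    exact mul_mem (eA_mem e) ih

lemma mul_Gprod_mem {x : LPAamb K s r} (β : List Ed)
    (hx : x ∈ LeavittPathAlgebra K s r) :
    x * Gprod K s r β ∈ LeavittPathAlgebra K s r := by
  induction β with
  | nil => simpa [Gprod_nil] using hx
  | cons e β' ih =>
    rw [Gprod_cons, ← mul_assoc]
    exact mul_mem ih (gA_mem e)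

lemma Mon_mem (α : List Ed) (v : V) (β : List Ed) :
    Mon K s r α v β ∈ LeavittPathAlgebra K s r := by
  rw [Mon, mul_assoc]
  exact Pprod_mul_mem α (mul_Gprod_mem β (vA_mem v))

end Monomials
section Spans

variable (K s r)

/-- Data for a monomial: left path, middle vertex, right (ghost) path. -/
def monOf (p : List Ed × V × List Ed) : LPAamb K s r := Mon K s r p.1 p.2.1 p.2.2

def SAll : Set (List Ed × V × List Ed) := {p | GoodM s r p.1 p.2.1 p.2.2}
def SD (n : ℤ) : Set (List Ed × V × List Ed) :=
  {p | p ∈ SAll s r ∧ (p.1.length : ℤ) - p.2.2.length = n}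
def SB (N : ℕ) : Set (List Ed × V × List Ed) :=
  {p | p ∈ SD s r 0 ∧ p.1.length ≤ N}

/-- The span of all monomials. -/
def spanMono : Submodule K (LPAamb K s r) :=
  Submodule.span K (monOf K s r '' SAll s r)
/-- The span of monomials of degree `n`. -/
def spanD (n : ℤ) : Submodule K (LPAamb K s r) :=
  Submodule.span K (monOf K s r '' SD s r n)
/-- The span of balanced monomials of length at most `N`. -/
def spanB (N : ℕ) : Submodule K (LPAamb K s r) :=
  Submodule.span K (monOf K s r '' SB s r N)

variable {K s r}

lemma spanD_le_spanMono (n : ℤ) : spanD K s r n ≤ spanMono K s r :=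
  Submodule.span_mono (Set.image_mono fun _ hp => hp.1)

lemma spanB_le_spanD (N : ℕ) : spanB K s r N ≤ spanD K s r 0 :=
  Submodule.span_mono (Set.image_mono fun _ hp => hp.1)

lemma spanMono_le_L :
    spanMono K s r ≤ NonUnitalSubalgebra.toSubmodule (LeavittPathAlgebra K s r) := by
  rw [spanMono, Submodule.span_le]
  rintro x ⟨p, hp, rfl⟩
  exact Mon_mem p.1 p.2.1 p.2.2

lemma mem_L_of_spanMono {x : LPAamb K s r} (hx : x ∈ spanMono K s r) :
    x ∈ LeavittPathAlgebra K s r := spanMono_le_L hx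

lemma mem_L_of_spanD {n : ℤ} {x : LPAamb K s r} (hx : x ∈ spanD K s r n) :
    x ∈ LeavittPathAlgebra K s r := mem_L_of_spanMono (spanD_le_spanMono n hx)

lemma mon_mem_spanMono {α : List Ed} {v : V} {β : List Ed} (hg : GoodM s r α v β) :
    Mon K s r α v β ∈ spanMono K s r :=
  Submodule.subset_span ⟨(α, v, β), hg, rfl⟩

lemma gen_mul_spanMono (g : LPAGen V Ed) {y : LPAamb K s r}
    (hy : y ∈ spanMono K s r) : lpaGen K s r g * y ∈ spanMono K s r := by
  induction hy using Submodule.span_induction with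
  | zero => rw [mul_zero]; exact zero_mem _
  | add x y _ _ ihx ihy => rw [mul_add]; exact add_mem ihx ihy
  | smul a x _ ih => rw [mul_smul_comm]; exact Submodule.smul_mem _ a ih
  | mem x hx =>
    obtain ⟨⟨α, v, β⟩, hg, rfl⟩ := hx
    show lpaGen K s r g * Mon K s r α v β ∈ _
    cases g with
    | vert u =>
      rw [show lpaGen K s r (LPAGen.vert u) = vA K s r u from rfl, vA_mul_Mon]
      split_ifs
      · exact mon_mem_spanMono hg
      · exact zero_mem _
    | edge e =>
      rw [show lpaGen K s r (LPAGen.edge e) = eA K s r e from rfl, eA_mul_Mon]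
      split_ifs with h
      · exact mon_mem_spanMono (hg.consL h)
      · exact zero_mem _
    | ghost e =>
      rw [show lpaGen K s r (LPAGen.ghost e) = gA K s r e from rfl]
      cases α with
      | nil =>
        rw [gA_mul_Mon_nil]
        split_ifs with h
        · exact mon_mem_spanMono (hg.concatR h)
        · exact zero_mem _
      | cons a α' =>
        rw [gA_mul_Mon_cons e a α' v β hg]
        split_ifs with h
        · exact mon_mem_spanMono hg.tailL
        · exact zero_mem _

lemma L_subset_spanMono {x : LPAamb K s r} (hx : x ∈ LeavittPathAlgebra K s r) :
    x ∈ spanMono K s r := by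
  have main : x ∈ spanMono K s r ∧
      ∀ y ∈ spanMono K s r, x * y ∈ spanMono K s r := by
    induction hx using NonUnitalAlgebra.adjoin_induction with
    | mem x hx =>
      obtain ⟨g, rfl⟩ := hx
      refine ⟨?_, fun y hy => gen_mul_spanMono g hy⟩
      cases g with
      | vert u =>
        rw [show lpaGen K s r (LPAGen.vert u) = vA K s r u from rfl, ← Mon_nil_nil]
        exact mon_mem_spanMono (GoodM.nil_nil u)
      | edge e =>
        rw [show lpaGen K s r (LPAGen.edge e) = eA K s r e from rfl, ← Mon_edge]
        exact mon_mem_spanMono (GoodM.single e)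
      | ghost e =>
        rw [show lpaGen K s r (LPAGen.ghost e) = gA K s r e from rfl, ← Mon_ghost]
        exact mon_mem_spanMono (GoodM.single' e)
    | add x y _ _ ihx ihy =>
      exact ⟨add_mem ihx.1 ihy.1, fun z hz => by
        rw [add_mul]; exact add_mem (ihx.2 z hz) (ihy.2 z hz)⟩
    | zero => exact ⟨zero_mem _, fun z _ => by rw [zero_mul]; exact zero_mem _⟩
    | mul x y _ _ ihx ihy =>
      exact ⟨ihx.2 y ihy.1, fun z hz => by
        rw [mul_assoc]; exact ihx.2 _ (ihy.2 z hz)⟩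
    | smul a x _ ih =>
      exact ⟨Submodule.smul_mem _ a ih.1, fun z hz => by
        rw [smul_mul_assoc]; exact Submodule.smul_mem _ a (ih.2 z hz)⟩
  exact main.1

end Spans

section Grading

variable (K s r)

/-- Degree of a generator. -/
def dgr : LPAGen V Ed → ℤ
  | .vert _ => 0
  | .edge _ => 1
  | .ghost _ => -1

lemma lpaGen_vert (u : V) : lpaGen K s r (LPAGen.vert u) = vA K s r u := rfl
lemma lpaGen_edge (e : Ed) : lpaGen K s r (LPAGen.edge e) = eA K s r e := rfl
lemma lpaGen_ghost (e : Ed) : lpaGen K s r (LPAGen.ghost e) = gA K s r e := rfl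

/-- The comultiplication-style algebra map realizing the `ℤ`-grading, on the
free algebra. -/
def ΦF : FreeAlgebra K (LPAGen V Ed) →ₐ[K] AddMonoidAlgebra (LPAamb K s r) ℤ :=
  FreeAlgebra.lift K fun g => AddMonoidAlgebra.single (dgr g) (lpaGen K s r g)

lemma ΦF_ι (g : LPAGen V Ed) :
    ΦF K s r (FreeAlgebra.ι K g) = AddMonoidAlgebra.single (dgr g) (lpaGen K s r g) :=
  FreeAlgebra.lift_ι_apply _ _

variable {K s r}

lemma ΦF_rel {x y : FreeAlgebra K (LPAGen V Ed)} (h : LPARel K s r x y) :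
    ΦF K s r x = ΦF K s r y := by
  induction h with
  | vert_mul u v =>
    rw [map_mul, ΦF_ι, ΦF_ι, apply_ite (ΦF K s r), ΦF_ι, map_zero,
      AddMonoidAlgebra.single_mul_single]
    simp only [dgr, add_zero, lpaGen_vert, vv]
    split_ifs <;> simp
  | src_mul_edge e =>
    rw [map_mul, ΦF_ι, ΦF_ι, AddMonoidAlgebra.single_mul_single]
    simp only [dgr, zero_add, lpaGen_vert, lpaGen_edge, sve]
  | edge_mul_rng e =>
    rw [map_mul, ΦF_ι, ΦF_ι, AddMonoidAlgebra.single_mul_single]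
    simp only [dgr, add_zero, lpaGen_vert, lpaGen_edge, evr]
  | rng_mul_ghost e =>
    rw [map_mul, ΦF_ι, ΦF_ι, AddMonoidAlgebra.single_mul_single]
    simp only [dgr, zero_add, lpaGen_vert, lpaGen_ghost, rvg]
  | ghost_mul_src e =>
    rw [map_mul, ΦF_ι, ΦF_ι, AddMonoidAlgebra.single_mul_single]
    simp only [dgr, add_zero, lpaGen_vert, lpaGen_ghost, gvs]
  | ghost_mul_edge e f =>
    rw [map_mul, ΦF_ι, ΦF_ι, apply_ite (ΦF K s r), ΦF_ι, map_zero,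
      AddMonoidAlgebra.single_mul_single]
    simp only [dgr, neg_add_cancel, lpaGen_vert, lpaGen_edge, lpaGen_ghost, ge]
    split_ifs <;> simp
  | ck2 v hfin hne =>
    rw [map_sum, ΦF_ι]
    have hterm : ∀ e ∈ hfin.toFinset,
        ΦF K s r (FreeAlgebra.ι K (LPAGen.edge e) * FreeAlgebra.ι K (LPAGen.ghost e)) =
          AddMonoidAlgebra.single (0 : ℤ) (eA K s r e * gA K s r e) := by
      intro e _
      rw [map_mul, ΦF_ι, ΦF_ι, AddMonoidAlgebra.single_mul_single]
      simp [dgr, lpaGen_edge, lpaGen_ghost]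
    rw [Finset.sum_congr rfl hterm,
      show ∑ e ∈ hfin.toFinset, AddMonoidAlgebra.single (0 : ℤ) (eA K s r e * gA K s r e)
          = AddMonoidAlgebra.single (0 : ℤ) (∑ e ∈ hfin.toFinset, eA K s r e * gA K s r e)
        from (map_sum (AddMonoidAlgebra.singleAddHom (0 : ℤ)) _ _).symm,
      ck2 v hfin hne]
    rfl

variable (K s r)

/-- The grading map on the ambient algebra. -/
def Φ : LPAamb K s r →ₐ[K] AddMonoidAlgebra (LPAamb K s r) ℤ :=
  RingQuot.liftAlgHom K ⟨ΦF K s r, fun _ _ h => ΦF_rel h⟩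

variable {K s r}

lemma Φ_lpaGen (g : LPAGen V Ed) :
    Φ K s r (lpaGen K s r g) = AddMonoidAlgebra.single (dgr g) (lpaGen K s r g) := by
  rw [lpaGen, Φ, RingQuot.liftAlgHom_mkAlgHom_apply, ΦF_ι]
  rfl

lemma Φ_Pprod (α : List Ed) :
    Φ K s r (Pprod K s r α) = AddMonoidAlgebra.single (α.length : ℤ) (Pprod K s r α) := by
  induction α with
  | nil =>
    rw [Pprod_nil, map_one, AddMonoidAlgebra.one_def]
    norm_num
  | cons e α' ih =>
    rw [Pprod_cons, map_mul, ih, show eA K s r e = lpaGen K s r (LPAGen.edge e) from rfl,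
      Φ_lpaGen, AddMonoidAlgebra.single_mul_single, lpaGen_edge, ← Pprod_cons]
    congr 1
    simp only [dgr, List.length_cons]
    push_cast
    ring

lemma Φ_Gprod (β : List Ed) :
    Φ K s r (Gprod K s r β) =
      AddMonoidAlgebra.single (-(β.length : ℤ)) (Gprod K s r β) := by
  induction β with
  | nil =>
    rw [Gprod_nil, map_one, AddMonoidAlgebra.one_def]
    norm_num
  | cons e β' ih =>
    rw [Gprod_cons, map_mul, ih, show gA K s r e = lpaGen K s r (LPAGen.ghost e) from rfl,
      Φ_lpaGen, AddMonoidAlgebra.single_mul_single, lpaGen_ghost, ← Gprod_cons]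
    congr 1
    simp only [dgr, List.length_cons]
    push_cast
    ring

lemma Φ_Mon (α : List Ed) (v : V) (β : List Ed) :
    Φ K s r (Mon K s r α v β) =
      AddMonoidAlgebra.single ((α.length : ℤ) - β.length) (Mon K s r α v β) := by
  rw [Mon, map_mul, map_mul, Φ_Pprod, Φ_Gprod,
    show vA K s r v = lpaGen K s r (LPAGen.vert v) from rfl, Φ_lpaGen,
    AddMonoidAlgebra.single_mul_single, AddMonoidAlgebra.single_mul_single,
    lpaGen_vert, ← Mon, show (α.length : ℤ) + dgr (LPAGen.vert v) + -(β.length : ℤ)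
      = (α.length : ℤ) - β.length from by simp only [dgr]; ring]

variable (K s r)

/-- The degree-`n` component. -/
def πd (n : ℤ) : LPAamb K s r →ₗ[K] LPAamb K s r where
  toFun x := (Φ K s r x).coeff n
  map_add' x y := by show (Φ K s r (x + y)).coeff n = _; rw [map_add]; rfl
  map_smul' c x := by show (Φ K s r (c • x)).coeff n = _; rw [map_smul]; rfl

variable {K s r}

lemma πd_apply (n : ℤ) (x : LPAamb K s r) : πd K s r n x = (Φ K s r x).coeff n := rfl

lemma πd_Mon (n : ℤ) (α : List Ed) (v : V) (β : List Ed) :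
    πd K s r n (Mon K s r α v β) =
      if (α.length : ℤ) - β.length = n then Mon K s r α v β else 0 := by
  rw [πd_apply, Φ_Mon]
  exact Finsupp.single_apply

lemma πd_mem_spanD (n : ℤ) {x : LPAamb K s r} (hx : x ∈ spanMono K s r) :
    πd K s r n x ∈ spanD K s r n := by
  induction hx using Submodule.span_induction with
  | zero => rw [map_zero]; exact zero_mem _
  | add x y _ _ ihx ihy => rw [map_add]; exact add_mem ihx ihy
  | smul a x _ ih => rw [map_smul]; exact Submodule.smul_mem _ a ih
  | mem x hx =>
    obtain ⟨⟨α, v, β⟩, hg, rfl⟩ := hx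
    show πd K s r n (Mon K s r α v β) ∈ _
    rw [πd_Mon]
    split_ifs with h
    · exact Submodule.subset_span ⟨(α, v, β), ⟨hg, h⟩, rfl⟩
    · exact zero_mem _

lemma Φ_spanD {n : ℤ} {x : LPAamb K s r} (hx : x ∈ spanD K s r n) :
    Φ K s r x = AddMonoidAlgebra.single n x := by
  induction hx using Submodule.span_induction with
  | zero => rw [map_zero, AddMonoidAlgebra.single_zero]
  | add x y _ _ ihx ihy => rw [map_add, ihx, ihy, AddMonoidAlgebra.single_add]
  | smul a x _ ih =>
    rw [map_smul, ih, AddMonoidAlgebra.smul_single]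
  | mem x hx =>
    obtain ⟨⟨α, v, β⟩, ⟨hg, hd⟩, rfl⟩ := hx
    show Φ K s r (Mon K s r α v β) = _
    rw [Φ_Mon]
    rw [show ((α.length : ℤ) - β.length) = n from hd]
    rfl

variable (K s r)

/-- Sum-of-coefficients ring homomorphism. -/
def εh : AddMonoidAlgebra (LPAamb K s r) ℤ →ₐ[K] LPAamb K s r :=
  AddMonoidAlgebra.liftNCAlgHom (AlgHom.id K (LPAamb K s r)) 1
    (fun _ _ => Commute.one_right _)

variable {K s r}

lemma εh_single (a : ℤ) (x : LPAamb K s r) :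
    εh K s r (AddMonoidAlgebra.single a x) = x := by
  show AddMonoidAlgebra.liftNC _ _ _ = x
  rw [AddMonoidAlgebra.liftNC_single]
  simp

lemma εh_Φ (x : LPAamb K s r) : εh K s r (Φ K s r x) = x := by
  have : (εh K s r).comp (Φ K s r) = AlgHom.id K (LPAamb K s r) := by
    apply RingQuot.ringQuot_ext'
    apply FreeAlgebra.hom_ext
    funext g
    simp only [Function.comp_apply, AlgHom.coe_comp, AlgHom.coe_id, id_eq]
    rw [show (RingQuot.mkAlgHom K (LPARel K s r)) (FreeAlgebra.ι K g) = lpaGen K s r g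
      from rfl, Φ_lpaGen, εh_single]
  calc εh K s r (Φ K s r x) = ((εh K s r).comp (Φ K s r)) x := rfl
    _ = x := by rw [this]; rfl

lemma eq_sum_πd (x : LPAamb K s r) :
    x = ∑ n ∈ (Φ K s r x).coeff.support, πd K s r n x := by
  conv_lhs => rw [← εh_Φ x]
  conv_lhs => rw [← AddMonoidAlgebra.sum_coeff_single (Φ K s r x)]
  rw [Finsupp.sum, map_sum]
  exact Finset.sum_congr rfl fun n _ => εh_single n _

/-- Multiplying top coefficients. -/
lemma topCoeff_mul (f g : AddMonoidAlgebra (LPAamb K s r) ℤ) (N M : ℤ)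
    (hf : ∀ a ∈ f.coeff.support, a ≤ N) (hg : ∀ b ∈ g.coeff.support, b ≤ M) :
    (f * g).coeff (N + M) = f.coeff N * g.coeff M := by
  classical
  rw [AddMonoidAlgebra.coeff_mul, Finsupp.sum]
  by_cases hN : N ∈ f.coeff.support
  · rw [Finset.sum_eq_single_of_mem N hN ?_]
    · rw [Finsupp.sum]
      by_cases hM : M ∈ g.coeff.support
      · rw [Finset.sum_eq_single_of_mem M hM ?_]
        · rw [if_pos rfl]
        · intro b hb hbM
          rw [if_neg (by have := hg b hb; omega)]
      · rw [Finsupp.notMem_support_iff.1 hM, mul_zero]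
        apply Finset.sum_eq_zero
        intro b hb
        have hb' := hg b hb
        have : b ≠ M := fun h => hM (h ▸ hb)
        rw [if_neg (by omega)]
    · intro a ha haN
      have ha' := hf a ha
      rw [Finsupp.sum]
      apply Finset.sum_eq_zero
      intro b hb
      have hb' := hg b hb
      rw [if_neg (by omega)]
  · rw [Finsupp.notMem_support_iff.1 hN, zero_mul]
    apply Finset.sum_eq_zero
    intro a ha
    have ha' := hf a ha
    have haN : a ≠ N := fun h => hN (h ▸ ha)
    rw [Finsupp.sum]
    apply Finset.sum_eq_zero
    intro b hb
    have hb' := hg b hb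
    rw [if_neg (by omega)]

end Grading

section Main

variable (K s r)

/-- The key property: `b` generates a square-zero ideal. -/
def PP (b : LPAamb K s r) : Prop :=
  b * b = 0 ∧ ∀ x ∈ LeavittPathAlgebra K s r, b * x * b = 0

variable {K s r}

lemma PP.lmul {b : LPAamb K s r} (h : PP K s r b) {u : LPAamb K s r}
    (hu : u ∈ LeavittPathAlgebra K s r) : PP K s r (u * b) := by
  constructor
  · rw [show u * b * (u * b) = u * (b * u * b) from by noncomm_ring, h.2 u hu, mul_zero]
  · intro x hx
    rw [show u * b * x * (u * b) = u * (b * (x * u) * b) from by noncomm_ring,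
      h.2 (x * u) (mul_mem hx hu), mul_zero]

lemma PP.rmul {b : LPAamb K s r} (h : PP K s r b) {w : LPAamb K s r}
    (hw : w ∈ LeavittPathAlgebra K s r) : PP K s r (b * w) := by
  constructor
  · rw [show b * w * (b * w) = (b * w * b) * w from by noncomm_ring, h.2 w hw, zero_mul]
  · intro x hx
    rw [show b * w * x * (b * w) = (b * (w * x) * b) * w from by noncomm_ring,
      h.2 (w * x) (mul_mem hw hx), zero_mul]

lemma PP.conj {b : LPAamb K s r} (h : PP K s r b) {u w : LPAamb K s r}
    (hu : u ∈ LeavittPathAlgebra K s r) (hw : w ∈ LeavittPathAlgebra K s r) :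
    PP K s r (u * b * w) := by
  have := (h.rmul hw).lmul hu
  rwa [← mul_assoc] at this

variable (K s r)

/-- The orthogonal idempotents arising in the degree-zero argument. -/
def qel (F : Finset Ed) (v : V) : LPAamb K s r :=
  vA K s r v - ∑ e ∈ F.filter (fun e => s e = v), eA K s r e * gA K s r e

variable {K s r}

lemma qel_mem (F : Finset Ed) (v : V) : qel K s r F v ∈ LeavittPathAlgebra K s r :=
  sub_mem (vA_mem v) (sum_mem fun e _ => mul_mem (eA_mem e) (gA_mem e))

lemma eg_mul_eg (e f : Ed) :
    (eA K s r e * gA K s r e) * (eA K s r f * gA K s r f) =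
      if e = f then eA K s r e * gA K s r e else 0 := by
  rw [mul_assoc, ← mul_assoc (gA K s r e), ge]
  split_ifs with h
  · subst h; rw [rvg]
  · rw [zero_mul, mul_zero]

lemma vA_mul_eg (u : V) (e : Ed) :
    vA K s r u * (eA K s r e * gA K s r e) =
      if u = s e then eA K s r e * gA K s r e else 0 := by
  rw [← mul_assoc, ve]
  split_ifs with h
  · rfl
  · rw [zero_mul]

lemma eg_mul_vA (e : Ed) (u : V) :
    (eA K s r e * gA K s r e) * vA K s r u =
      if u = s e then eA K s r e * gA K s r e else 0 := by
  rw [mul_assoc, gv]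
  split_ifs with h
  · rfl
  · rw [mul_zero]

lemma Mon_ee (e : Ed) : Mon K s r [e] (r e) [e] = eA K s r e * gA K s r e := by
  rw [Mon]
  simp only [Pprod, Gprod, List.map_cons, List.map_nil, List.prod_cons, List.prod_nil,
    List.reverse_cons, List.reverse_nil, List.nil_append, mul_one]
  rw [evr]

lemma qel_mul_qel (F : Finset Ed) (v w : V) :
    qel K s r F v * qel K s r F w = if v = w then qel K s r F v else 0 := by
  classical
  unfold qel
  by_cases h : v = w
  · subst h
    rw [if_pos rfl, sub_mul, mul_sub, mul_sub, vv, if_pos rfl]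
    have hA : vA K s r v * (∑ e ∈ F.filter (fun e => s e = v), eA K s r e * gA K s r e)
        = ∑ e ∈ F.filter (fun e => s e = v), eA K s r e * gA K s r e := by
      rw [Finset.mul_sum]
      refine Finset.sum_congr rfl fun e he => ?_
      simp only [Finset.mem_filter] at he
      rw [vA_mul_eg, if_pos he.2.symm]
    have hB : (∑ e ∈ F.filter (fun e => s e = v), eA K s r e * gA K s r e) * vA K s r v
        = ∑ e ∈ F.filter (fun e => s e = v), eA K s r e * gA K s r e := by
      rw [Finset.sum_mul]
      refine Finset.sum_congr rfl fun e he => ?_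
      simp only [Finset.mem_filter] at he
      rw [eg_mul_vA, if_pos he.2.symm]
    have hC : (∑ e ∈ F.filter (fun e => s e = v), eA K s r e * gA K s r e) *
        (∑ e ∈ F.filter (fun e => s e = v), eA K s r e * gA K s r e)
        = ∑ e ∈ F.filter (fun e => s e = v), eA K s r e * gA K s r e := by
      rw [Finset.sum_mul_sum]
      refine Finset.sum_congr rfl fun e he => ?_
      rw [Finset.sum_congr rfl fun f (_ : f ∈ F.filter (fun e => s e = v)) =>
        eg_mul_eg e f, Finset.sum_ite_eq, if_pos he]
    rw [hA, hB, hC]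
    abel
  · rw [if_neg h, sub_mul, mul_sub, mul_sub, vv, if_neg h]
    have hA : vA K s r v * (∑ e ∈ F.filter (fun e => s e = w), eA K s r e * gA K s r e)
        = 0 := by
      rw [Finset.mul_sum]
      refine Finset.sum_eq_zero fun e he => ?_
      simp only [Finset.mem_filter] at he
      rw [vA_mul_eg, if_neg (by rw [he.2]; exact h)]
    have hB : (∑ e ∈ F.filter (fun e => s e = v), eA K s r e * gA K s r e) * vA K s r w
        = 0 := by
      rw [Finset.sum_mul]
      refine Finset.sum_eq_zero fun e he => ?_
      simp only [Finset.mem_filter] at he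
      rw [eg_mul_vA, if_neg (fun hh => h (hh.trans he.2).symm)]
    have hC : (∑ e ∈ F.filter (fun e => s e = v), eA K s r e * gA K s r e) *
        (∑ e ∈ F.filter (fun e => s e = w), eA K s r e * gA K s r e) = 0 := by
      rw [Finset.sum_mul_sum]
      refine Finset.sum_eq_zero fun e he => Finset.sum_eq_zero fun f hf => ?_
      simp only [Finset.mem_filter] at he hf
      refine (eg_mul_eg e f).trans (if_neg fun hh => h ?_)
      rw [← he.2, ← hf.2, hh]
    rw [hA, hB, hC]
    abel

lemma qel_kill {b : LPAamb K s r} (hPP : PP K s r b) {W : Finset V} {F : Finset Ed}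
    {γ : V → K} (hb : b = ∑ v ∈ W, γ v • qel K s r F v) : b = 0 := by
  rw [hb]
  apply Finset.sum_eq_zero
  intro w hw
  have hq : qel K s r F w * b * qel K s r F w = γ w • qel K s r F w := by
    rw [hb, Finset.mul_sum, Finset.sum_mul,
      Finset.sum_eq_single_of_mem w hw (fun v hv hvw => ?_)]
    · rw [mul_smul_comm, smul_mul_assoc, qel_mul_qel, if_pos rfl, qel_mul_qel,
        if_pos rfl]
    · rw [mul_smul_comm, smul_mul_assoc, qel_mul_qel, if_neg (fun hh => hvw hh.symm),
        zero_mul, smul_zero]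
  have hsq : (γ w • qel K s r F w) * (γ w • qel K s r F w) = 0 := by
    rw [← hq, show ∀ q c : LPAamb K s r, (q * c * q) * (q * c * q)
        = q * (c * (q * q) * c) * q from fun q c => by noncomm_ring,
      qel_mul_qel, if_pos rfl, hPP.2 (qel K s r F w) (qel_mem F w), mul_zero, zero_mul]
  rw [smul_mul_smul_comm, qel_mul_qel, if_pos rfl] at hsq
  by_cases hγ : γ w = 0
  · rw [hγ, zero_smul]
  · rcases smul_eq_zero.1 hsq with h0 | h0
    · exact absurd h0 (mul_ne_zero hγ hγ)
    · rw [h0, smul_zero]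

lemma rep_of_mem_span {S : Set (List Ed × V × List Ed)} {b : LPAamb K s r}
    (hb : b ∈ Submodule.span K (monOf K s r '' S)) :
    ∃ l : (List Ed × V × List Ed) →₀ K, (∀ p ∈ l.support, p ∈ S) ∧
      b = ∑ p ∈ l.support, l p • monOf K s r p := by
  rw [Finsupp.mem_span_image_iff_linearCombination] at hb
  obtain ⟨l, hl, hlb⟩ := hb
  refine ⟨l, fun p hp => (Finsupp.mem_supported K l).1 hl hp, ?_⟩
  rw [← hlb, Finsupp.linearCombination_apply, Finsupp.sum]

end Main

section DZero

lemma srcM_nil (s : Ed → V) (v : V) : srcM s [] v = v := rfl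
lemma srcM_cons (s : Ed → V) (e : Ed) (α : List Ed) (v : V) : srcM s (e :: α) v = s e := rfl

lemma corner_vertex (e f : Ed) (v : V) :
    eA K s r e * (gA K s r e * Mon K s r [] v [] * eA K s r f) * gA K s r f
      = if e = f ∧ s e = v then eA K s r e * gA K s r e else 0 := by
  rw [gA_mul_Mon_nil]
  by_cases h1 : s e = v
  · rw [if_pos h1, List.nil_append, Mon_mul_eA_cons _ _ _ _ _ (GoodM.single' e)]
    by_cases h2 : e = f
    · subst h2
      rw [if_pos rfl, if_pos ⟨rfl, h1⟩, eA_mul_Mon, srcM_nil, if_pos rfl, Mon_mul_gA,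
        srcM_nil, if_pos rfl, Mon_ee]
    · rw [if_neg h2, mul_zero, zero_mul, if_neg (fun hc => h2 hc.1)]
  · rw [if_neg h1, zero_mul, mul_zero, zero_mul, if_neg (fun hc => h1 hc.2)]

lemma corner_mono (e f : Ed) {a : Ed} {α' : List Ed} {v : V} {h : Ed} {β' : List Ed}
    (hg : GoodM s r (a :: α') v (h :: β')) :
    eA K s r e * (gA K s r e * Mon K s r (a :: α') v (h :: β') * eA K s r f) * gA K s r f
      = if e = a ∧ h = f then Mon K s r (a :: α') v (h :: β') else 0 := by
  rw [gA_mul_Mon_cons e a α' v _ hg]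
  by_cases h1 : e = a
  · rw [if_pos h1, Mon_mul_eA_cons _ _ _ _ _ hg.tailL]
    by_cases h2 : h = f
    · rw [if_pos h2, if_pos ⟨h1, h2⟩]
      subst h1; subst h2
      rw [eA_mul_Mon, if_pos hg.headL, Mon_mul_gA, if_pos hg.headR]
    · rw [if_neg h2, mul_zero, zero_mul, if_neg (fun hc => h2 hc.2)]
  · rw [if_neg h1, zero_mul, mul_zero, zero_mul, if_neg (fun hc => h1 hc.1)]

/-- Regrouping a sum of multiples of the `qel` idempotents by vertex. -/
lemma regroup (T0 : Finset (List Ed × V × List Ed)) (c : List Ed × V × List Ed → K)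
    (F : Finset Ed) :
    ∑ p ∈ T0, c p • qel K s r F p.2.1
      = ∑ v ∈ T0.image (fun p => p.2.1),
          (∑ p ∈ T0.filter (fun p => p.2.1 = v), c p) • qel K s r F v := by
  classical
  have h1 : ∀ v ∈ T0.image (fun p => p.2.1),
      (∑ p ∈ T0.filter (fun p => p.2.1 = v), c p) • qel K s r F v
        = ∑ p ∈ T0.filter (fun p => p.2.1 = v), c p • qel K s r F p.2.1 := by
    intro v _
    rw [Finset.sum_smul]
    exact Finset.sum_congr rfl fun p hp => by rw [(Finset.mem_filter.1 hp).2]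
  rw [Finset.sum_congr rfl h1]
  exact (Finset.sum_fiberwise_of_maps_to (fun p hp => Finset.mem_image_of_mem _ hp) _).symm

lemma Dlem : ∀ N : ℕ, ∀ b ∈ spanB K s r N, PP K s r b → b = 0 := by
  classical
  intro N
  induction N with
  | zero =>
    intro b hb hPP
    obtain ⟨l, hsupp, hrep⟩ := rep_of_mem_span hb
    have hshape : ∀ p ∈ l.support, p.1 = ([] : List Ed) ∧ p.2.2 = ([] : List Ed) := by
      intro p hp
      obtain ⟨⟨_, hdeg⟩, hlen⟩ := hsupp p hp
      have h1 : p.1.length = 0 := Nat.le_zero.1 hlen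
      have h2 : p.2.2.length = 0 := by omega
      exact ⟨List.eq_nil_of_length_eq_zero h1, List.eq_nil_of_length_eq_zero h2⟩
    have hmon : ∀ p ∈ l.support, monOf K s r p = qel K s r ∅ p.2.1 := by
      intro p hp
      obtain ⟨h1, h2⟩ := hshape p hp
      show Mon K s r p.1 p.2.1 p.2.2 = _
      rw [h1, h2, Mon_nil_nil, qel, Finset.filter_empty, Finset.sum_empty, sub_zero]
    have hb' : b = ∑ v ∈ l.support.image (fun p => p.2.1),
        (∑ p ∈ l.support.filter (fun p => p.2.1 = v), l p) • qel K s r ∅ v := by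
      rw [hrep, Finset.sum_congr rfl fun p hp => by rw [hmon p hp], regroup]
    exact qel_kill hPP hb'
  | succ N IH =>
    intro b hb hPP
    obtain ⟨l, hsupp, hrep⟩ := rep_of_mem_span hb
    set T := l.support with hT
    have hgood : ∀ p ∈ T, GoodM s r p.1 p.2.1 p.2.2 := fun p hp => (hsupp p hp).1.1
    have hbal : ∀ p ∈ T, p.1.length = p.2.2.length := by
      intro p hp
      have := (hsupp p hp).1.2
      omega
    have hlen : ∀ p ∈ T, p.1.length ≤ N + 1 := fun p hp => (hsupp p hp).2
    set F : Finset Ed :=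
      (T.filter (fun p => p.1 ≠ [])).biUnion
        (fun p => (p.1.take 1 ++ p.2.2.take 1).toFinset) with hF
    -- Claim 1: all double corners of b vanish (by the induction hypothesis)
    have claim1 : ∀ e f : Ed, gA K s r e * b * eA K s r f = 0 := by
      intro e f
      apply IH
      · rw [hrep, Finset.mul_sum, Finset.sum_mul]
        apply Submodule.sum_mem
        intro p hp
        rw [mul_smul_comm, smul_mul_assoc]
        apply Submodule.smul_mem
        by_cases h0 : p.1 = []
        · have hβ : p.2.2 = [] :=
            List.eq_nil_of_length_eq_zero (by rw [← hbal p hp, h0]; rfl)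
          rw [show monOf K s r p = Mon K s r p.1 p.2.1 p.2.2 from rfl, h0, hβ,
            gA_mul_Mon_nil]
          split_ifs with hc
          · rw [List.nil_append, Mon_mul_eA_cons _ _ _ _ _ (GoodM.single' e)]
            split_ifs with hef
            · refine Submodule.subset_span ⟨([], r e, []), ⟨⟨GoodM.nil_nil _, ?_⟩, ?_⟩, rfl⟩
              · show (([] : List Ed).length : ℤ) - (([] : List Ed).length : ℤ) = 0
                simp
              · show ([] : List Ed).length ≤ N
                simp
            · exact zero_mem _
          · rw [zero_mul]
            exact zero_mem _
        · obtain ⟨a, α', ha⟩ := List.exists_cons_of_ne_nil h0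
          have hβne : p.2.2 ≠ [] := by
            intro hβ
            have hl2 := hbal p hp
            rw [hβ] at hl2
            simp only [List.length_nil] at hl2
            exact h0 (List.eq_nil_of_length_eq_zero hl2)
          obtain ⟨hd, β', hb2⟩ := List.exists_cons_of_ne_nil hβne
          have hg : GoodM s r (a :: α') p.2.1 (hd :: β') := by
            rw [← ha, ← hb2]; exact hgood p hp
          rw [show monOf K s r p = Mon K s r p.1 p.2.1 p.2.2 from rfl, ha, hb2,
            gA_mul_Mon_cons e a α' _ _ hg]
          split_ifs with hea
          · rw [Mon_mul_eA_cons _ _ _ _ _ hg.tailL]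
            split_ifs with hff
            · have hb3 := hbal p hp
              rw [ha, hb2] at hb3
              simp only [List.length_cons] at hb3
              have hl3 := hlen p hp
              rw [ha] at hl3
              simp only [List.length_cons] at hl3
              refine Submodule.subset_span
                ⟨(α', p.2.1, β'), ⟨⟨hg.tailL.tailR, ?_⟩, ?_⟩, rfl⟩
              · show (α'.length : ℤ) - (β'.length : ℤ) = 0
                omega
              · show α'.length ≤ N
                omega
            · exact zero_mem _
          · rw [zero_mul]
            exact zero_mem _
      · exact hPP.conj (gA_mem e) (eA_mem f)
    -- Key identity per monomial
    have keyid : ∀ p ∈ T,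
        (∑ e ∈ F, ∑ f ∈ F,
          eA K s r e * (gA K s r e * monOf K s r p * eA K s r f) * gA K s r f)
        = if p.1 = [] then
            ∑ e ∈ F.filter (fun e => s e = p.2.1), eA K s r e * gA K s r e
          else monOf K s r p := by
      intro p hp
      by_cases h0 : p.1 = []
      · rw [if_pos h0]
        have hβ : p.2.2 = [] :=
          List.eq_nil_of_length_eq_zero (by rw [← hbal p hp, h0]; rfl)
        have hmon : monOf K s r p = Mon K s r [] p.2.1 [] := by
          show Mon K s r p.1 p.2.1 p.2.2 = _
          rw [h0, hβ]
        rw [hmon]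
        have inner : ∀ e ∈ F, (∑ f ∈ F,
            eA K s r e * (gA K s r e * Mon K s r [] p.2.1 [] * eA K s r f) * gA K s r f)
            = if s e = p.2.1 then eA K s r e * gA K s r e else 0 := by
          intro e he
          rw [Finset.sum_congr rfl (fun f _ => corner_vertex e f p.2.1),
            Finset.sum_congr rfl (fun f (_ : f ∈ F) =>
              show (if e = f ∧ s e = p.2.1 then eA K s r e * gA K s r e else 0)
                = (if e = f then (if s e = p.2.1 then eA K s r e * gA K s r e else 0)
                    else 0) from by split_ifs <;> first | rfl | tauto),
            Finset.sum_ite_eq F e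
              (fun _ => if s e = p.2.1 then eA K s r e * gA K s r e else 0),
            if_pos he]
        rw [Finset.sum_congr rfl inner, Finset.sum_filter]
      · rw [if_neg h0]
        obtain ⟨a, α', ha⟩ := List.exists_cons_of_ne_nil h0
        have hβne : p.2.2 ≠ [] := by
          intro hβ
          have hl2 := hbal p hp
          rw [hβ] at hl2
          simp only [List.length_nil] at hl2
          exact h0 (List.eq_nil_of_length_eq_zero hl2)
        obtain ⟨hd, β', hb2⟩ := List.exists_cons_of_ne_nil hβne
        have hg : GoodM s r (a :: α') p.2.1 (hd :: β') := by
          rw [← ha, ← hb2]; exact hgood p hp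
        have hmon : monOf K s r p = Mon K s r (a :: α') p.2.1 (hd :: β') := by
          show Mon K s r p.1 p.2.1 p.2.2 = _
          rw [ha, hb2]
        have haF : a ∈ F := by
          rw [hF]
          apply Finset.mem_biUnion.2
          refine ⟨p, Finset.mem_filter.2 ⟨hp, h0⟩, ?_⟩
          rw [ha, hb2]
          simp
        have hhF : hd ∈ F := by
          rw [hF]
          apply Finset.mem_biUnion.2
          refine ⟨p, Finset.mem_filter.2 ⟨hp, h0⟩, ?_⟩
          rw [ha, hb2]
          simp
        rw [hmon]
        have inner : ∀ e ∈ F, (∑ f ∈ F, eA K s r e *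
            (gA K s r e * Mon K s r (a :: α') p.2.1 (hd :: β') * eA K s r f) * gA K s r f)
            = if e = a then Mon K s r (a :: α') p.2.1 (hd :: β') else 0 := by
          intro e _
          rw [Finset.sum_congr rfl (fun f _ => corner_mono e f hg),
            Finset.sum_congr rfl (fun f (_ : f ∈ F) =>
              show (if e = a ∧ hd = f then Mon K s r (a :: α') p.2.1 (hd :: β') else 0)
                = (if hd = f then
                    (if e = a then Mon K s r (a :: α') p.2.1 (hd :: β') else 0)
                    else 0) from by split_ifs <;> first | rfl | tauto),
            Finset.sum_ite_eq F hd
              (fun _ => if e = a then Mon K s r (a :: α') p.2.1 (hd :: β') else 0),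
            if_pos hhF]
        rw [Finset.sum_congr rfl inner,
          Finset.sum_ite_eq' F a (fun _ => Mon K s r (a :: α') p.2.1 (hd :: β')),
          if_pos haF]
    -- Assembling: the ideal corner sums vanish, so b is a combination of the qel's
    have expand : ∀ e f : Ed, eA K s r e * (gA K s r e * b * eA K s r f) * gA K s r f
        = ∑ p ∈ T, l p •
            (eA K s r e * (gA K s r e * monOf K s r p * eA K s r f) * gA K s r f) := by
      intro e f
      rw [hrep]
      simp only [Finset.mul_sum, Finset.sum_mul, mul_smul_comm, smul_mul_assoc]
    have hzero : (∑ p ∈ T, l p • ∑ e ∈ F, ∑ f ∈ F,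
        eA K s r e * (gA K s r e * monOf K s r p * eA K s r f) * gA K s r f) = 0 := by
      simp only [Finset.smul_sum]
      rw [Finset.sum_comm]
      refine Finset.sum_eq_zero fun e _ => ?_
      rw [Finset.sum_comm]
      refine Finset.sum_eq_zero fun f _ => ?_
      rw [← expand e f, claim1 e f, mul_zero, zero_mul]
    rw [Finset.sum_congr rfl (fun p hp => by rw [keyid p hp])] at hzero
    rw [← Finset.sum_filter_add_sum_filter_not T (fun p => p.1 = [])] at hzero
    have h2a : (∑ p ∈ T.filter (fun p => p.1 = []), l p •
        (if p.1 = [] then ∑ e ∈ F.filter (fun e => s e = p.2.1),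
            eA K s r e * gA K s r e else monOf K s r p))
        = ∑ p ∈ T.filter (fun p => p.1 = []), l p •
          (∑ e ∈ F.filter (fun e => s e = p.2.1), eA K s r e * gA K s r e) :=
      Finset.sum_congr rfl fun p hp => by rw [if_pos (Finset.mem_filter.1 hp).2]
    have h2b : (∑ p ∈ T.filter (fun p => ¬ p.1 = []), l p •
        (if p.1 = [] then ∑ e ∈ F.filter (fun e => s e = p.2.1),
            eA K s r e * gA K s r e else monOf K s r p))
        = ∑ p ∈ T.filter (fun p => ¬ p.1 = []), l p • monOf K s r p :=
      Finset.sum_congr rfl fun p hp => by rw [if_neg (Finset.mem_filter.1 hp).2]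
    rw [h2a, h2b] at hzero
    have hneg := eq_neg_of_add_eq_zero_right hzero
    have hq : b = ∑ p ∈ T.filter (fun p => p.1 = []), l p • qel K s r F p.2.1 := by
      rw [hrep, ← Finset.sum_filter_add_sum_filter_not T (fun p => p.1 = [])
        (fun p => l p • monOf K s r p), hneg, ← sub_eq_add_neg,
        ← Finset.sum_sub_distrib]
      refine Finset.sum_congr rfl fun p hp => ?_
      have h0 : p.1 = [] := (Finset.mem_filter.1 hp).2
      have hβ : p.2.2 = [] :=
        List.eq_nil_of_length_eq_zero
          (by rw [← hbal p (Finset.mem_filter.1 hp).1, h0]; rfl)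
      rw [show monOf K s r p = Mon K s r p.1 p.2.1 p.2.2 from rfl, h0, hβ, Mon_nil_nil,
        qel, smul_sub]
    have hb' : b = ∑ v ∈ (T.filter (fun p => p.1 = [])).image (fun p => p.2.1),
        (∑ p ∈ (T.filter (fun p => p.1 = [])).filter (fun p => p.2.1 = v), l p) •
          qel K s r F v := by
      rw [hq, regroup]
    exact qel_kill hPP hb'

end DZero

section Homog

lemma spanD_zero_to_spanB {b : LPAamb K s r} (hb : b ∈ spanD K s r 0) :
    ∃ N : ℕ, b ∈ spanB K s r N := by
  classical
  obtain ⟨l, hsupp, hrep⟩ := rep_of_mem_span hb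
  refine ⟨l.support.sup (fun p => p.1.length), ?_⟩
  rw [hrep]
  apply Submodule.sum_mem
  intro p hp
  apply Submodule.smul_mem
  exact Submodule.subset_span ⟨p, ⟨hsupp p hp, Finset.le_sup (f := fun p => p.1.length) hp⟩, rfl⟩

lemma homog : ∀ (k : ℕ) (n : ℤ), n.natAbs ≤ k →
    ∀ b ∈ spanD K s r n, PP K s r b → b = 0 := by
  classical
  intro k
  induction k with
  | zero =>
    intro n hn b hb hPP
    have hn0 : n = 0 := by omega
    subst hn0
    obtain ⟨N, hN⟩ := spanD_zero_to_spanB hb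
    exact Dlem N b hN hPP
  | succ k IH =>
    intro n hn b hb hPP
    rcases lt_trichotomy n 0 with hneg | hzero | hpos
    · -- negative degree: strip a ghost edge on the right
      obtain ⟨l, hsupp, hrep⟩ := rep_of_mem_span hb
      set T := l.support with hT
      set F : Finset Ed := T.biUnion (fun p => (p.2.2.take 1).toFinset) with hF
      have hmain : ∀ p ∈ T, ∃ hd β', p.2.2 = hd :: β' := by
        intro p hp
        have hd := (hsupp p hp).2
        have hne2 : p.2.2 ≠ [] := by
          intro h
          rw [h] at hd
          simp only [List.length_nil, Nat.cast_zero, sub_zero] at hd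
          omega
        obtain ⟨hd, β', hh⟩ := List.exists_cons_of_ne_nil hne2
        exact ⟨hd, β', hh⟩
      have hid : b = ∑ f ∈ F, (b * eA K s r f) * gA K s r f := by
        have per : ∀ p ∈ T, monOf K s r p
            = ∑ f ∈ F, (monOf K s r p * eA K s r f) * gA K s r f := by
          intro p hp
          obtain ⟨hd, β', hb2⟩ := hmain p hp
          have hg : GoodM s r p.1 p.2.1 (hd :: β') := by
            rw [← hb2]; exact (hsupp p hp).1
          have hhF : hd ∈ F := Finset.mem_biUnion.2 ⟨p, hp, by rw [hb2]; simp⟩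
          have hterm : ∀ f ∈ F, (monOf K s r p * eA K s r f) * gA K s r f
              = if hd = f then monOf K s r p else 0 := by
            intro f _
            rw [show monOf K s r p = Mon K s r p.1 p.2.1 p.2.2 from rfl, hb2,
              Mon_mul_eA_cons _ _ _ _ _ hg]
            split_ifs with h2
            · subst h2
              rw [Mon_mul_gA, if_pos hg.headR]
            · rw [zero_mul]
          rw [Finset.sum_congr rfl hterm,
            Finset.sum_ite_eq F hd (fun _ => monOf K s r p), if_pos hhF]
        calc b = ∑ p ∈ T, l p • monOf K s r p := hrep
          _ = ∑ p ∈ T, l p • ∑ f ∈ F, (monOf K s r p * eA K s r f) * gA K s r f :=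
            Finset.sum_congr rfl fun p hp => by rw [← per p hp]
          _ = ∑ f ∈ F, (b * eA K s r f) * gA K s r f := by
            simp only [Finset.smul_sum]
            rw [Finset.sum_comm]
            refine Finset.sum_congr rfl fun f _ => ?_
            rw [hrep]
            simp only [Finset.sum_mul, smul_mul_assoc]
      have hzero : ∀ f ∈ F, b * eA K s r f = 0 := by
        intro f _
        apply IH (n + 1) (by omega)
        · rw [hrep, Finset.sum_mul]
          apply Submodule.sum_mem
          intro p hp
          rw [smul_mul_assoc]
          apply Submodule.smul_mem
          obtain ⟨hd, β', hb2⟩ := hmain p hp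
          have hg : GoodM s r p.1 p.2.1 (hd :: β') := by
            rw [← hb2]; exact (hsupp p hp).1
          rw [show monOf K s r p = Mon K s r p.1 p.2.1 p.2.2 from rfl, hb2,
            Mon_mul_eA_cons _ _ _ _ _ hg]
          split_ifs with h2
          · refine Submodule.subset_span ⟨(p.1, p.2.1, β'), ⟨hg.tailR, ?_⟩, rfl⟩
            have hd2 := (hsupp p hp).2
            rw [hb2] at hd2
            simp only [List.length_cons] at hd2
            show (p.1.length : ℤ) - β'.length = n + 1
            push_cast at hd2 ⊢
            omega
          · exact zero_mem _
        · exact hPP.rmul (eA_mem f)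
      rw [hid]
      refine Finset.sum_eq_zero fun f hf => ?_
      rw [hzero f hf, zero_mul]
    · subst hzero
      obtain ⟨N, hN⟩ := spanD_zero_to_spanB hb
      exact Dlem N b hN hPP
    · -- positive degree: strip an edge on the left
      obtain ⟨l, hsupp, hrep⟩ := rep_of_mem_span hb
      set T := l.support with hT
      set F : Finset Ed := T.biUnion (fun p => (p.1.take 1).toFinset) with hF
      have hmain : ∀ p ∈ T, ∃ a α', p.1 = a :: α' := by
        intro p hp
        have hd := (hsupp p hp).2
        have hne2 : p.1 ≠ [] := by
          intro h
          rw [h] at hd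
          simp only [List.length_nil, Nat.cast_zero, zero_sub] at hd
          omega
        obtain ⟨a, α', hh⟩ := List.exists_cons_of_ne_nil hne2
        exact ⟨a, α', hh⟩
      have hid : b = ∑ e ∈ F, eA K s r e * (gA K s r e * b) := by
        have per : ∀ p ∈ T, monOf K s r p
            = ∑ e ∈ F, eA K s r e * (gA K s r e * monOf K s r p) := by
          intro p hp
          obtain ⟨a, α', ha⟩ := hmain p hp
          have hg : GoodM s r (a :: α') p.2.1 p.2.2 := by
            rw [← ha]; exact (hsupp p hp).1
          have haF : a ∈ F := Finset.mem_biUnion.2 ⟨p, hp, by rw [ha]; simp⟩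
          have hterm : ∀ e ∈ F, eA K s r e * (gA K s r e * monOf K s r p)
              = if e = a then monOf K s r p else 0 := by
            intro e _
            rw [show monOf K s r p = Mon K s r p.1 p.2.1 p.2.2 from rfl, ha,
              gA_mul_Mon_cons _ _ _ _ _ hg]
            split_ifs with h2
            · subst h2
              rw [eA_mul_Mon, if_pos hg.headL]
            · rw [mul_zero]
          rw [Finset.sum_congr rfl hterm,
            Finset.sum_ite_eq' F a (fun _ => monOf K s r p), if_pos haF]
        calc b = ∑ p ∈ T, l p • monOf K s r p := hrep
          _ = ∑ p ∈ T, l p • ∑ e ∈ F, eA K s r e * (gA K s r e * monOf K s r p) :=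
            Finset.sum_congr rfl fun p hp => by rw [← per p hp]
          _ = ∑ e ∈ F, eA K s r e * (gA K s r e * b) := by
            simp only [Finset.smul_sum]
            rw [Finset.sum_comm]
            refine Finset.sum_congr rfl fun e _ => ?_
            rw [hrep]
            simp only [Finset.mul_sum, mul_smul_comm]
      have hzero : ∀ e ∈ F, gA K s r e * b = 0 := by
        intro e _
        apply IH (n - 1) (by omega)
        · rw [hrep, Finset.mul_sum]
          apply Submodule.sum_mem
          intro p hp
          rw [mul_smul_comm]
          apply Submodule.smul_mem
          obtain ⟨a, α', ha⟩ := hmain p hp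
          have hg : GoodM s r (a :: α') p.2.1 p.2.2 := by
            rw [← ha]; exact (hsupp p hp).1
          rw [show monOf K s r p = Mon K s r p.1 p.2.1 p.2.2 from rfl, ha,
            gA_mul_Mon_cons _ _ _ _ _ hg]
          split_ifs with h2
          · refine Submodule.subset_span ⟨(α', p.2.1, p.2.2), ⟨hg.tailL, ?_⟩, rfl⟩
            have hd2 := (hsupp p hp).2
            rw [ha] at hd2
            simp only [List.length_cons] at hd2
            show (α'.length : ℤ) - p.2.2.length = n - 1
            push_cast at hd2 ⊢
            omega
          · exact zero_mem _
        · exact hPP.lmul (gA_mem e)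
      rw [hid]
      refine Finset.sum_eq_zero fun e he => ?_
      rw [hzero e he, mul_zero]

/-- Nondegeneracy: an element of `L_K(E)` generating a square-zero ideal is zero. -/
lemma nondeg {b : LPAamb K s r} (hbL : b ∈ LeavittPathAlgebra K s r)
    (hPP : PP K s r b) : b = 0 := by
  classical
  by_contra hne
  have hΦ : Φ K s r b ≠ 0 := fun h => hne (by rw [← εh_Φ b, h, map_zero])
  have hsne : (Φ K s r b).coeff.support.Nonempty :=
    Finsupp.support_nonempty_iff.2 (mt AddMonoidAlgebra.coeff_eq_zero.1 hΦ)
  set N := (Φ K s r b).coeff.support.max' hsne with hN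
  have hbound : ∀ a ∈ (Φ K s r b).coeff.support, a ≤ N := fun a ha => Finset.le_max' _ a ha
  have hbN : πd K s r N b ≠ 0 := by
    rw [πd_apply]
    exact Finsupp.mem_support_iff.1 ((Φ K s r b).coeff.support.max'_mem hsne)
  have hmem : πd K s r N b ∈ spanD K s r N := πd_mem_spanD N (L_subset_spanMono hbL)
  have hPPN : PP K s r (πd K s r N b) := by
    constructor
    · have h1 := topCoeff_mul (Φ K s r b) (Φ K s r b) N N hbound hbound
      rw [← map_mul, hPP.1, map_zero] at h1
      exact h1.symm
    · intro x hx
      rw [eq_sum_πd x, Finset.mul_sum, Finset.sum_mul]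
      apply Finset.sum_eq_zero
      intro d _
      have hxd : πd K s r d x ∈ spanD K s r d := πd_mem_spanD d (L_subset_spanMono hx)
      have hxdL : πd K s r d x ∈ LeavittPathAlgebra K s r := mem_L_of_spanD hxd
      have hΦxd : Φ K s r (πd K s r d x) = AddMonoidAlgebra.single d (πd K s r d x) :=
        Φ_spanD hxd
      have hb1 : ∀ a ∈ (Φ K s r (πd K s r d x)).coeff.support, a ≤ d := by
        rw [hΦxd]
        intro a ha
        have h5 := Finsupp.support_single_subset ha
        simp only [Finset.mem_singleton] at h5
        omega
      have t1 := topCoeff_mul (Φ K s r b) (Φ K s r (πd K s r d x)) N d hbound hb1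
      have hb2 : ∀ a ∈ (Φ K s r b * Φ K s r (πd K s r d x)).coeff.support, a ≤ N + d := by
        intro a ha
        have h3 := AddMonoidAlgebra.support_coeff_mul_subset _ _ ha
        rw [Finset.mem_add] at h3
        obtain ⟨a1, ha1, a2, ha2, rfl⟩ := h3
        have h6 := hbound a1 ha1
        have h7 := hb1 a2 ha2
        omega
      have t2 := topCoeff_mul (Φ K s r b * Φ K s r (πd K s r d x)) (Φ K s r b)
        (N + d) N hb2 hbound
      rw [t1, show (Φ K s r (πd K s r d x)).coeff d = πd K s r d x from by
          rw [hΦxd, AddMonoidAlgebra.coeff_single, Finsupp.single_apply, if_pos rfl]] at t2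
      rw [← map_mul, ← map_mul, hPP.2 _ hxdL, map_zero] at t2
      exact t2.symm
  exact hbN (homog N.natAbs N le_rfl _ hmem hPPN)

end Homog

end LPASemiprime
/-- For an arbitrary countable graph `E` and a field `K`, the Leavitt path algebra
`L_K(E)` is semiprime: it has no nonzero two-sided ideal with zero square. -/
theorem leavittPathAlgebra_semiprime
    {V Ed : Type} [Countable V] [Countable Ed] (s r : Ed → V) (K : Type) [Field K] :
    IsSemiprimeRing ↥(LeavittPathAlgebra K s r) := by
  intro I hTS hSq
  rw [eq_bot_iff]
  intro a ha
  rw [AddSubgroup.mem_bot]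
  have hPPa : LPASemiprime.PP K s r (a : LPAamb K s r) := by
    constructor
    · have h1 : a * a = 0 := hSq a ha a ha
      have h2 := congrArg Subtype.val h1
      simpa using h2
    · intro x hx
      have h1 : a * ⟨x, hx⟩ ∈ I := (hTS ⟨x, hx⟩ a ha).2
      have h2 : (a * ⟨x, hx⟩) * a = 0 := hSq _ h1 a ha
      have h3 := congrArg Subtype.val h2
      simpa using h3
  have h0 := LPASemiprime.nondeg a.2 hPPa
  exact Subtype.ext (by simpa using h0)

end
end

section
/- Let R and S be semiprime idempotent rings admitting a surjective Morita context (R, S, N, M, φ, ψ). Then R has nonzero socle if and only if S has nonzero socle. -/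
set_option synthInstance.maxHeartbeats 1000000
set_option maxHeartbeats 1000000

noncomputable section

section MyAuxLemmas

/-- In a semiprime ring, `x R x = 0` implies `x = 0`. -/
theorem my_sp_ann {R : Type} [NonUnitalRing R] (hsp : IsSemiprimeRing R)
    (x : R) (hx : ∀ r : R, x * r * x = 0) : x = 0 := by
  have hx' : ∀ r s : R, x * (r * (x * s)) = 0 := by
    intro r s
    calc x * (r * (x * s)) = (x * r * x) * s := by rw [mul_assoc, mul_assoc]
    _ = 0 := by rw [hx r, zero_mul]
  -- Step 1 : a * x * b = 0
  have h1 : ∀ a b : R, a * x * b = 0 := by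
    set A : AddSubgroup R := AddSubgroup.closure {y | ∃ a b : R, y = a * x * b} with hA
    have hgen : ∀ a b : R, a * x * b ∈ A := fun a b =>
      AddSubgroup.subset_closure ⟨a, b, rfl⟩
    have h2s : IsTwoSidedIdealSG A := by
      intro r u hu
      constructor
      · have hle : A ≤ AddSubgroup.comap (AddMonoidHom.mulLeft r) A := by
          apply AddSubgroup.closure_le _ |>.mpr
          rintro y ⟨a, b, rfl⟩
          simp only [SetLike.mem_coe, AddSubgroup.mem_comap]
          show r * (a * x * b) ∈ A
          have : r * (a * x * b) = (r * a) * x * b := by simp only [mul_assoc]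
          rw [this]; exact hgen (r * a) b
        simpa [AddSubgroup.mem_comap] using hle hu
      · have hle : A ≤ AddSubgroup.comap (AddMonoidHom.mulRight r) A := by
          apply AddSubgroup.closure_le _ |>.mpr
          rintro y ⟨a, b, rfl⟩
          simp only [SetLike.mem_coe, AddSubgroup.mem_comap]
          show (a * x * b) * r ∈ A
          rw [mul_assoc]
          exact hgen a (b * r)
        simpa [AddSubgroup.mem_comap] using hle hu
    have hsq : ∀ u ∈ A, ∀ v ∈ A, u * v = 0 := by
      have hgv : ∀ a b : R, ∀ v ∈ A, (a * x * b) * v = 0 := by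
        intro a b
        have hle : A ≤ AddSubgroup.comap (AddMonoidHom.mulLeft (a * x * b)) ⊥ := by
          apply AddSubgroup.closure_le _ |>.mpr
          rintro y ⟨c, d, rfl⟩
          have : (a * x * b) * (c * x * d) = 0 := by
            have h2 : x * (b * (c * x * d)) = 0 := by
              have : b * (c * x * d) = (b * c) * (x * d) := by
                rw [mul_assoc c x d, ← mul_assoc]
              rw [this, hx' (b * c) d]
            calc (a * x * b) * (c * x * d) = a * (x * (b * (c * x * d))) := by
                  rw [mul_assoc a x b, mul_assoc, mul_assoc]
            _ = 0 := by rw [h2, mul_zero]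
          simpa [AddSubgroup.mem_comap, this]
        intro v hv
        simpa [AddSubgroup.mem_comap] using hle hv
      intro u hu v hv
      have hle : A ≤ AddSubgroup.comap (AddMonoidHom.mulRight v) ⊥ := by
        apply AddSubgroup.closure_le _ |>.mpr
        rintro y ⟨a, b, rfl⟩
        simpa [AddSubgroup.mem_comap] using hgv a b v hv
      simpa [AddSubgroup.mem_comap] using hle hu
    have hAbot : A = ⊥ := hsp A h2s hsq
    intro a b
    have := hgen a b
    rw [hAbot, AddSubgroup.mem_bot] at this
    exact this
  -- Step 2 : a * x = 0
  have h2 : ∀ a : R, a * x = 0 := by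
    have hB2 : IsTwoSidedIdealSG (principalLeft x) := by
      rintro r u ⟨a, rfl⟩
      constructor
      · exact ⟨r * a, mul_assoc r a x⟩
      · show a * x * r ∈ principalLeft x
        rw [h1 a r]
        exact zero_mem _
    have hBsq : ∀ u ∈ principalLeft x, ∀ v ∈ principalLeft x, u * v = 0 := by
      rintro _ ⟨a, rfl⟩ _ ⟨b, rfl⟩
      show (a * x) * (b * x) = 0
      rw [← mul_assoc, h1 a b, zero_mul]
    have hBbot := hsp _ hB2 hBsq
    intro a
    have : a * x ∈ principalLeft x := ⟨a, rfl⟩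
    rw [hBbot, AddSubgroup.mem_bot] at this
    exact this
  -- Step 3 : x * a = 0
  have h3 : ∀ a : R, x * a = 0 := by
    let C : AddSubgroup R :=
      { carrier := Set.range fun a : R => x * a
        add_mem' := by rintro _ _ ⟨a, rfl⟩ ⟨b, rfl⟩; exact ⟨a + b, mul_add x a b⟩
        zero_mem' := ⟨0, mul_zero x⟩
        neg_mem' := by rintro _ ⟨a, rfl⟩; exact ⟨-a, mul_neg x a⟩ }
    have hC2 : IsTwoSidedIdealSG C := by
      rintro r u ⟨a, rfl⟩
      constructor
      · show r * (x * a) ∈ C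
        rw [← mul_assoc, h2 r, zero_mul]
        exact zero_mem _
      · exact ⟨a * r, (mul_assoc x a r).symm⟩
    have hCsq : ∀ u ∈ C, ∀ v ∈ C, u * v = 0 := by
      rintro _ ⟨a, rfl⟩ _ ⟨b, rfl⟩
      show (x * a) * (x * b) = 0
      rw [mul_assoc, ← mul_assoc a x b, h2 a, zero_mul, mul_zero]
    have hCbot := hsp _ hC2 hCsq
    intro a
    have : x * a ∈ C := ⟨a, rfl⟩
    rw [hCbot, AddSubgroup.mem_bot] at this
    exact this
  -- Step 4 : zmultiples
  have hD2 : IsTwoSidedIdealSG (AddSubgroup.zmultiples x) := by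
    intro r u hu
    obtain ⟨k, rfl⟩ := AddSubgroup.mem_zmultiples_iff.mp hu
    constructor
    · rw [mul_smul_comm, h2 r, smul_zero]; exact zero_mem _
    · rw [smul_mul_assoc, h3 r, smul_zero]; exact zero_mem _
  have hDsq : ∀ u ∈ AddSubgroup.zmultiples x, ∀ v ∈ AddSubgroup.zmultiples x, u * v = 0 := by
    intro u hu v hv
    obtain ⟨k, rfl⟩ := AddSubgroup.mem_zmultiples_iff.mp hu
    obtain ⟨l, rfl⟩ := AddSubgroup.mem_zmultiples_iff.mp hv
    rw [smul_mul_assoc, mul_smul_comm, h3 x, smul_zero, smul_zero]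
  have hDbot := hsp _ hD2 hDsq
  have : x ∈ AddSubgroup.zmultiples x := AddSubgroup.mem_zmultiples x
  rw [hDbot, AddSubgroup.mem_bot] at this
  exact this


/-- Brauer's lemma, plus division property of the corner ring. -/
theorem my_brauer {R : Type} [NonUnitalRing R] (hsp : IsSemiprimeRing R)
    {I : AddSubgroup R} (hI : IsMinimalLeftIdeal I) :
    ∃ e : R, e ≠ 0 ∧ e * e = e ∧
      ∀ x : R, e * x * e = x → x ≠ 0 → ∃ y : R, e * y * e = y ∧ y * x = e := by
  obtain ⟨hIl, hIne, hImin⟩ := hI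
  have hmax : ∀ J : AddSubgroup R, IsLeftIdeal J → J ≤ I → J ≠ ⊥ → J = I := by
    intro J hJl hJle hJne
    by_contra hne
    exact hJne (hImin J hJl (lt_of_le_of_ne hJle hne))
  obtain ⟨a₀, ha₀I, ha₀⟩ : ∃ a ∈ I, a ≠ (0:R) := by
    by_contra h
    push_neg at h
    exact hIne ((AddSubgroup.eq_bot_iff_forall I).mpr h)
  obtain ⟨a, haI, i₀, hi₀I, hia⟩ : ∃ a ∈ I, ∃ i ∈ I, i * a ≠ 0 := by
    by_contra h
    push_neg at h
    refine ha₀ (my_sp_ann hsp a₀ fun r => ?_)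
    rw [mul_assoc]
    exact h (r * a₀) (hIl r a₀ ha₀I) a₀ ha₀I
  have ha : a ≠ 0 := by rintro rfl; exact hia (mul_zero i₀)
  -- I * a = I
  set Ia : AddSubgroup R := AddSubgroup.map (AddMonoidHom.mulRight a) I with hIadef
  have hIamem : ∀ u : R, u ∈ Ia ↔ ∃ i ∈ I, i * a = u := by
    intro u
    simp [hIadef, AddSubgroup.mem_map, AddMonoidHom.mulRight_apply]
  have hIal : IsLeftIdeal Ia := by
    intro r u hu
    obtain ⟨i, hiI, rfl⟩ := (hIamem u).mp hu
    exact (hIamem _).mpr ⟨r * i, hIl r i hiI, mul_assoc r i a⟩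
  have hIale : Ia ≤ I := by
    intro u hu
    obtain ⟨i, hiI, rfl⟩ := (hIamem u).mp hu
    exact hIl i a haI
  have hIane : Ia ≠ ⊥ := by
    intro hb
    have : i₀ * a ∈ Ia := (hIamem _).mpr ⟨i₀, hi₀I, rfl⟩
    rw [hb, AddSubgroup.mem_bot] at this
    exact hia this
  have hIaI : Ia = I := hmax Ia hIal hIale hIane
  obtain ⟨e, heI, hea⟩ : ∃ i ∈ I, i * a = a := (hIamem a).mp (hIaI ▸ haI)
  -- the annihilator J of a inside I is zero
  have hkey : ∀ u ∈ I, u * a = 0 → u = 0 := by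
    set J : AddSubgroup R := I ⊓ AddSubgroup.comap (AddMonoidHom.mulRight a) ⊥ with hJdef
    have hJl : IsLeftIdeal J := by
      intro r u hu
      rw [hJdef, AddSubgroup.mem_inf] at hu ⊢
      obtain ⟨huI, hu0⟩ := hu
      rw [AddSubgroup.mem_comap, AddSubgroup.mem_bot] at hu0 ⊢
      constructor
      · exact hIl r u huI
      · show r * u * a = 0
        rw [mul_assoc]
        show r * ((AddMonoidHom.mulRight a) u) = 0
        rw [hu0, mul_zero]
    have hJne : J ≠ I := by
      intro h
      have : e ∈ J := h ▸ heI
      rw [hJdef, AddSubgroup.mem_inf, AddSubgroup.mem_comap, AddSubgroup.mem_bot] at this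
      have h2 : e * a = 0 := this.2
      rw [hea] at h2
      exact ha h2
    have hJbot : J = ⊥ := hImin J hJl (lt_of_le_of_ne inf_le_left hJne)
    intro u huI hu0
    have : u ∈ J := by
      rw [hJdef, AddSubgroup.mem_inf, AddSubgroup.mem_comap, AddSubgroup.mem_bot]
      exact ⟨huI, hu0⟩
    rw [hJbot, AddSubgroup.mem_bot] at this
    exact this
  have hee : e * e = e := by
    have h1 : e * e - e ∈ I := sub_mem (hIl e e heI) heI
    have h2 : (e * e - e) * a = 0 := by rw [sub_mul, mul_assoc, hea, hea, sub_self]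
    have := hkey _ h1 h2
    rwa [sub_eq_zero] at this
  have he0 : e ≠ 0 := by
    rintro rfl
    rw [zero_mul] at hea
    exact ha hea.symm
  refine ⟨e, he0, hee, ?_⟩
  intro x hxe hx0
  have hex : e * x = x := by
    conv_lhs => rw [← hxe]
    rw [← mul_assoc, ← mul_assoc, hee, hxe]
  have hxe' : x * e = x := by
    conv_lhs => rw [← hxe]
    rw [mul_assoc, hee, hxe]
  -- R x = I
  have hPxle : principalLeft x ≤ I := by
    rintro _ ⟨r, rfl⟩
    show r * x ∈ I
    rw [← hxe', ← mul_assoc]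
    exact hIl (r * x) e heI
  have hPxne : principalLeft x ≠ ⊥ := by
    intro hb
    have hall : ∀ r : R, r * x = 0 := by
      intro r
      have : r * x ∈ principalLeft x := ⟨r, rfl⟩
      rw [hb, AddSubgroup.mem_bot] at this
      exact this
    exact hx0 (my_sp_ann hsp x fun r => hall (x * r))
  have hPx : principalLeft x = I :=
    hmax _ (fun r u hu => principalLeft.mul_mem x r hu) hPxle hPxne
  obtain ⟨r, hre⟩ : ∃ r : R, r * x = e := by
    have : e ∈ principalLeft x := hPx ▸ heI
    obtain ⟨r, hr⟩ := this
    exact ⟨r, hr⟩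
  refine ⟨e * r * e, ?_, ?_⟩
  · have h : e * (e * r * e) * e = e * e * r * (e * e) := by simp only [mul_assoc]
    rw [h, hee]
  · rw [mul_assoc (e * r) e x, hex, mul_assoc, hre, hee]

/-- If `f` is a nonzero idempotent whose corner ring is a "division ring",
then `S f` is a minimal left ideal. -/
theorem my_minimal_of_idem {S : Type} [NonUnitalRing S] (hsp : IsSemiprimeRing S)
    {f : S} (hf0 : f ≠ 0) (hff : f * f = f)
    (hdiv : ∀ z : S, f * z * f = z → z ≠ 0 → ∃ u : S, u * z = f) :
    IsMinimalLeftIdeal (principalLeft f) := by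
  have hfP : f ∈ principalLeft f := ⟨f, hff⟩
  refine ⟨fun r u hu => principalLeft.mul_mem f r hu, ?_, ?_⟩
  · intro hb
    rw [hb, AddSubgroup.mem_bot] at hfP
    exact hf0 hfP
  · intro J hJl hJlt
    by_contra hJne
    obtain ⟨x, hxJ, hx0⟩ : ∃ x ∈ J, x ≠ (0:S) := by
      by_contra h
      push_neg at h
      exact hJne ((AddSubgroup.eq_bot_iff_forall J).mpr h)
    obtain ⟨s, hsf⟩ : ∃ s : S, s * f = x := hJlt.le hxJ
    have hxf : x * f = x := by rw [← hsf, mul_assoc, hff]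
    obtain ⟨t, ht⟩ : ∃ t : S, f * (t * x) ≠ 0 := by
      by_contra h
      push_neg at h
      refine hx0 (my_sp_ann hsp x fun r => ?_)
      have e1 : x * (r * x) = s * (f * (r * x)) := by rw [← hsf, mul_assoc]
      rw [mul_assoc, e1, h r, mul_zero]
    set z : S := f * (t * x) with hzdef
    have hfz : f * z * f = z := by
      rw [hzdef, ← mul_assoc f f (t*x), hff, mul_assoc f (t*x) f, mul_assoc t x f, hxf]
    obtain ⟨u, hu⟩ := hdiv z hfz ht
    have hfJ : f ∈ J := by
      have h1 : z ∈ J := hJl f _ (hJl t x hxJ)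
      have := hJl u z h1
      rwa [hu] at this
    have : principalLeft f ≤ J := by
      rintro _ ⟨s, rfl⟩
      exact hJl s f hfJ
    exact (lt_iff_le_and_ne.mp hJlt).2 (le_antisymm hJlt.le this)


theorem my_morita_one
    {R S N M : Type} [NonUnitalRing R] [NonUnitalRing S]
    [AddCommGroup N] [AddCommGroup M]
    (hRsp : IsSemiprimeRing R) (hSsp : IsSemiprimeRing S)
    (rn : R → N → N) (ns : N → S → N)
    (hrn_addl : ∀ (r₁ r₂ : R) (n : N), rn (r₁ + r₂) n = rn r₁ n + rn r₂ n)
    (hrn_mul : ∀ (r₁ r₂ : R) (n : N), rn (r₁ * r₂) n = rn r₁ (rn r₂ n))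
    (hns_addr : ∀ (n : N) (t₁ t₂ : S), ns n (t₁ + t₂) = ns n t₁ + ns n t₂)
    (sm : S → M → M) (mr : M → R → M)
    (hsm_addl : ∀ (t₁ t₂ : S) (m : M), sm (t₁ + t₂) m = sm t₁ m + sm t₂ m)
    (hmr_mul : ∀ (m : M) (a₁ a₂ : R), mr (mr m a₁) a₂ = mr m (a₁ * a₂))
    (hM_bimod : ∀ (t : S) (m : M) (a : R), mr (sm t m) a = sm t (mr m a))
    (φ : N → M → R) (ψ : M → N → S)
    (hφ_addl : ∀ (n₁ n₂ : N) (m : M), φ (n₁ + n₂) m = φ n₁ m + φ n₂ m)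
    (hφ_addr : ∀ (n : N) (m₁ m₂ : M), φ n (m₁ + m₂) = φ n m₁ + φ n m₂)
    (hψ_addr : ∀ (m : M) (n₁ n₂ : N), ψ m (n₁ + n₂) = ψ m n₁ + ψ m n₂)
    (hφ_left : ∀ (a : R) (n : N) (m : M), φ (rn a n) m = a * φ n m)
    (hφ_right : ∀ (n : N) (m : M) (a : R), φ n (mr m a) = φ n m * a)
    (hψ_left : ∀ (t : S) (m : M) (n : N), ψ (sm t m) n = t * ψ m n)
    (hψ_right : ∀ (m : M) (n : N) (t : S), ψ m (ns n t) = ψ m n * t)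
    (hassoc₁ : ∀ (n : N) (m : M) (n' : N), rn (φ n m) n' = ns n (ψ m n'))
    (hassoc₂ : ∀ (m : M) (n : N) (m' : M), sm (ψ m n) m' = mr m (φ n m'))
    (hφ_surj : ∀ x : R, x ∈ AddSubgroup.closure (Set.range fun p : N × M => φ p.1 p.2)) :
    rsocle R ≠ ⊥ → rsocle S ≠ ⊥ := by
  intro hR
  -- zero lemmas
  have hrn0 : ∀ n : N, rn 0 n = 0 := by
    intro n
    have h := hrn_addl 0 0 n
    rw [add_zero] at h
    exact (right_eq_add.mp h)
  have hns0 : ∀ n : N, ns n 0 = 0 := by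
    intro n
    have h := hns_addr n 0 0
    rw [add_zero] at h
    exact (right_eq_add.mp h)
  have hsm0 : ∀ m : M, sm 0 m = 0 := by
    intro m
    have h := hsm_addl 0 0 m
    rw [add_zero] at h
    exact (right_eq_add.mp h)
  have hφ0l : ∀ m : M, φ 0 m = 0 := by
    intro m
    have h := hφ_addl 0 0 m
    rw [add_zero] at h
    exact (right_eq_add.mp h)
  have hφ0r : ∀ n : N, φ n 0 = 0 := by
    intro n
    have h := hφ_addr n 0 0
    rw [add_zero] at h
    exact (right_eq_add.mp h)
  have hψ0r : ∀ m : M, ψ m 0 = 0 := by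
    intro m
    have h := hψ_addr m 0 0
    rw [add_zero] at h
    exact (right_eq_add.mp h)
  -- a minimal left ideal of R
  obtain ⟨I, hI⟩ : ∃ I : AddSubgroup R, IsMinimalLeftIdeal I := by
    by_contra h
    push_neg at h
    apply hR
    have hempty : {I : AddSubgroup R | IsMinimalLeftIdeal I} = ∅ := by
      ext I
      simp only [Set.mem_setOf_eq, Set.mem_empty_iff_false, iff_false]
      exact h I
    rw [rsocle, hempty, sSup_empty]
  obtain ⟨e, he0, hee, hdiv⟩ := my_brauer hRsp hI
  -- find n₀, m₀ with e * φ n₀ m₀ * e ≠ 0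
  obtain ⟨n₀, m₀, hnm⟩ : ∃ (n₀ : N) (m₀ : M), e * φ n₀ m₀ * e ≠ 0 := by
    by_contra h
    push_neg at h
    have hle : AddSubgroup.closure (Set.range fun p : N × M => φ p.1 p.2) ≤
        AddSubgroup.comap ((AddMonoidHom.mulRight e).comp (AddMonoidHom.mulLeft e))
          (⊥ : AddSubgroup R) := by
      apply AddSubgroup.closure_le _ |>.mpr
      rintro y ⟨p, rfl⟩
      simp only [SetLike.mem_coe, AddSubgroup.mem_comap]
      show e * φ p.1 p.2 * e ∈ (⊥ : AddSubgroup R)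
      rw [AddSubgroup.mem_bot]
      exact h p.1 p.2
    have h2 := hle (hφ_surj e)
    rw [AddSubgroup.mem_comap, AddSubgroup.mem_bot] at h2
    have h3 : e * e * e = 0 := h2
    rw [hee, hee] at h3
    exact he0 h3
  set n' : N := rn e n₀ with hn'
  set m₁ : M := mr m₀ e with hm₁
  set a : R := φ n' m₁ with ha
  have hK2 : rn e n' = n' := by rw [hn', ← hrn_mul, hee]
  have hm₁e : mr m₁ e = m₁ := by rw [hm₁, hmr_mul, hee]
  have ha0 : a ≠ 0 := by
    intro h
    apply hnm
    rw [ha, hn', hm₁, hφ_left, hφ_right, ← mul_assoc] at h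
    exact h
  have he_a : e * a = a := by rw [ha, ← hφ_left, hK2]
  have ha_e : a * e = a := by rw [ha, ← hφ_right, hm₁e]
  have haee : e * a * e = a := by rw [he_a, ha_e]
  obtain ⟨b, hbee, hba⟩ := hdiv a haee ha0
  have hb_e : b * e = b := by
    conv_lhs => rw [← hbee]
    rw [mul_assoc, hee, hbee]
  have he_b : e * b = b := by
    conv_lhs => rw [← hbee]
    rw [← mul_assoc, ← mul_assoc, hee, hbee]
  have hab : a * b = e := by
    have hg : (a * b) * (a * b) = a * b := by
      rw [mul_assoc a b (a * b), ← mul_assoc b a b, hba, he_b]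
    have hg0 : a * b ≠ 0 := by
      intro h
      apply ha0
      calc a = a * e := ha_e.symm
      _ = a * (b * a) := by rw [hba]
      _ = (a * b) * a := (mul_assoc a b a).symm
      _ = 0 := by rw [h, zero_mul]
    have hgee : e * (a * b) * e = a * b := by
      rw [← mul_assoc e a b, he_a, mul_assoc a b e, hb_e]
    obtain ⟨h', _, hh'g⟩ := hdiv (a * b) hgee hg0
    have he_ab : e * (a * b) = a * b := by rw [← mul_assoc, he_a]
    calc a * b = e * (a * b) := he_ab.symm
    _ = (h' * (a * b)) * (a * b) := by rw [hh'g]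
    _ = h' * ((a * b) * (a * b)) := mul_assoc _ _ _
    _ = h' * (a * b) := by rw [hg]
    _ = e := hh'g
  set m2 : M := mr m₁ b with hm2
  have hK1 : φ n' m2 = e := by rw [hm2, hφ_right, ← ha, hab]
  have hK3 : mr m2 e = m2 := by rw [hm2, hmr_mul, hb_e]
  set f : S := ψ m2 n' with hf
  have hmul : ∀ x y : R,
      ψ m2 (rn x n') * ψ m2 (rn y n') = ψ m2 (rn (x * e * y) n') := by
    intro x y
    rw [← hψ_right, ← hassoc₁, hφ_left, hK1, ← hrn_mul]
  have hff : f * f = f := by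
    rw [hf]
    conv_lhs => rw [← hK2]
    rw [hmul, hee, hee, hK2]
  have hf0 : f ≠ 0 := by
    intro h0
    apply he0
    have h1 : e * e = φ n' (sm f m2) := by
      conv_lhs => rw [← hK1]
      rw [← hφ_right, ← hassoc₂, ← hf]
    rw [hee] at h1
    rw [h0, hsm0, hφ0r] at h1
    exact h1
  have hdivf : ∀ z : S, f * z * f = z → z ≠ 0 → ∃ u : S, u * z = f := by
    intro z hz hz0
    set x : R := φ n' (sm z m2) with hx
    have hxz : ψ m2 (rn x n') = z := by
      rw [hx, hassoc₁, hψ_left, hψ_right, ← hf, ← mul_assoc, hz]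
    have hx0 : x ≠ 0 := by
      intro h
      apply hz0
      rw [← hxz, h, hrn0, hψ0r]
    have hxee : e * x * e = x := by
      have h1 : e * x = x := by rw [hx, ← hφ_left, hK2]
      have h2 : x * e = x := by rw [hx, ← hφ_right, hM_bimod, hK3]
      rw [h1, h2]
    obtain ⟨y, hyee, hyx⟩ := hdiv x hxee hx0
    have hy_e : y * e = y := by
      conv_lhs => rw [← hyee]
      rw [mul_assoc, hee, hyee]
    refine ⟨ψ m2 (rn y n'), ?_⟩
    rw [← hxz, hmul, hy_e, hyx, hK2, ← hf]
  have hmin := my_minimal_of_idem hSsp hf0 hff hdivf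
  intro hSbot
  have hle : principalLeft f ≤ rsocle S := le_sSup hmin
  rw [hSbot] at hle
  have hfmem : f ∈ principalLeft f := ⟨f, hff⟩
  have := hle hfmem
  rw [AddSubgroup.mem_bot] at this
  exact hf0 this

end MyAuxLemmas

/-- Let `R` and `S` be semiprime idempotent rings admitting a surjective Morita
context `(R, S, N, M, φ, ψ)` (given by biadditive, balanced, associative pairings
`φ : N × M → R` and `ψ : M × N → S` whose images generate `R` and `S` as additive
groups).  Then `R` has nonzero socle if and only if `S` has nonzero socle. -/
theorem morita_context_socle_ne_bot_iff
    {R S N M : Type} [NonUnitalRing R] [NonUnitalRing S]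
    [AddCommGroup N] [AddCommGroup M]
    (hRid : IsIdempotentRing R) (hSid : IsIdempotentRing S)
    (hRsp : IsSemiprimeRing R) (hSsp : IsSemiprimeRing S)
    -- `N` is an `(R,S)`-bimodule
    (rn : R → N → N) (ns : N → S → N)
    (hrn_addl : ∀ (r₁ r₂ : R) (n : N), rn (r₁ + r₂) n = rn r₁ n + rn r₂ n)
    (hrn_addr : ∀ (a : R) (n₁ n₂ : N), rn a (n₁ + n₂) = rn a n₁ + rn a n₂)
    (hrn_mul : ∀ (r₁ r₂ : R) (n : N), rn (r₁ * r₂) n = rn r₁ (rn r₂ n))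
    (hns_addl : ∀ (n₁ n₂ : N) (t : S), ns (n₁ + n₂) t = ns n₁ t + ns n₂ t)
    (hns_addr : ∀ (n : N) (t₁ t₂ : S), ns n (t₁ + t₂) = ns n t₁ + ns n t₂)
    (hns_mul : ∀ (n : N) (t₁ t₂ : S), ns (ns n t₁) t₂ = ns n (t₁ * t₂))
    (hN_bimod : ∀ (a : R) (n : N) (t : S), ns (rn a n) t = rn a (ns n t))
    -- `M` is an `(S,R)`-bimodule
    (sm : S → M → M) (mr : M → R → M)
    (hsm_addl : ∀ (t₁ t₂ : S) (m : M), sm (t₁ + t₂) m = sm t₁ m + sm t₂ m)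
    (hsm_addr : ∀ (t : S) (m₁ m₂ : M), sm t (m₁ + m₂) = sm t m₁ + sm t m₂)
    (hsm_mul : ∀ (t₁ t₂ : S) (m : M), sm (t₁ * t₂) m = sm t₁ (sm t₂ m))
    (hmr_addl : ∀ (m₁ m₂ : M) (a : R), mr (m₁ + m₂) a = mr m₁ a + mr m₂ a)
    (hmr_addr : ∀ (m : M) (a₁ a₂ : R), mr m (a₁ + a₂) = mr m a₁ + mr m a₂)
    (hmr_mul : ∀ (m : M) (a₁ a₂ : R), mr (mr m a₁) a₂ = mr m (a₁ * a₂))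
    (hM_bimod : ∀ (t : S) (m : M) (a : R), mr (sm t m) a = sm t (mr m a))
    -- the pairings of the Morita context
    (φ : N → M → R) (ψ : M → N → S)
    (hφ_addl : ∀ (n₁ n₂ : N) (m : M), φ (n₁ + n₂) m = φ n₁ m + φ n₂ m)
    (hφ_addr : ∀ (n : N) (m₁ m₂ : M), φ n (m₁ + m₂) = φ n m₁ + φ n m₂)
    (hψ_addl : ∀ (m₁ m₂ : M) (n : N), ψ (m₁ + m₂) n = ψ m₁ n + ψ m₂ n)
    (hψ_addr : ∀ (m : M) (n₁ n₂ : N), ψ m (n₁ + n₂) = ψ m n₁ + ψ m n₂)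
    -- `φ` is `R`-bilinear and `S`-balanced, `ψ` is `S`-bilinear and `R`-balanced
    (hφ_left : ∀ (a : R) (n : N) (m : M), φ (rn a n) m = a * φ n m)
    (hφ_right : ∀ (n : N) (m : M) (a : R), φ n (mr m a) = φ n m * a)
    (hφ_bal : ∀ (n : N) (t : S) (m : M), φ (ns n t) m = φ n (sm t m))
    (hψ_left : ∀ (t : S) (m : M) (n : N), ψ (sm t m) n = t * ψ m n)
    (hψ_right : ∀ (m : M) (n : N) (t : S), ψ m (ns n t) = ψ m n * t)
    (hψ_bal : ∀ (m : M) (a : R) (n : N), ψ (mr m a) n = ψ m (rn a n))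
    -- the associativity conditions `(n,m)n' = n[m,n']` and `[m,n]m' = m(n,m')`
    (hassoc₁ : ∀ (n : N) (m : M) (n' : N), rn (φ n m) n' = ns n (ψ m n'))
    (hassoc₂ : ∀ (m : M) (n : N) (m' : M), sm (ψ m n) m' = mr m (φ n m'))
    -- surjectivity of the Morita context
    (hφ_surj : ∀ x : R, x ∈ AddSubgroup.closure (Set.range fun p : N × M => φ p.1 p.2))
    (hψ_surj : ∀ y : S, y ∈ AddSubgroup.closure (Set.range fun p : M × N => ψ p.1 p.2)) :
    rsocle R ≠ ⊥ ↔ rsocle S ≠ ⊥ := by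
  constructor
  · exact my_morita_one hRsp hSsp rn ns hrn_addl hrn_mul hns_addr sm mr hsm_addl
      hmr_mul hM_bimod φ ψ hφ_addl hφ_addr hψ_addr hφ_left hφ_right hψ_left hψ_right
      hassoc₁ hassoc₂ hφ_surj
  · exact my_morita_one hSsp hRsp sm mr hsm_addl hsm_mul hmr_addr rn ns hrn_addl
      hns_mul hN_bimod ψ φ hψ_addl hψ_addr hφ_addr hψ_left hψ_right hφ_left hφ_right
      hassoc₂ hassoc₁ hψ_surj

end
end
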